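/- arXiv:2210.00225 — 7 statements merged into one kernel-verified Lean document; each statement's English description precedes it below -/
import Mathlib

section
/- If φ = (φ_1,…,φ_N) and ψ = (ψ_1,…,ψ_N) are two solutions of the Schrödinger system for the same continuous cost c and the same family (μ_1,…,μ_N) of Borel probability measures, then there exist real constants κ_1,…,κ_N with Σ_{i=1}^N κ_i = 0 such that ψ_i(x_i) = φ_i(x_i) + κ_i for every i and every x_i ∈ X_i. -/
open MeasureTheory Set

noncomputable section

/-- `φ = (φ_1,…,φ_N)` is a solution of the Schrödinger system for the cost `c` and the
marginals `μ = (μ_1,…,μ_N)`: each `φ i` is continuous on `X i` and the Schrödinger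
equations hold at every point of `X i`. (Since each `μ j` is a probability measure
concentrated on `X j`, integrating over the full product measure `Measure.pi μ` an
integrand that does not depend on the `i`-th coordinate is the same as integrating
over `⊗_{j≠i} μ j`.) -/
def IsSchrodingerSolution {N d : ℕ} (X : Fin N → Set (EuclideanSpace ℝ (Fin d)))
    (c : (Fin N → EuclideanSpace ℝ (Fin d)) → ℝ)
    (μ : Fin N → MeasureTheory.Measure (EuclideanSpace ℝ (Fin d)))
    (φ : Fin N → EuclideanSpace ℝ (Fin d) → ℝ) : Prop :=
  (∀ i, ContinuousOn (φ i) (X i)) ∧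
  ∀ i : Fin N, ∀ xi ∈ X i,
    φ i xi = - Real.log (∫ y, Real.exp ((∑ j ∈ Finset.univ.erase i, φ j (y j))
      - c (Function.update y i xi)) ∂(MeasureTheory.Measure.pi μ))

namespace SchrodingerAux

open Function

/-- Tietze extension of a function continuous on a closed set. -/
theorem tietze_ext {A : Type*} [TopologicalSpace A] [NormalSpace A] {s : Set A}
    (hs : IsClosed s) {f : A → ℝ} (hf : ContinuousOn f s) :
    ∃ g : A → ℝ, Continuous g ∧ EqOn f g s := by
  obtain ⟨g, hg⟩ := ContinuousMap.exists_restrict_eq hs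
    ⟨s.restrict f, continuousOn_iff_continuous_restrict.mp hf⟩
  exact ⟨g, g.continuous, fun x hx => by
    have := congrFun (congrArg ContinuousMap.toFun hg) ⟨x, hx⟩
    exact this.symm⟩

/-- Fubini-type identity for the product measure: integrating out all variables equals
first fixing the `i`-th coordinate, integrating over all variables, and then integrating
the `i`-th coordinate. -/
theorem lintegral_update_pi {N : ℕ} {E : Type*} [MeasurableSpace E] [Nonempty E]
    (μ : Fin N → Measure E) [∀ i, IsProbabilityMeasure (μ i)]
    (f : (Fin N → E) → ENNReal) (hf : Measurable f) (i : Fin N) :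
    ∫⁻ y, f y ∂Measure.pi μ = ∫⁻ t, ∫⁻ y, f (update y i t) ∂Measure.pi μ ∂μ i := by
  obtain ⟨x₀⟩ : Nonempty (Fin N → E) := inferInstance
  have key : ∀ t, (lmarginal μ (Finset.univ.erase i) f) (update x₀ i t)
      = ∫⁻ y, f (update y i t) ∂Measure.pi μ := by
    intro t
    rw [lmarginal_update_of_notMem hf (Finset.notMem_erase i _)]
    have h2 : lmarginal μ Finset.univ (f ∘ (update · i t)) x₀
        = lmarginal μ (Finset.univ.erase i) (f ∘ (update · i t)) x₀ := by
      rw [← Finset.insert_erase (Finset.mem_univ i),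
        lmarginal_insert _ (hf.comp measurable_update_left) (Finset.notMem_erase i _)]
      have h3 : ∀ xᵢ, (lmarginal μ (Finset.univ.erase i) (f ∘ (update · i t))) (update x₀ i xᵢ)
          = lmarginal μ (Finset.univ.erase i) (f ∘ (update · i t)) x₀ := by
        intro xᵢ
        rw [lmarginal_update_of_notMem (hf.comp measurable_update_left)
          (Finset.notMem_erase i _)]
        congr 1
        funext z
        simp [Function.comp, update_idem]
      simp_rw [h3]
      simp
    rw [← h2, ← lintegral_eq_lmarginal_univ x₀]
    rfl
  calc ∫⁻ y, f y ∂Measure.pi μ = lmarginal μ Finset.univ f x₀ := lintegral_eq_lmarginal_univ x₀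
    _ = ∫⁻ t, lmarginal μ (Finset.univ.erase i) f (update x₀ i t) ∂μ i :=
        lmarginal_erase f hf (Finset.mem_univ i) x₀
    _ = ∫⁻ t, ∫⁻ y, f (update y i t) ∂Measure.pi μ ∂μ i := by simp_rw [key]

variable {N d : ℕ}

/-- The integrand of the Schrödinger system, with extended potentials `Θ` and cost `C`. -/
def gfun (C : (Fin N → EuclideanSpace ℝ (Fin d)) → ℝ)
    (Θ : Fin N → EuclideanSpace ℝ (Fin d) → ℝ) (i : Fin N) (xi : EuclideanSpace ℝ (Fin d))
    (y : Fin N → EuclideanSpace ℝ (Fin d)) : ℝ :=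
  Real.exp ((∑ j ∈ Finset.univ.erase i, Θ j (y j)) - C (Function.update y i xi))

/-- The exponent of the density of the candidate optimal coupling. -/
def Ffun (C : (Fin N → EuclideanSpace ℝ (Fin d)) → ℝ)
    (Θ : Fin N → EuclideanSpace ℝ (Fin d) → ℝ) (y : Fin N → EuclideanSpace ℝ (Fin d)) : ℝ :=
  (∑ j, Θ j (y j)) - C y

theorem gfun_cont {C : (Fin N → EuclideanSpace ℝ (Fin d)) → ℝ}
    {Θ : Fin N → EuclideanSpace ℝ (Fin d) → ℝ} (hC : Continuous C)
    (hΘ : ∀ j, Continuous (Θ j)) (i : Fin N) (xi : EuclideanSpace ℝ (Fin d)) :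
    Continuous (gfun C Θ i xi) := by
  apply Real.continuous_exp.comp
  exact (continuous_finset_sum _ fun j _ => (hΘ j).comp (continuous_apply j)).sub
    (hC.comp (continuous_id.update i continuous_const))

theorem Ffun_cont {C : (Fin N → EuclideanSpace ℝ (Fin d)) → ℝ}
    {Θ : Fin N → EuclideanSpace ℝ (Fin d) → ℝ} (hC : Continuous C)
    (hΘ : ∀ j, Continuous (Θ j)) : Continuous (Ffun C Θ) :=
  (continuous_finset_sum _ fun j _ => (hΘ j).comp (continuous_apply j)).sub hC

theorem Ffun_update (C : (Fin N → EuclideanSpace ℝ (Fin d)) → ℝ)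
    (Θ : Fin N → EuclideanSpace ℝ (Fin d) → ℝ) (i : Fin N) (t : EuclideanSpace ℝ (Fin d))
    (y : Fin N → EuclideanSpace ℝ (Fin d)) :
    Real.exp (Ffun C Θ (Function.update y i t)) = Real.exp (Θ i t) * gfun C Θ i t y := by
  rw [gfun, ← Real.exp_add, Ffun]
  congr 1
  rw [← Finset.add_sum_erase Finset.univ (fun j => Θ j (Function.update y i t j))
    (Finset.mem_univ i), Function.update_self,
    Finset.sum_congr rfl fun j hj => by rw [Function.update_of_ne (Finset.ne_of_mem_erase hj)]]
  ring

end SchrodingerAux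

open SchrodingerAux Function

set_option maxHeartbeats 2000000 in
/-- Two solutions of the Schrödinger system for the same continuous cost
and the same marginals coincide on the sets `X_i` up to additive constants summing to zero. -/
theorem schrodinger_system_uniqueness
    (N d : ℕ) (hN : 2 ≤ N) (hd : 1 ≤ d)
    (X : Fin N → Set (EuclideanSpace ℝ (Fin d)))
    (hXne : ∀ i, (X i).Nonempty) (hXcpt : ∀ i, IsCompact (X i)) (hXcvx : ∀ i, Convex ℝ (X i))
    (c : (Fin N → EuclideanSpace ℝ (Fin d)) → ℝ)
    (hc : ContinuousOn c (Set.univ.pi X))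
    (μ : Fin N → Measure (EuclideanSpace ℝ (Fin d)))
    (hμp : ∀ i, IsProbabilityMeasure (μ i)) (hμs : ∀ i, μ i (X i) = 1)
    (φ ψ : Fin N → EuclideanSpace ℝ (Fin d) → ℝ)
    (hφ : IsSchrodingerSolution X c μ φ) (hψ : IsSchrodingerSolution X c μ ψ) :
    ∃ κ : Fin N → ℝ, (∑ i, κ i) = 0 ∧
      ∀ i : Fin N, ∀ xi ∈ X i, ψ i xi = φ i xi + κ i := by
  classical
  haveI : ∀ i, IsProbabilityMeasure (μ i) := hμp
  set π : Measure (Fin N → EuclideanSpace ℝ (Fin d)) := Measure.pi μ with hπdef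
  haveI : IsProbabilityMeasure π := by rw [hπdef]; infer_instance
  have hXcl : ∀ i, IsClosed (X i) := fun i => (hXcpt i).isClosed
  have hXm : ∀ i, MeasurableSet (X i) := fun i => (hXcl i).measurableSet
  -- a.e. statements about the supports
  have hXae : ∀ j, ∀ᵐ t ∂μ j, t ∈ X j := by
    intro j
    have h0 : μ j (X j)ᶜ = 0 := by
      have h := measure_compl (hXm j) (measure_ne_top (μ j) _)
      rw [hμs j, measure_univ] at h
      simpa using h
    exact MeasureTheory.mem_ae_iff.mpr (by simpa using h0)
  have hSae : ∀ᵐ y ∂π, ∀ j, y j ∈ X j := by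
    rw [MeasureTheory.ae_all_iff]
    intro j
    exact Measure.tendsto_eval_ae_ae.eventually (hXae j)
  -- Tietze extensions
  choose Φ hΦc hΦe using fun i => tietze_ext (hXcl i) (hφ.1 i)
  choose Ψ hΨc hΨe using fun i => tietze_ext (hXcl i) (hψ.1 i)
  have hScl : IsClosed (Set.univ.pi X) := isClosed_set_pi fun i _ => hXcl i
  obtain ⟨C, hCc, hCe⟩ := tietze_ext hScl hc
  -- membership of updates
  have hupd : ∀ (i : Fin N) (xi : EuclideanSpace ℝ (Fin d)), xi ∈ X i →
      ∀ (y : Fin N → EuclideanSpace ℝ (Fin d)), (∀ j, y j ∈ X j) →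
      (Function.update y i xi) ∈ Set.univ.pi X := by
    intro i xi hxi y hy
    rw [Set.mem_univ_pi]
    intro j
    rcases eq_or_ne j i with rfl | hne
    · simpa using hxi
    · simpa [Function.update_of_ne hne] using hy j
  -- The key Schrödinger identities, for a generic solution θ with extension Θ.
  have key : ∀ (θ Θ : Fin N → EuclideanSpace ℝ (Fin d) → ℝ), (∀ j, Continuous (Θ j)) →
      (∀ j, Set.EqOn (θ j) (Θ j) (X j)) → IsSchrodingerSolution X c μ θ →
      ∀ i : Fin N, ∀ xi ∈ X i,
        Integrable (gfun C Θ i xi) π ∧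
        ∫ y, gfun C Θ i xi y ∂π = Real.exp (-(θ i xi)) ∧
        ∫⁻ y, ENNReal.ofReal (gfun C Θ i xi y) ∂π = ENNReal.ofReal (Real.exp (-(θ i xi))) := by
    intro θ Θ hΘc hΘe hsol i xi hxi
    -- the uniform bound
    choose BΘ hBΘ using fun j => (hXcpt j).exists_bound_of_continuousOn (hΘc j).continuousOn
    obtain ⟨BC, hBC⟩ := (isCompact_univ_pi hXcpt).exists_bound_of_continuousOn hCc.continuousOn
    set M : ℝ := Real.exp ((∑ j, max (BΘ j) 0) + BC) with hMdef
    have hbd : ∀ y, (∀ j, y j ∈ X j) → ‖gfun C Θ i xi y‖ ≤ M := by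
      intro y hy
      have h1 : (∑ j ∈ Finset.univ.erase i, Θ j (y j)) ≤ ∑ j, max (BΘ j) 0 := by
        calc (∑ j ∈ Finset.univ.erase i, Θ j (y j))
            ≤ ∑ j ∈ Finset.univ.erase i, max (BΘ j) 0 := by
              apply Finset.sum_le_sum
              intro j _
              exact le_trans (le_trans (le_abs_self _) (hBΘ j (y j) (hy j))) (le_max_left _ _)
          _ ≤ ∑ j, max (BΘ j) 0 :=
              Finset.sum_le_sum_of_subset_of_nonneg (Finset.subset_univ _)
                (fun j _ _ => le_max_right _ _)
      have h2 : -C (Function.update y i xi) ≤ BC := by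
        have := hBC _ (hupd i xi hxi y hy)
        have habs := abs_le.mp (by simpa [Real.norm_eq_abs] using this)
        linarith [habs.1]
      rw [gfun, Real.norm_eq_abs, abs_of_pos (Real.exp_pos _), hMdef]
      exact Real.exp_le_exp.mpr (by linarith)
    have hcont := gfun_cont hCc hΘc i xi
    have hint : Integrable (gfun C Θ i xi) π := by
      refine Integrable.mono' (integrable_const M) hcont.aestronglyMeasurable ?_
      filter_upwards [hSae] with y hy
      exact hbd y hy
    have hpos : 0 < ∫ y, gfun C Θ i xi y ∂π := by
      have : Integrable (fun y => Real.exp ((∑ j ∈ Finset.univ.erase i, Θ j (y j))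
          - C (Function.update y i xi))) π := hint
      exact integral_exp_pos this
    have hcongr : ∫ y, Real.exp ((∑ j ∈ Finset.univ.erase i, θ j (y j))
        - c (Function.update y i xi)) ∂π = ∫ y, gfun C Θ i xi y ∂π := by
      apply integral_congr_ae
      filter_upwards [hSae] with y hy
      rw [gfun]
      congr 1
      rw [Finset.sum_congr rfl fun j _ => hΘe j (hy j), hCe (hupd i xi hxi y hy)]
    have heq : ∫ y, gfun C Θ i xi y ∂π = Real.exp (-(θ i xi)) := by
      have hpos' : 0 < ∫ y, gfun C Θ i xi y ∂Measure.pi μ := hpos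
      have hcongr' : ∫ y, Real.exp ((∑ j ∈ Finset.univ.erase i, θ j (y j))
          - c (Function.update y i xi)) ∂Measure.pi μ
          = ∫ y, gfun C Θ i xi y ∂Measure.pi μ := hcongr
      have h := hsol.2 i xi hxi
      rw [hcongr'] at h
      show ∫ y, gfun C Θ i xi y ∂Measure.pi μ = Real.exp (-(θ i xi))
      rw [h, neg_neg, Real.exp_log hpos']
    refine ⟨hint, heq, ?_⟩
    rw [← ofReal_integral_eq_lintegral_ofReal hint
      (Filter.Eventually.of_forall fun y => (Real.exp_pos _).le), heq]
  -- the marginal identity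
  have marg : ∀ (θ Θ : Fin N → EuclideanSpace ℝ (Fin d) → ℝ), (∀ j, Continuous (Θ j)) →
      (∀ j, Set.EqOn (θ j) (Θ j) (X j)) → IsSchrodingerSolution X c μ θ →
      ∀ i : Fin N, ∀ q : EuclideanSpace ℝ (Fin d) → ℝ, Continuous q → (∀ t, 0 ≤ q t) →
      ∫⁻ y, ENNReal.ofReal (q (y i)) * ENNReal.ofReal (Real.exp (Ffun C Θ y)) ∂π
        = ∫⁻ t, ENNReal.ofReal (q t) ∂μ i := by
    intro θ Θ hΘc hΘe hsol i q hq hq0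
    have hFm : Measurable fun y => ENNReal.ofReal (Real.exp (Ffun C Θ y)) :=
      (Real.continuous_exp.comp (Ffun_cont hCc hΘc)).measurable.ennreal_ofReal
    have hfm : Measurable fun y : Fin N → EuclideanSpace ℝ (Fin d) =>
        ENNReal.ofReal (q (y i)) * ENNReal.ofReal (Real.exp (Ffun C Θ y)) :=
      ((hq.comp (continuous_apply i)).measurable.ennreal_ofReal).mul hFm
    rw [hπdef, lintegral_update_pi μ _ hfm i]
    have hinner : ∀ t, (∫⁻ y, ENNReal.ofReal (q ((Function.update y i t) i)) *
        ENNReal.ofReal (Real.exp (Ffun C Θ (Function.update y i t))) ∂Measure.pi μ)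
        = ENNReal.ofReal (q t) * (ENNReal.ofReal (Real.exp (Θ i t)) *
          ∫⁻ y, ENNReal.ofReal (gfun C Θ i t y) ∂Measure.pi μ) := by
      intro t
      have : ∀ y : Fin N → EuclideanSpace ℝ (Fin d),
          ENNReal.ofReal (q ((Function.update y i t) i)) *
            ENNReal.ofReal (Real.exp (Ffun C Θ (Function.update y i t)))
          = (ENNReal.ofReal (q t) * ENNReal.ofReal (Real.exp (Θ i t))) *
            ENNReal.ofReal (gfun C Θ i t y) := by
        intro y
        rw [Function.update_self, Ffun_update, ENNReal.ofReal_mul (Real.exp_pos _).le, mul_assoc]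
      rw [lintegral_congr fun y => this y,
        lintegral_const_mul _ ((gfun_cont hCc hΘc i t).measurable.ennreal_ofReal), mul_assoc]
    apply lintegral_congr_ae
    filter_upwards [hXae i] with t ht
    show (∫⁻ y, ENNReal.ofReal (q ((Function.update y i t) i)) *
        ENNReal.ofReal (Real.exp (Ffun C Θ (Function.update y i t))) ∂Measure.pi μ)
        = ENNReal.ofReal (q t)
    rw [hinner t]
    have h3 : ∫⁻ y, ENNReal.ofReal (gfun C Θ i t y) ∂Measure.pi μ
        = ENNReal.ofReal (Real.exp (-(θ i t))) := (key θ Θ hΘc hΘe hsol i t ht).2.2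
    rw [h3, ← ENNReal.ofReal_mul (Real.exp_pos _).le, ← Real.exp_add, hΘe i ht]
    simp
  -- abbreviations
  set η : Fin N → EuclideanSpace ℝ (Fin d) → ℝ := fun j t => Ψ j t - Φ j t with hηdef
  have hηc : ∀ j, Continuous (η j) := fun j => (hΨc j).sub (hΦc j)
  choose K0 hK0 using fun j => (hXcpt j).exists_bound_of_continuousOn (hηc j).continuousOn
  set K : ℝ := ∑ j, max (K0 j) 0 with hKdef
  have hK0' : ∀ j, max (K0 j) 0 ≤ K :=
    fun j => Finset.single_le_sum (f := fun j => max (K0 j) 0)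
      (fun _ _ => le_max_right _ _) (Finset.mem_univ j)
  have hKnn : 0 ≤ K := Finset.sum_nonneg fun _ _ => le_max_right _ _
  have hηK : ∀ j, ∀ t ∈ X j, |η j t| ≤ K := by
    intro j t ht
    have := hK0 j t ht
    rw [Real.norm_eq_abs] at this
    exact le_trans this (le_trans (le_max_left _ _) (hK0' j))
  set h : Fin N → EuclideanSpace ℝ (Fin d) → ℝ := fun j t => max (η j t + K) 0 with hhdef
  have hhc : ∀ j, Continuous (h j) := fun j => ((hηc j).add continuous_const).max continuous_const
  have hh0 : ∀ j t, 0 ≤ h j t := fun j t => le_max_right _ _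
  have hhX : ∀ j, ∀ t ∈ X j, h j t = η j t + K := by
    intro j t ht
    have := abs_le.mp (hηK j t ht)
    exact max_eq_left (by linarith [this.1])
  set F : (Fin N → EuclideanSpace ℝ (Fin d)) → ℝ := Ffun C Φ with hFdef
  set G : (Fin N → EuclideanSpace ℝ (Fin d)) → ℝ := Ffun C Ψ with hGdef
  set D : (Fin N → EuclideanSpace ℝ (Fin d)) → ℝ := fun y => ∑ j, η j (y j) with hDdef
  have hGF : ∀ y, G y - F y = D y := by
    intro y
    simp only [hGdef, hFdef, hDdef, hηdef, Ffun, Finset.sum_sub_distrib]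
    ring
  set H : (Fin N → EuclideanSpace ℝ (Fin d)) → ℝ := fun y => ∑ j, h j (y j) with hHdef
  have hHnn : ∀ y, 0 ≤ H y := fun y => Finset.sum_nonneg fun j _ => hh0 j _
  have hHD : ∀ y, (∀ j, y j ∈ X j) → H y = D y + N * K := by
    intro y hy
    simp only [hHdef, hDdef]
    rw [Finset.sum_congr rfl fun j _ => hhX j _ (hy j), Finset.sum_add_distrib,
      Finset.sum_const, Finset.card_univ, Fintype.card_fin, nsmul_eq_mul]
  have hFc : Continuous F := Ffun_cont hCc hΦc
  have hGc : Continuous G := Ffun_cont hCc hΨc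
  have hDc : Continuous D := continuous_finset_sum _ fun j _ => (hηc j).comp (continuous_apply j)
  have hHc : Continuous H := continuous_finset_sum _ fun j _ => (hhc j).comp (continuous_apply j)
  set A : (Fin N → EuclideanSpace ℝ (Fin d)) → ENNReal :=
    fun y => ENNReal.ofReal (Real.exp (F y)) with hAdef
  set B : (Fin N → EuclideanSpace ℝ (Fin d)) → ENNReal :=
    fun y => ENNReal.ofReal (Real.exp (G y)) with hBdef
  have hAm : Measurable A := (Real.continuous_exp.comp hFc).measurable.ennreal_ofReal
  have hBm : Measurable B := (Real.continuous_exp.comp hGc).measurable.ennreal_ofReal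
  have hHm : Measurable fun y => ENNReal.ofReal (H y) := hHc.measurable.ennreal_ofReal
  have i0 : Fin N := ⟨0, by omega⟩
  -- total masses
  have hA1 : ∫⁻ y, A y ∂π = 1 := by
    have := marg φ Φ hΦc hΦe hφ i0 (fun _ => (1 : ℝ)) continuous_const (fun _ => zero_le_one)
    simpa using this
  have hB1 : ∫⁻ y, B y ∂π = 1 := by
    have := marg ψ Ψ hΨc hΨe hψ i0 (fun _ => (1 : ℝ)) continuous_const (fun _ => zero_le_one)
    simpa using this
  -- the common value T
  set T : ENNReal := ∑ j, ∫⁻ t, ENNReal.ofReal (h j t) ∂μ j with hTdef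
  have hsplit : ∀ (A' : (Fin N → EuclideanSpace ℝ (Fin d)) → ENNReal), ∀ y,
      ENNReal.ofReal (H y) * A' y = ∑ j, ENNReal.ofReal (h j (y j)) * A' y := by
    intro A' y
    rw [hHdef, ENNReal.ofReal_sum_of_nonneg (fun j _ => hh0 j _), Finset.sum_mul]
  have hjm : ∀ j : Fin N, Measurable fun y : Fin N → EuclideanSpace ℝ (Fin d) =>
      ENNReal.ofReal (h j (y j)) :=
    fun j => ((hhc j).comp (continuous_apply j)).measurable.ennreal_ofReal
  have hTA : ∫⁻ y, ENNReal.ofReal (H y) * A y ∂π = T := by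
    simp_rw [hsplit A]
    rw [lintegral_finset_sum (f := fun j y => ENNReal.ofReal (h j (y j)) * A y) _ (fun j _ => (hjm j).mul hAm)]
    exact Finset.sum_congr rfl fun j _ => marg φ Φ hΦc hΦe hφ j (h j) (hhc j) (hh0 j)
  have hTB : ∫⁻ y, ENNReal.ofReal (H y) * B y ∂π = T := by
    simp_rw [hsplit B]
    rw [lintegral_finset_sum (f := fun j y => ENNReal.ofReal (h j (y j)) * B y) _ (fun j _ => (hjm j).mul hBm)]
    exact Finset.sum_congr rfl fun j _ => marg ψ Ψ hΨc hΨe hψ j (h j) (hhc j) (hh0 j)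
  have hNKnn : 0 ≤ (N : ℝ) * K := by positivity
  -- the two convexity inequalities
  have hineq1 : ∀ y, (∀ j, y j ∈ X j) →
      Real.exp (F y) + H y * Real.exp (F y) ≤ Real.exp (G y) + (N : ℝ) * K * Real.exp (F y) := by
    intro y hy
    have hH := hHD y hy
    have h1 : Real.exp (G y) = Real.exp (F y) * Real.exp (D y) := by
      rw [← Real.exp_add]
      congr 1
      linarith [hGF y]
    have h2 := Real.add_one_le_exp (D y)
    nlinarith [Real.exp_pos (F y)]
  have hineq2 : ∀ y, (∀ j, y j ∈ X j) →
      (1 + (N : ℝ) * K) * Real.exp (G y) ≤ Real.exp (F y) + H y * Real.exp (G y) := by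
    intro y hy
    have hH := hHD y hy
    have h1 : Real.exp (F y) = Real.exp (G y) * Real.exp (-D y) := by
      rw [← Real.exp_add]
      congr 1
      linarith [hGF y]
    have h2 := Real.add_one_le_exp (-D y)
    nlinarith [Real.exp_pos (G y)]
  -- translate to lintegrals
  have hcalc1 : ∀ᵐ y ∂π, A y + ENNReal.ofReal (H y) * A y
      ≤ B y + ENNReal.ofReal ((N : ℝ) * K) * A y := by
    filter_upwards [hSae] with y hy
    calc A y + ENNReal.ofReal (H y) * A y
        = ENNReal.ofReal (Real.exp (F y) + H y * Real.exp (F y)) := by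
          rw [ENNReal.ofReal_add (Real.exp_pos _).le (mul_nonneg (hHnn y) (Real.exp_pos _).le),
            ENNReal.ofReal_mul (hHnn y)]
      _ ≤ ENNReal.ofReal (Real.exp (G y) + (N : ℝ) * K * Real.exp (F y)) :=
          ENNReal.ofReal_le_ofReal (hineq1 y hy)
      _ = B y + ENNReal.ofReal ((N : ℝ) * K) * A y := by
          rw [ENNReal.ofReal_add (Real.exp_pos _).le (mul_nonneg hNKnn (Real.exp_pos _).le),
            ENNReal.ofReal_mul hNKnn]
  have hcalc2 : ∀ᵐ y ∂π, (1 + ENNReal.ofReal ((N : ℝ) * K)) * B y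
      ≤ A y + ENNReal.ofReal (H y) * B y := by
    filter_upwards [hSae] with y hy
    calc (1 + ENNReal.ofReal ((N : ℝ) * K)) * B y
        = ENNReal.ofReal ((1 + (N : ℝ) * K) * Real.exp (G y)) := by
          rw [ENNReal.ofReal_mul (show (0:ℝ) ≤ 1 + (N : ℝ) * K by linarith),
            ENNReal.ofReal_add zero_le_one hNKnn, ENNReal.ofReal_one]
      _ ≤ ENNReal.ofReal (Real.exp (F y) + H y * Real.exp (G y)) :=
          ENNReal.ofReal_le_ofReal (hineq2 y hy)
      _ = A y + ENNReal.ofReal (H y) * B y := by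
          rw [ENNReal.ofReal_add (Real.exp_pos _).le (mul_nonneg (hHnn y) (Real.exp_pos _).le),
            ENNReal.ofReal_mul (hHnn y)]
  have hT_le : T ≤ ENNReal.ofReal ((N : ℝ) * K) := by
    have h := lintegral_mono_ae hcalc1
    rw [lintegral_add_left hAm, lintegral_add_left hBm, lintegral_const_mul _ hAm,
      hA1, hB1, hTA, mul_one] at h
    rwa [ENNReal.add_le_add_iff_left ENNReal.one_ne_top] at h
  have hT_ge : ENNReal.ofReal ((N : ℝ) * K) ≤ T := by
    have h := lintegral_mono_ae hcalc2
    rw [lintegral_const_mul _ hBm, lintegral_add_left hAm, hA1, hB1, hTB, mul_one] at h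
    calc ENNReal.ofReal ((N : ℝ) * K) = (1 + ENNReal.ofReal ((N : ℝ) * K)) - 1 := by
          rw [ENNReal.add_sub_cancel_left ENNReal.one_ne_top]
      _ ≤ (1 + T) - 1 := tsub_le_tsub_right h 1
      _ = T := by rw [ENNReal.add_sub_cancel_left ENNReal.one_ne_top]
  have hTeq : T = ENNReal.ofReal ((N : ℝ) * K) := le_antisymm hT_le hT_ge
  have hTne : T ≠ ⊤ := by rw [hTeq]; exact ENNReal.ofReal_ne_top
  -- the slack function
  set W : (Fin N → EuclideanSpace ℝ (Fin d)) → ℝ :=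
    fun y => Real.exp (F y) + H y * Real.exp (G y) - (1 + (N : ℝ) * K) * Real.exp (G y)
    with hWdef
  have hWc : Continuous W :=
    ((Real.continuous_exp.comp hFc).add (hHc.mul (Real.continuous_exp.comp hGc))).sub
      (continuous_const.mul (Real.continuous_exp.comp hGc))
  have hW0 : ∀ᵐ y ∂π, 0 ≤ W y := by
    filter_upwards [hSae] with y hy
    exact sub_nonneg.mpr (hineq2 y hy)
  have hWof : ∀ y, ENNReal.ofReal (W y)
      = (A y + ENNReal.ofReal (H y) * B y) - (1 + ENNReal.ofReal ((N : ℝ) * K)) * B y := by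
    intro y
    rw [hWdef]
    rw [ENNReal.ofReal_sub _ (mul_nonneg (by linarith) (Real.exp_pos _).le),
      ENNReal.ofReal_add (Real.exp_pos _).le (mul_nonneg (hHnn y) (Real.exp_pos _).le),
      ENNReal.ofReal_mul (hHnn y), ENNReal.ofReal_mul (by linarith : (0:ℝ) ≤ 1 + (N : ℝ) * K),
      ENNReal.ofReal_add zero_le_one hNKnn, ENNReal.ofReal_one]
  have hWint : ∫⁻ y, ENNReal.ofReal (W y) ∂π = 0 := by
    have hmeas2 : Measurable fun y => (1 + ENNReal.ofReal ((N : ℝ) * K)) * B y :=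
      hBm.const_mul _
    have hfin : ∫⁻ y, (1 + ENNReal.ofReal ((N : ℝ) * K)) * B y ∂π ≠ ⊤ := by
      rw [lintegral_const_mul _ hBm, hB1, mul_one]
      exact ENNReal.add_ne_top.mpr ⟨ENNReal.one_ne_top, ENNReal.ofReal_ne_top⟩
    rw [lintegral_congr fun y => hWof y, lintegral_sub hmeas2 hfin hcalc2,
      lintegral_add_left hAm, lintegral_const_mul _ hBm, hA1, hB1, hTB, hTeq, mul_one]
    simp
  have hWz : ∀ᵐ y ∂π, W y = 0 := by
    have h := (lintegral_eq_zero_iff (hWc.measurable.ennreal_ofReal)).mp hWint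
    filter_upwards [h, hW0] with y h1 h2
    have h3 : ENNReal.ofReal (W y) = 0 := h1
    rw [ENNReal.ofReal_eq_zero] at h3
    linarith
  have hDae : ∀ᵐ y ∂π, D y = 0 := by
    filter_upwards [hWz, hSae] with y hw hy
    simp only [hWdef] at hw
    have hH := hHD y hy
    by_contra hD0
    have h1 : Real.exp (F y) = Real.exp (G y) * Real.exp (-D y) := by
      rw [← Real.exp_add]
      congr 1
      linarith [hGF y]
    have h2 := Real.add_one_lt_exp (neg_ne_zero.mpr hD0)
    rw [hH] at hw
    nlinarith [Real.exp_pos (G y), Real.exp_pos (F y)]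
  -- the bad set
  set Bad : Set (Fin N → EuclideanSpace ℝ (Fin d)) := {y | ¬ (D y = 0 ∧ ∀ j, y j ∈ X j)}
    with hBaddef
  have hforallm : MeasurableSet {y : Fin N → EuclideanSpace ℝ (Fin d) | ∀ j, y j ∈ X j} := by
    have : {y : Fin N → EuclideanSpace ℝ (Fin d) | ∀ j, y j ∈ X j}
        = ⋂ j, (fun y : Fin N → EuclideanSpace ℝ (Fin d) => y j) ⁻¹' X j := by
      ext y; simp
    rw [this]
    exact MeasurableSet.iInter fun j => (measurable_pi_apply j) (hXm j)
  have hBadm : MeasurableSet Bad := by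
    have h1 : MeasurableSet {y : Fin N → EuclideanSpace ℝ (Fin d) | D y = 0} :=
      hDc.measurable (measurableSet_singleton 0)
    rw [hBaddef]
    have : {y : Fin N → EuclideanSpace ℝ (Fin d) | ¬ (D y = 0 ∧ ∀ j, y j ∈ X j)}
        = {y : Fin N → EuclideanSpace ℝ (Fin d) | D y = 0 ∧ ∀ j, y j ∈ X j}ᶜ :=
      Set.compl_setOf _ |>.symm
    rw [this, Set.setOf_and]
    exact (h1.inter hforallm).compl
  have hBad0 : π Bad = 0 := by
    have hae : ∀ᵐ y ∂π, ¬ y ∈ Bad := by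
      filter_upwards [hDae, hSae] with y h1 h2
      simp only [hBaddef, Set.mem_setOf_eq, not_not]
      exact ⟨h1, h2⟩
    have := MeasureTheory.ae_iff.mp hae
    simpa [not_not] using this
  -- slicing
  have hslice : ∀ j : Fin N, ∀ᵐ t ∂μ j, ∀ᵐ y ∂π, Function.update y j t ∉ Bad := by
    intro j
    set f : (Fin N → EuclideanSpace ℝ (Fin d)) → ENNReal := Bad.indicator 1 with hfdef
    have hfm : Measurable f := measurable_one.indicator hBadm
    have h0 : ∫⁻ y, f y ∂π = 0 := by
      rw [hfdef, lintegral_indicator_one hBadm]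
      exact hBad0
    rw [hπdef, lintegral_update_pi μ f hfm j] at h0
    have hupdm : Measurable fun p : EuclideanSpace ℝ (Fin d) × (Fin N → EuclideanSpace ℝ (Fin d))
        => Function.update p.2 j p.1 :=
      measurable_update'.comp (measurable_snd.prodMk measurable_fst)
    have hinnerm : Measurable fun t => ∫⁻ y, f (Function.update y j t) ∂Measure.pi μ :=
      Measurable.lintegral_prod_right (hfm.comp hupdm)
    have h1 := (lintegral_eq_zero_iff hinnerm).mp h0
    filter_upwards [h1] with t ht
    have hm2 : Measurable fun y => f (Function.update y j t) := hfm.comp measurable_update_left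
    have h2 := (lintegral_eq_zero_iff hm2).mp ht
    rw [← hπdef] at h2
    filter_upwards [h2] with y hy
    intro hmem
    have : f (Function.update y j t) = 1 := by rw [hfdef]; simp [Set.indicator_of_mem hmem]
    rw [hy] at this
    exact one_ne_zero this.symm
  haveI : ∀ j, (ae (μ j)).NeBot := fun j => ae_neBot.mpr (IsProbabilityMeasure.ne_zero (μ j))
  haveI : (ae π).NeBot := ae_neBot.mpr (IsProbabilityMeasure.ne_zero π)
  have hEx : ∀ j : Fin N, ∃ t0, ∀ᵐ y ∂π, Function.update y j t0 ∉ Bad :=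
    fun j => (hslice j).exists
  choose t0 ht0 using hEx
  set cst : Fin N → ℝ := fun j => η j (t0 j) with hcstdef
  have hDupd : ∀ (j : Fin N) (t : EuclideanSpace ℝ (Fin d))
      (y : Fin N → EuclideanSpace ℝ (Fin d)),
      D (Function.update y j t) = η j t + ∑ k ∈ Finset.univ.erase j, η k (y k) := by
    intro j t y
    simp only [hDdef]
    rw [← Finset.add_sum_erase Finset.univ (fun k => η k (Function.update y j t k))
      (Finset.mem_univ j), Function.update_self]
    congr 1
    exact Finset.sum_congr rfl fun k hk => by
      rw [Function.update_of_ne (Finset.ne_of_mem_erase hk)]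
  have hnotBad : ∀ (z : Fin N → EuclideanSpace ℝ (Fin d)), z ∉ Bad →
      D z = 0 ∧ ∀ j, z j ∈ X j := by
    intro z hz
    by_contra hcon
    exact hz hcon
  have hcst : ∀ j, ∀ᵐ t ∂μ j, η j t = cst j ∧ t ∈ X j := by
    intro j
    filter_upwards [hslice j] with t ht
    obtain ⟨y, hy1, hy2⟩ := (ht.and (ht0 j)).exists
    obtain ⟨e1, e2⟩ := hnotBad _ hy1
    obtain ⟨e3, _⟩ := hnotBad _ hy2
    rw [hDupd] at e1 e3
    constructor
    · rw [hcstdef]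
      simp only
      linarith
    · have := e2 j
      rwa [Function.update_self] at this
  set κ : Fin N → ℝ := fun i => -∑ j ∈ Finset.univ.erase i, cst j with hκdef
  have hfinal : ∀ i : Fin N, ∀ xi ∈ X i, ψ i xi = φ i xi + κ i := by
    intro i xi hxi
    have hηae : ∀ᵐ y ∂π, ∀ j, η j (y j) = cst j :=
      MeasureTheory.ae_all_iff.mpr fun j =>
        Measure.tendsto_eval_ae_ae.eventually ((hcst j).mono fun t ht => ht.1)
    have hrel : ∀ᵐ y ∂π, gfun C Ψ i xi y
        = Real.exp (∑ j ∈ Finset.univ.erase i, cst j) * gfun C Φ i xi y := by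
      filter_upwards [hηae] with y hy
      simp only [gfun]
      rw [← Real.exp_add]
      congr 1
      have hj : ∀ j, Ψ j (y j) = Φ j (y j) + cst j := by
        intro j
        have := hy j
        rw [hηdef] at this
        simp only at this
        linarith
      rw [Finset.sum_congr rfl fun j _ => hj j, Finset.sum_add_distrib]
      ring
    have h1 : ∫ y, gfun C Ψ i xi y ∂π
        = Real.exp (∑ j ∈ Finset.univ.erase i, cst j) * ∫ y, gfun C Φ i xi y ∂π := by
      rw [integral_congr_ae hrel, integral_const_mul]
    rw [(key ψ Ψ hΨc hΨe hψ i xi hxi).2.1, (key φ Φ hΦc hΦe hφ i xi hxi).2.1,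
      ← Real.exp_add] at h1
    have h2 := Real.exp_eq_exp.mp h1
    rw [hκdef]
    simp only
    linarith
  have hκc : ∀ i, κ i = cst i := by
    intro i
    obtain ⟨t, ht1, ht2⟩ := (hcst i).exists
    have e1 : ψ i t = φ i t + κ i := hfinal i t ht2
    have e2 : Ψ i t - Φ i t = cst i := ht1
    rw [← hΨe i ht2, ← hΦe i ht2] at e2
    linarith
  refine ⟨κ, ?_, hfinal⟩
  have hsum : ∑ i, κ i = ∑ i, cst i := Finset.sum_congr rfl fun i _ => hκc i
  have h0 : κ i0 = cst i0 := hκc i0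
  rw [hκdef] at h0
  simp only at h0
  have herase := Finset.add_sum_erase Finset.univ cst (Finset.mem_univ i0)
  rw [hsum]
  linarith
end
end

section
/- Suppose the cost c is the restriction to X of a continuously differentiable function c̃ on (ℝ^d)^N and let L_i := sup_{x∈X} ‖∇_{x_i} c̃(x)‖₂. Then for every family (μ_1,…,μ_N) of Borel probability measures and every solution φ = (φ_1,…,φ_N) of the Schrödinger system for (c,(μ_1,…,μ_N)), the function φ_i is L_i-Lipschitz on X_i for every i, i.e. |φ_i(x_i) − φ_i(x_i')| ≤ L_i‖x_i − x_i'‖ for all x_i, x_i' ∈ X_i. -/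
open MeasureTheory Set

noncomputable section

set_option maxHeartbeats 1000000

lemma ctilde_lip (N d : ℕ) (X : Fin N → Set (EuclideanSpace ℝ (Fin d)))
    (hXcpt : ∀ i, IsCompact (X i)) (hXcvx : ∀ i, Convex ℝ (X i))
    (ctilde : (Fin N → EuclideanSpace ℝ (Fin d)) → ℝ) (hct : ContDiff ℝ 1 ctilde)
    (L : Fin N → ℝ)
    (hL : ∀ i, L i = sSup ((fun x : Fin N → EuclideanSpace ℝ (Fin d) =>
      ‖gradient (fun z => ctilde (Function.update x i z)) (x i)‖) '' Set.univ.pi X))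
    (i : Fin N) (y : Fin N → EuclideanSpace ℝ (Fin d)) (hy : y ∈ Set.univ.pi X)
    (a b : EuclideanSpace ℝ (Fin d)) (ha : a ∈ X i) (hb : b ∈ X i) :
    |ctilde (Function.update y i a) - ctilde (Function.update y i b)| ≤ L i * ‖a - b‖ := by
  classical
  set D : EuclideanSpace ℝ (Fin d) →L[ℝ] (Fin N → EuclideanSpace ℝ (Fin d)) :=
    ContinuousLinearMap.pi (Pi.single i (ContinuousLinearMap.id ℝ (EuclideanSpace ℝ (Fin d)))) with hD
  -- derivative of z ↦ ctilde (update x i z) at any point z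
  have hfd : ∀ (x : Fin N → EuclideanSpace ℝ (Fin d)) (z : EuclideanSpace ℝ (Fin d)),
      HasFDerivAt (fun w => ctilde (Function.update x i w))
        ((fderiv ℝ ctilde (Function.update x i z)).comp D) z := by
    intro x z
    have h1 : HasFDerivAt ctilde (fderiv ℝ ctilde (Function.update x i z))
        (Function.update x i z) :=
      (hct.differentiable one_ne_zero (Function.update x i z)).hasFDerivAt
    exact h1.comp z (hasFDerivAt_update x z)
  have hgrad : ∀ x : Fin N → EuclideanSpace ℝ (Fin d),
      gradient (fun z => ctilde (Function.update x i z)) (x i)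
        = (InnerProductSpace.toDual ℝ (EuclideanSpace ℝ (Fin d))).symm ((fderiv ℝ ctilde x).comp D) := by
    intro x
    have h := hfd x (x i)
    rw [Function.update_eq_self] at h
    rw [gradient, h.fderiv]
  -- the function of x appearing in hL equals a continuous function G
  have himg : ((fun x : Fin N → EuclideanSpace ℝ (Fin d) =>
      ‖gradient (fun z => ctilde (Function.update x i z)) (x i)‖) '' Set.univ.pi X)
      = ((fun x : Fin N → EuclideanSpace ℝ (Fin d) => ‖(fderiv ℝ ctilde x).comp D‖) '' Set.univ.pi X) := by
    apply Set.image_congr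
    intro x _
    rw [hgrad x, LinearIsometryEquiv.norm_map]
  have hGcont : Continuous (fun x : Fin N → EuclideanSpace ℝ (Fin d) => ‖(fderiv ℝ ctilde x).comp D‖) :=
    ((hct.continuous_fderiv one_ne_zero).clm_comp continuous_const).norm
  have hKcpt : IsCompact (Set.univ.pi X) := isCompact_univ_pi hXcpt
  have hbdd : BddAbove ((fun x : Fin N → EuclideanSpace ℝ (Fin d) => ‖(fderiv ℝ ctilde x).comp D‖) '' Set.univ.pi X) :=
    (hKcpt.image hGcont).bddAbove
  -- bound on the derivative on X i
  have hbound : ∀ z ∈ X i, ‖fderiv ℝ (fun w => ctilde (Function.update y i w)) z‖ ≤ L i := by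
    intro z hz
    set x := Function.update y i z with hx
    have hxK : x ∈ Set.univ.pi X := by
      intro j _
      rcases eq_or_ne j i with rfl | hji
      · simpa [hx] using hz
      · simpa [hx, Function.update_apply, hji] using hy j (Set.mem_univ j)
    have hfe : (fun w => ctilde (Function.update x i w))
        = (fun w => ctilde (Function.update y i w)) := by
      funext w; rw [hx, Function.update_idem]
    have hxi : x i = z := Function.update_self i z y
    have hmem : ‖(fderiv ℝ ctilde x).comp D‖ ∈
        ((fun x : Fin N → EuclideanSpace ℝ (Fin d) => ‖(fderiv ℝ ctilde x).comp D‖) '' Set.univ.pi X) :=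
      Set.mem_image_of_mem _ hxK
    have hle : ‖(fderiv ℝ ctilde x).comp D‖ ≤ L i := by
      rw [hL i, himg]; exact le_csSup hbdd hmem
    have : fderiv ℝ (fun w => ctilde (Function.update y i w)) z
        = (fderiv ℝ ctilde x).comp D := by
      rw [← hfe, (hfd x z).fderiv, hx, Function.update_idem]
    rw [this]; exact hle
  have hdiff : ∀ z ∈ X i, DifferentiableAt ℝ (fun w => ctilde (Function.update y i w)) z :=
    fun z _ => (hfd y z).differentiableAt
  have := (hXcvx i).norm_image_sub_le_of_norm_fderiv_le hdiff hbound hb ha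
  simpa [Real.norm_eq_abs] using this


/-- If the cost `c` is the restriction to `X` of a `C¹` function `c̃`, and
`L_i = sup_{x ∈ X} ‖∇_{x_i} c̃(x)‖`, then every solution `φ` of the Schrödinger system has
`φ_i` Lipschitz on `X_i` with constant `L_i`. -/
theorem schrodinger_potentials_lipschitz
    (N d : ℕ) (hN : 2 ≤ N) (hd : 1 ≤ d)
    (X : Fin N → Set (EuclideanSpace ℝ (Fin d)))
    (hXne : ∀ i, (X i).Nonempty) (hXcpt : ∀ i, IsCompact (X i)) (hXcvx : ∀ i, Convex ℝ (X i))
    (c ctilde : (Fin N → EuclideanSpace ℝ (Fin d)) → ℝ)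
    (hct : ContDiff ℝ 1 ctilde) (hcc : Set.EqOn c ctilde (Set.univ.pi X))
    (L : Fin N → ℝ)
    (hL : ∀ i, L i = sSup ((fun x : Fin N → EuclideanSpace ℝ (Fin d) =>
      ‖gradient (fun z => ctilde (Function.update x i z)) (x i)‖) '' Set.univ.pi X))
    (μ : Fin N → Measure (EuclideanSpace ℝ (Fin d)))
    (hμp : ∀ i, IsProbabilityMeasure (μ i)) (hμs : ∀ i, μ i (X i) = 1)
    (φ : Fin N → EuclideanSpace ℝ (Fin d) → ℝ)
    (hφ : IsSchrodingerSolution X c μ φ) :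
    ∀ i : Fin N, ∀ xi ∈ X i, ∀ xi' ∈ X i,
      |φ i xi - φ i xi'| ≤ L i * ‖xi - xi'‖ := by
  classical
  haveI : ∀ j, IsProbabilityMeasure (μ j) := hμp
  -- continuous extensions of the potentials
  have hext : ∀ j : Fin N, ∃ Φ : EuclideanSpace ℝ (Fin d) → ℝ,
      Continuous Φ ∧ ∀ x ∈ X j, Φ x = φ j x := by
    intro j
    have hcl : IsClosed (X j) := (hXcpt j).isClosed
    obtain ⟨g, hg⟩ := ContinuousMap.exists_restrict_eq (Y := ℝ) hcl
      ⟨(X j).restrict (φ j), continuousOn_iff_continuous_restrict.mp (hφ.1 j)⟩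
    exact ⟨g, g.continuous, fun x hx => congrFun (congrArg DFunLike.coe hg) ⟨x, hx⟩⟩
  choose Φ hΦc hΦe using hext
  set K := Set.univ.pi X with hK
  have hKcpt : IsCompact K := isCompact_univ_pi hXcpt
  have hKmeas : MeasurableSet K :=
    MeasurableSet.univ_pi fun j => (hXcpt j).isClosed.measurableSet
  have hK1 : Measure.pi μ K = 1 := by
    rw [hK, Measure.pi_pi]
    simp [hμs]
  have aeK : ∀ᵐ y ∂Measure.pi μ, y ∈ K := by
    rw [ae_iff]
    have h1 : {y : Fin N → EuclideanSpace ℝ (Fin d) | ¬ y ∈ K} = Kᶜ := rfl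
    rw [h1, measure_compl hKmeas (measure_ne_top _ _), hK1, measure_univ, tsub_self]
  intro i xi hxi xi' hxi'
  have hupd : ∀ a ∈ X i, ∀ y ∈ K, Function.update y i a ∈ K := by
    intro a ha y hy j _
    rcases eq_or_ne j i with rfl | hji
    · simpa using ha
    · simpa [Function.update_apply, hji] using hy j (Set.mem_univ j)
  set F : EuclideanSpace ℝ (Fin d) → (Fin N → EuclideanSpace ℝ (Fin d)) → ℝ :=
    fun a y => Real.exp ((∑ j ∈ Finset.univ.erase i, Φ j (y j))
      - ctilde (Function.update y i a)) with hF
  have hFcont : ∀ a, Continuous (F a) := by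
    intro a
    apply Real.continuous_exp.comp
    apply Continuous.sub
    · exact continuous_finset_sum _ fun j _ => (hΦc j).comp (continuous_apply j)
    · exact hct.continuous.comp (continuous_id.update i continuous_const)
  have hFpos : ∀ a y, 0 < F a y := fun a y => Real.exp_pos _
  -- representation of φ i via F
  have hrepr : ∀ a ∈ X i, φ i a = - Real.log (∫ y, F a y ∂Measure.pi μ) := by
    intro a ha
    rw [hφ.2 i a ha]
    refine congrArg (fun t => - Real.log t) (integral_congr_ae ?_)
    filter_upwards [aeK] with y hy
    have h1 : ∑ j ∈ Finset.univ.erase i, φ j (y j)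
        = ∑ j ∈ Finset.univ.erase i, Φ j (y j) :=
      Finset.sum_congr rfl fun j _ => (hΦe j (y j) (hy j (Set.mem_univ j))).symm
    have h2 : c (Function.update y i a) = ctilde (Function.update y i a) :=
      hcc (hupd a ha y hy)
    rw [h1, h2]
  -- bounds
  have hsum_cont : Continuous (fun y : Fin N → EuclideanSpace ℝ (Fin d) =>
      ∑ j ∈ Finset.univ.erase i, Φ j (y j)) :=
    continuous_finset_sum _ fun j _ => (hΦc j).comp (continuous_apply j)
  obtain ⟨B1, hB1⟩ := hKcpt.exists_bound_of_continuousOn hsum_cont.continuousOn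
  obtain ⟨B2, hB2⟩ := hKcpt.exists_bound_of_continuousOn hct.continuous.continuousOn
  have hFub : ∀ a ∈ X i, ∀ y ∈ K, F a y ≤ Real.exp (B1 + B2) := by
    intro a ha y hy
    apply Real.exp_le_exp.2
    have h1 := hB1 y hy
    have h2 := hB2 _ (hupd a ha y hy)
    rw [Real.norm_eq_abs] at h1 h2
    linarith [(abs_le.1 h1).2, (abs_le.1 h2).1]
  have hFlb : ∀ a ∈ X i, ∀ y ∈ K, Real.exp (-(B1 + B2)) ≤ F a y := by
    intro a ha y hy
    apply Real.exp_le_exp.2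
    have h1 := hB1 y hy
    have h2 := hB2 _ (hupd a ha y hy)
    rw [Real.norm_eq_abs] at h1 h2
    linarith [(abs_le.1 h1).1, (abs_le.1 h2).2]
  have hInt : ∀ a ∈ X i, Integrable (F a) (Measure.pi μ) := by
    intro a ha
    refine Integrable.mono' (integrable_const (Real.exp (B1 + B2)))
      (hFcont a).aestronglyMeasurable ?_
    filter_upwards [aeK] with y hy
    rw [Real.norm_eq_abs, abs_of_pos (hFpos a y)]
    exact hFub a ha y hy
  have hpos : ∀ a ∈ X i, 0 < ∫ y, F a y ∂Measure.pi μ := by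
    intro a ha
    have hle : Real.exp (-(B1 + B2)) ≤ ∫ y, F a y ∂Measure.pi μ := by
      have h1 : ∫ (_ : Fin N → EuclideanSpace ℝ (Fin d)), Real.exp (-(B1 + B2)) ∂Measure.pi μ
          = Real.exp (-(B1 + B2)) := by
        simp
      rw [← h1]
      refine integral_mono_ae (integrable_const _) (hInt a ha) ?_
      filter_upwards [aeK] with y hy
      exact hFlb a ha y hy
    exact lt_of_lt_of_le (Real.exp_pos _) hle
  -- key comparison
  have key : ∀ a ∈ X i, ∀ b ∈ X i,
      (∫ y, F a y ∂Measure.pi μ) ≤ Real.exp (L i * ‖a - b‖) * ∫ y, F b y ∂Measure.pi μ := by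
    intro a ha b hb
    have hpt : ∀ᵐ y ∂Measure.pi μ, F a y ≤ Real.exp (L i * ‖a - b‖) * F b y := by
      filter_upwards [aeK] with y hy
      have hlip := ctilde_lip N d X hXcpt hXcvx ctilde hct L hL i y hy b a hb ha
      rw [norm_sub_rev] at hlip
      have harg : (∑ j ∈ Finset.univ.erase i, Φ j (y j)) - ctilde (Function.update y i a)
          = (ctilde (Function.update y i b) - ctilde (Function.update y i a))
            + ((∑ j ∈ Finset.univ.erase i, Φ j (y j)) - ctilde (Function.update y i b)) := by
        ring
      have h1 : F a y = Real.exp (ctilde (Function.update y i b)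
          - ctilde (Function.update y i a)) * F b y := by
        simp only [hF]
        rw [harg, Real.exp_add]
      rw [h1]
      apply mul_le_mul_of_nonneg_right _ (hFpos b y).le
      exact Real.exp_le_exp.2 (le_trans (le_abs_self _) hlip)
    calc (∫ y, F a y ∂Measure.pi μ)
        ≤ ∫ y, Real.exp (L i * ‖a - b‖) * F b y ∂Measure.pi μ :=
          integral_mono_ae (hInt a ha) ((hInt b hb).const_mul _) hpt
      _ = Real.exp (L i * ‖a - b‖) * ∫ y, F b y ∂Measure.pi μ := integral_const_mul _ _
  have main : ∀ a ∈ X i, ∀ b ∈ X i, φ i a - φ i b ≤ L i * ‖a - b‖ := by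
    intro a ha b hb
    rw [hrepr a ha, hrepr b hb]
    have hIb_le := key b hb a ha
    rw [norm_sub_rev] at hIb_le
    have hlog := Real.log_le_log (hpos b hb) hIb_le
    rw [Real.log_mul (Real.exp_ne_zero _) (ne_of_gt (hpos a ha)), Real.log_exp] at hlog
    linarith
  rw [abs_sub_le_iff]
  refine ⟨main xi hxi xi' hxi', ?_⟩
  have := main xi' hxi' xi hxi
  rwa [norm_sub_rev] at this
end
end

section
/- Let c : X → ℝ be continuous, let φ_1,…,φ_N with φ_i : X_i → ℝ continuous, and define for each i, x_i ∈ X_i, x_{-i} ∈ X_{-i} the conditional density q_{-i}(x_{-i}|x_i) := exp(Σ_{j≠i} φ_j(x_j) − c(x_i,x_{-i})) / ∫_{X_{-i}} exp(Σ_{j≠i} φ_j(x_j') − c(x_i,x_{-i}')) dμ_{-i}(x_{-i}'). Suppose continuous functions h_i : X_i → ℝ and constants λ_1,…,λ_N ∈ ℝ with Σ_{i=1}^N λ_i = 0 satisfy, for every i and every x_i ∈ X_i, h_i(x_i) + ∫_{X_{-i}} (Σ_{j≠i} h_j(x_j)) q_{-i}(x_{-i}|x_i) dμ_{-i}(x_{-i})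 = λ_i. Then λ_i = 0 for every i, and there exist constants κ_1,…,κ_N ∈ ℝ with Σ_{i=1}^N κ_i = 0 such that h_i(x_i) = κ_i for every i and every x_i ∈ X_i. -/
open MeasureTheory Set

noncomputable section

section Aux

open Function

variable {ι : Type*} [Fintype ι] [DecidableEq ι] {E : Type*} [MeasurableSpace E]

lemma measurePreserving_update' (μ : ι → Measure E) [∀ i, IsProbabilityMeasure (μ i)] (i : ι) :
    MeasurePreserving (fun p : E × (ι → E) => Function.update p.2 i p.1)
      ((μ i).prod (Measure.pi μ)) (Measure.pi μ) := by
  have hT : Measurable (fun p : E × (ι → E) => Function.update p.2 i p.1) :=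
    measurable_update'.comp (measurable_snd.prodMk measurable_fst)
  refine ⟨hT, ?_⟩
  refine (Measure.pi_eq fun s hs => ?_).symm
  rw [Measure.map_apply hT (MeasurableSet.univ_pi hs)]
  have hpre : (fun p : E × (ι → E) => Function.update p.2 i p.1) ⁻¹' (univ.pi s)
      = (s i) ×ˢ (univ.pi (Function.update s i univ)) := by
    ext p
    simp only [mem_preimage, mem_pi, mem_univ, forall_true_left, mem_prod]
    constructor
    · intro hp
      refine ⟨by simpa using hp i, fun j => ?_⟩
      rcases eq_or_ne j i with rfl | hj
      · simp
      · have := hp j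
        simpa [Function.update_of_ne hj] using this
    · rintro ⟨h1, h2⟩ j
      rcases eq_or_ne j i with rfl | hj
      · simpa using h1
      · have := h2 j
        simpa [Function.update_of_ne hj] using this
  rw [hpre, Measure.prod_prod, Measure.pi_pi]
  have h1 : ∏ j, (μ j) (Function.update s i univ j)
      = ∏ j ∈ Finset.univ.erase i, (μ j) (s j) := by
    rw [← Finset.mul_prod_erase Finset.univ (fun j => (μ j) (Function.update s i univ j))
        (Finset.mem_univ i)]
    simp only [Function.update_self, measure_univ, one_mul]
    exact Finset.prod_congr rfl fun j hj => by
      rw [Function.update_of_ne (Finset.ne_of_mem_erase hj)]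
  rw [h1, Finset.mul_prod_erase Finset.univ (fun j => (μ j) (s j)) (Finset.mem_univ i)]

variable (μ : ι → Measure E) [∀ i, IsProbabilityMeasure (μ i)] (i : ι)

lemma integral_update_eq {f : (ι → E) → ℝ} (hf : Integrable f (Measure.pi μ)) :
    ∫ a, (∫ y, f (Function.update y i a) ∂(Measure.pi μ)) ∂(μ i)
      = ∫ x, f x ∂(Measure.pi μ) := by
  have hmp := measurePreserving_update' μ i
  have hint : Integrable (fun p : E × (ι → E) => f (Function.update p.2 i p.1))
      ((μ i).prod (Measure.pi μ)) :=
    (hmp.integrable_comp hf.aestronglyMeasurable).mpr hf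
  calc ∫ a, (∫ y, f (Function.update y i a) ∂(Measure.pi μ)) ∂(μ i)
      = ∫ p : E × (ι → E), f (Function.update p.2 i p.1) ∂((μ i).prod (Measure.pi μ)) :=
        (MeasureTheory.integral_prod _ hint).symm
    _ = ∫ x, f x ∂(Measure.pi μ) := by
        have h' : AEStronglyMeasurable f
            (Measure.map (fun p : E × (ι → E) => Function.update p.2 i p.1)
              ((μ i).prod (Measure.pi μ))) := by
          rw [hmp.map_eq]; exact hf.aestronglyMeasurable
        have h2 := integral_map hmp.measurable.aemeasurable h'
        rw [hmp.map_eq] at h2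
        exact h2.symm

lemma ae_update_of_ae {p : (ι → E) → Prop} (hp : ∀ᵐ x ∂(Measure.pi μ), p x) :
    ∀ᵐ a ∂(μ i), ∀ᵐ y ∂(Measure.pi μ), p (Function.update y i a) := by
  have hmp := measurePreserving_update' μ i
  exact Measure.ae_ae_of_ae_prod (hmp.quasiMeasurePreserving.ae hp)

end Aux

lemma aesm_of_continuousOn_conull {α : Type*} [MeasurableSpace α] [TopologicalSpace α]
    [OpensMeasurableSpace α] [T2Space α] {μ : Measure α}
    {s : Set α} (hs : IsCompact s) (hcon : μ sᶜ = 0) {f : α → ℝ}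
    (hf : ContinuousOn f s) : AEStronglyMeasurable f μ := by
  have hmem : ∀ᵐ x ∂μ, x ∈ s := by
    rw [ae_iff]; exact hcon
  have := hf.aestronglyMeasurable hs.isClosed.measurableSet (μ := μ)
  rwa [Measure.restrict_eq_self_of_ae_mem hmem] at this

lemma integrable_of_continuousOn_conull {α : Type*} [MeasurableSpace α] [TopologicalSpace α]
    [OpensMeasurableSpace α] [T2Space α] {μ : Measure α} [IsProbabilityMeasure μ]
    {s : Set α} (hs : IsCompact s) (hcon : μ sᶜ = 0) {f : α → ℝ}
    (hf : ContinuousOn f s) : Integrable f μ := by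
  have hmem : ∀ᵐ x ∂μ, x ∈ s := by
    rw [ae_iff]; exact hcon
  obtain ⟨C, hC⟩ := hs.exists_bound_of_continuousOn hf
  exact (integrable_const C).mono' (aesm_of_continuousOn_conull hs hcon hf)
    (hmem.mono fun x hx => hC x hx)

/-- The kernel of `Id + L` is trivial: if continuous functions `h_i` and
constants `λ_i` summing to zero satisfy
`h_i(x_i) + ∫ (Σ_{j≠i} h_j(x_j)) q_{-i}(x_{-i}|x_i) dμ_{-i}(x_{-i}) = λ_i` on `X_i` for
every `i`, then all `λ_i = 0` and each `h_i` is constant on `X_i`, the constants summing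
to zero. -/
theorem schrodinger_linearization_kernel
    (N d : ℕ) (hN : 2 ≤ N) (hd : 1 ≤ d)
    (X : Fin N → Set (EuclideanSpace ℝ (Fin d)))
    (hXne : ∀ i, (X i).Nonempty) (hXcpt : ∀ i, IsCompact (X i)) (hXcvx : ∀ i, Convex ℝ (X i))
    (c : (Fin N → EuclideanSpace ℝ (Fin d)) → ℝ)
    (hc : ContinuousOn c (Set.univ.pi X))
    (μ : Fin N → Measure (EuclideanSpace ℝ (Fin d)))
    (hμp : ∀ i, IsProbabilityMeasure (μ i)) (hμs : ∀ i, μ i (X i) = 1)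
    (φ : Fin N → EuclideanSpace ℝ (Fin d) → ℝ)
    (hφ : ∀ i, ContinuousOn (φ i) (X i))
    (h : Fin N → EuclideanSpace ℝ (Fin d) → ℝ)
    (hh : ∀ i, ContinuousOn (h i) (X i))
    (lam : Fin N → ℝ) (hlam : (∑ i, lam i) = 0)
    (heq : ∀ i : Fin N, ∀ xi ∈ X i,
      h i xi + (∫ y, (∑ j ∈ Finset.univ.erase i, h j (y j)) *
          (Real.exp ((∑ j ∈ Finset.univ.erase i, φ j (y j)) - c (Function.update y i xi)) /
            ∫ y', Real.exp ((∑ j ∈ Finset.univ.erase i, φ j (y' j))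
              - c (Function.update y' i xi)) ∂(Measure.pi μ))
        ∂(Measure.pi μ)) = lam i) :
    (∀ i, lam i = 0) ∧
    ∃ κ : Fin N → ℝ, (∑ i, κ i) = 0 ∧ ∀ i : Fin N, ∀ xi ∈ X i, h i xi = κ i := by
  classical
  haveI : ∀ i, IsProbabilityMeasure (μ i) := hμp
  set P : Measure (Fin N → EuclideanSpace ℝ (Fin d)) := Measure.pi μ with hPdef
  set S : Set (Fin N → EuclideanSpace ℝ (Fin d)) := Set.univ.pi X with hSdef
  haveI : IsProbabilityMeasure P := by rw [hPdef]; infer_instance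
  have hXmeas : ∀ i, MeasurableSet (X i) := fun i => (hXcpt i).isClosed.measurableSet
  have hSmeas : MeasurableSet S := MeasurableSet.univ_pi fun i => hXmeas i
  have hScpt : IsCompact S := isCompact_univ_pi hXcpt
  have hμcon : ∀ i, μ i (X i)ᶜ = 0 := fun i => (prob_compl_eq_zero_iff (hXmeas i)).2 (hμs i)
  have hPS : P Sᶜ = 0 := by
    rw [prob_compl_eq_zero_iff hSmeas, hPdef, hSdef, Measure.pi_pi]
    simp [hμs]
  have hmemP : ∀ᵐ x ∂P, x ∈ S := by rw [ae_iff]; exact hPS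
  have hmemμ : ∀ i, ∀ᵐ t ∂(μ i), t ∈ X i := fun i => by rw [ae_iff]; exact hμcon i
  have heval_mem : ∀ x ∈ S, ∀ j, x j ∈ X j := fun x hx j => hx j (mem_univ j)
  have hupd_mem : ∀ (i : Fin N), ∀ xi ∈ X i, ∀ y ∈ S, Function.update y i xi ∈ S := by
    intro i xi hxi y hy j _
    rcases eq_or_ne j i with rfl | hj
    · simpa using hxi
    · rw [Function.update_of_ne hj]; exact heval_mem y hy j
  -- the reference density p
  set u : (Fin N → EuclideanSpace ℝ (Fin d)) → ℝ := fun x => (∑ j, φ j (x j)) - c x with hudef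
  have hφeval : ∀ j : Fin N, ContinuousOn (fun x : Fin N → EuclideanSpace ℝ (Fin d) => φ j (x j)) S :=
    fun j => (hφ j).comp (continuous_apply j).continuousOn (fun x hx => heval_mem x hx j)
  have hucont : ContinuousOn u S :=
    (continuousOn_finset_sum Finset.univ fun j _ => hφeval j).sub hc
  set Z : ℝ := ∫ x, Real.exp (u x) ∂P with hZdef
  have hexpucont : ContinuousOn (fun x => Real.exp (u x)) S :=
    Real.continuous_exp.comp_continuousOn hucont
  have hZint : Integrable (fun x => Real.exp (u x)) P :=
    integrable_of_continuousOn_conull hScpt hPS hexpucont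
  have hZpos : 0 < Z := by
    rw [hZdef, integral_pos_iff_support_of_nonneg (fun x => (Real.exp_pos _).le) hZint]
    have : Function.support (fun x => Real.exp (u x)) = Set.univ := by
      ext x; simp [Function.support, Real.exp_ne_zero]
    rw [this]
    simp
  set p : (Fin N → EuclideanSpace ℝ (Fin d)) → ℝ := fun x => Real.exp (u x) / Z with hpdef
  have hppos : ∀ x, 0 < p x := fun x => div_pos (Real.exp_pos _) hZpos
  have hpcont : ContinuousOn p S := hexpucont.div_const Z
  have hpint : Integrable p P := hZint.div_const Z
  have hpint1 : ∫ x, p x ∂P = 1 := by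
    rw [hpdef]
    simp only []
    rw [MeasureTheory.integral_div, ← hZdef, div_self hZpos.ne']
  set H : Fin N → (Fin N → EuclideanSpace ℝ (Fin d)) → ℝ :=
    fun i y => ∑ j ∈ Finset.univ.erase i, h j (y j) with hHdef
  have hheval : ∀ j : Fin N, ContinuousOn (fun x : Fin N → EuclideanSpace ℝ (Fin d) => h j (x j)) S :=
    fun j => (hh j).comp (continuous_apply j).continuousOn (fun x hx => heval_mem x hx j)
  have hHcont : ∀ i, ContinuousOn (H i) S :=
    fun i => continuousOn_finset_sum _ fun j _ => hheval j
  have hHint : ∀ i, Integrable (H i) P :=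
    fun i => integrable_of_continuousOn_conull hScpt hPS (hHcont i)
  -- conditional densities
  have hpupd_cont : ∀ (i : Fin N), ∀ xi ∈ X i,
      ContinuousOn (fun y => p (Function.update y i xi)) S := by
    intro i xi hxi
    exact hpcont.comp (continuous_id.update i continuous_const).continuousOn
      (fun y hy => hupd_mem i xi hxi y hy)
  have hpupd_int : ∀ (i : Fin N), ∀ xi ∈ X i,
      Integrable (fun y => p (Function.update y i xi)) P :=
    fun i xi hxi => integrable_of_continuousOn_conull hScpt hPS (hpupd_cont i xi hxi)
  set r : Fin N → EuclideanSpace ℝ (Fin d) → ℝ :=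
    fun i t => ∫ y, p (Function.update y i t) ∂P with hrdef
  have hrpos : ∀ (i : Fin N), ∀ xi ∈ X i, 0 < r i xi := by
    intro i xi hxi
    rw [hrdef]
    rw [integral_pos_iff_support_of_nonneg (fun y => (hppos _).le) (hpupd_int i xi hxi)]
    have : Function.support (fun y => p (Function.update y i xi)) = Set.univ := by
      ext y; simp [Function.support, (hppos _).ne']
    rw [this]
    simp
  obtain ⟨Cp, hCp⟩ := hScpt.exists_bound_of_continuousOn hpcont
  have hupdmemae : ∀ (i : Fin N), ∀ xi ∈ X i, ∀ᵐ y ∂P, Function.update y i xi ∈ S :=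
    fun i xi hxi => hmemP.mono fun y hy => hupd_mem i xi hxi y hy
  have hrcont : ∀ i : Fin N, ContinuousOn (r i) (X i) := by
    intro i
    rw [hrdef]
    apply MeasureTheory.continuousOn_of_dominated (bound := fun _ => Cp)
    · intro t ht
      exact aesm_of_continuousOn_conull hScpt hPS (hpupd_cont i t ht)
    · intro t ht
      exact (hupdmemae i t ht).mono fun y hy => hCp _ hy
    · exact integrable_const Cp
    · refine hmemP.mono fun y hy => ?_
      have hcy : Continuous (fun t : EuclideanSpace ℝ (Fin d) => Function.update y i t) :=
        continuous_const.update i continuous_id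
      exact hpcont.comp hcy.continuousOn (fun t ht => hupd_mem i t ht y hy)
  set J : Fin N → EuclideanSpace ℝ (Fin d) → ℝ :=
    fun i t => ∫ y, H i y * p (Function.update y i t) ∂P with hJdef
  have hJcont : ∀ i : Fin N, ContinuousOn (J i) (X i) := by
    intro i
    obtain ⟨Ch, hCh⟩ := hScpt.exists_bound_of_continuousOn (hHcont i)
    rw [hJdef]
    apply MeasureTheory.continuousOn_of_dominated (bound := fun y => ‖H i y‖ * Cp)
    · intro t ht
      exact ((hHint i).aestronglyMeasurable).mul
        (aesm_of_continuousOn_conull hScpt hPS (hpupd_cont i t ht))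
    · intro t ht
      refine (hupdmemae i t ht).mono fun y hy => ?_
      rw [norm_mul]
      exact mul_le_mul_of_nonneg_left (hCp _ hy) (norm_nonneg _)
    · exact ((hHint i).norm.mul_const Cp)
    · refine hmemP.mono fun y hy => ?_
      have hcy : Continuous (fun t : EuclideanSpace ℝ (Fin d) => Function.update y i t) :=
        continuous_const.update i continuous_id
      exact (continuousOn_const.mul
        (hpcont.comp hcy.continuousOn (fun t ht => hupd_mem i t ht y hy)))
  have hJint : ∀ i : Fin N, ∀ xi ∈ X i,
      Integrable (fun y => H i y * p (Function.update y i xi)) P := by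
    intro i xi hxi
    exact integrable_of_continuousOn_conull hScpt hPS
      ((hHcont i).mul (hpupd_cont i xi hxi))
  -- rewrite the stationarity equation in terms of p and r
  have hEq : ∀ i : Fin N, ∀ xi ∈ X i,
      h i xi * r i xi + J i xi = lam i * r i xi := by
    intro i xi hxi
    have hα : (0:ℝ) < Z * Real.exp (-(φ i xi)) := mul_pos hZpos (Real.exp_pos _)
    have hgp : ∀ y : Fin N → EuclideanSpace ℝ (Fin d),
        Real.exp ((∑ j ∈ Finset.univ.erase i, φ j (y j)) - c (Function.update y i xi))
          = (Z * Real.exp (-(φ i xi))) * p (Function.update y i xi) := by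
      intro y
      have hsum : ∑ j, φ j (Function.update y i xi j)
          = φ i xi + ∑ j ∈ Finset.univ.erase i, φ j (y j) := by
        rw [← Finset.add_sum_erase Finset.univ (fun j => φ j (Function.update y i xi j))
          (Finset.mem_univ i)]
        simp only [Function.update_self]
        congr 1
        exact Finset.sum_congr rfl fun j hj => by
          rw [Function.update_of_ne (Finset.ne_of_mem_erase hj)]
      have key : ∀ f A C : ℝ,
          Real.exp (A - C) = Z * Real.exp (-f) * (Real.exp (f + A - C) / Z) := by
        intro f A C
        rw [mul_comm Z (Real.exp (-f)), mul_assoc, mul_div_assoc',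
          mul_div_cancel_left₀ _ hZpos.ne', ← Real.exp_add]
        congr 1
        ring
      rw [hpdef]
      simp only [hudef, hsum]
      exact key (φ i xi) _ _
    have hZi : (∫ y', Real.exp ((∑ j ∈ Finset.univ.erase i, φ j (y' j))
          - c (Function.update y' i xi)) ∂P)
        = (Z * Real.exp (-(φ i xi))) * r i xi := by
      simp only [hgp]
      rw [MeasureTheory.integral_const_mul]
    have e0 := heq i xi hxi
    rw [hZi] at e0
    have e1 : (∫ y, (∑ j ∈ Finset.univ.erase i, h j (y j)) *
          (Real.exp ((∑ j ∈ Finset.univ.erase i, φ j (y j)) - c (Function.update y i xi)) /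
            ((Z * Real.exp (-(φ i xi))) * r i xi)) ∂P)
        = ∫ y, (H i y * p (Function.update y i xi)) / r i xi ∂P := by
      refine MeasureTheory.integral_congr_ae (Filter.Eventually.of_forall fun y => ?_)
      show (∑ j ∈ Finset.univ.erase i, h j (y j)) *
          (Real.exp ((∑ j ∈ Finset.univ.erase i, φ j (y j)) - c (Function.update y i xi)) /
            ((Z * Real.exp (-(φ i xi))) * r i xi))
        = (H i y * p (Function.update y i xi)) / r i xi
      rw [hgp y, mul_div_mul_left _ _ hα.ne', mul_div_assoc]
    rw [e1, MeasureTheory.integral_div] at e0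
    have e2 : (∫ y, H i y * p (Function.update y i xi) ∂P) = J i xi := by rw [hJdef]
    rw [e2] at e0
    have e3 := congrArg (fun z => z * r i xi) e0
    simp only [add_mul] at e3
    rw [div_mul_cancel₀ _ (hrpos i xi hxi).ne'] at e3
    exact e3
  -- Step 1: all lam i coincide with ∑ j, a j, hence vanish
  set a : Fin N → ℝ := fun i => ∫ x, h i (x i) * p x ∂P with hadef
  have hFUB1 : ∀ i : Fin N, ∫ t, h i t * r i t ∂(μ i) = a i := by
    intro i
    have hfint : Integrable (fun x => h i (x i) * p x) P :=
      integrable_of_continuousOn_conull hScpt hPS ((hheval i).mul hpcont)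
    calc ∫ t, h i t * r i t ∂(μ i)
        = ∫ t, (∫ y, h i (Function.update y i t i) * p (Function.update y i t) ∂P) ∂(μ i) := by
          refine MeasureTheory.integral_congr_ae (Filter.Eventually.of_forall fun t => ?_)
          simp only [Function.update_self]
          exact (MeasureTheory.integral_const_mul _ _).symm
      _ = a i := integral_update_eq μ i hfint
  have hFUB3 : ∀ i : Fin N, ∫ t, r i t ∂(μ i) = 1 := by
    intro i
    calc ∫ t, r i t ∂(μ i) = ∫ x, p x ∂P := integral_update_eq μ i hpint
    _ = 1 := hpint1
  have hHupd : ∀ (i : Fin N) (t : EuclideanSpace ℝ (Fin d)) (y : Fin N → EuclideanSpace ℝ (Fin d)),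
      H i (Function.update y i t) = H i y := by
    intro i t y
    refine Finset.sum_congr rfl fun j hj => ?_
    rw [Function.update_of_ne (Finset.ne_of_mem_erase hj)]
  have hFUB2 : ∀ i : Fin N, ∫ t, J i t ∂(μ i) = ∑ j ∈ Finset.univ.erase i, a j := by
    intro i
    have hfint : Integrable (fun x => H i x * p x) P :=
      integrable_of_continuousOn_conull hScpt hPS ((hHcont i).mul hpcont)
    calc ∫ t, J i t ∂(μ i)
        = ∫ t, (∫ y, H i (Function.update y i t) * p (Function.update y i t) ∂P) ∂(μ i) := by
          refine MeasureTheory.integral_congr_ae (Filter.Eventually.of_forall fun t => ?_)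
          have hy : ∀ y, H i (Function.update y i t) * p (Function.update y i t)
              = H i y * p (Function.update y i t) := fun y => by rw [hHupd i t y]
          exact (MeasureTheory.integral_congr_ae (Filter.Eventually.of_forall hy)).symm
      _ = ∫ x, H i x * p x ∂P := integral_update_eq μ i hfint
      _ = ∑ j ∈ Finset.univ.erase i, a j := by
          have h1 : (∫ x, H i x * p x ∂P)
              = ∫ x, ∑ j ∈ Finset.univ.erase i, h j (x j) * p x ∂P := by
            refine MeasureTheory.integral_congr_ae (Filter.Eventually.of_forall fun x => ?_)
            show (∑ j ∈ Finset.univ.erase i, h j (x j)) * p x = _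
            rw [Finset.sum_mul]
          rw [h1, MeasureTheory.integral_finset_sum _ (fun j _ =>
            (integrable_of_continuousOn_conull hScpt hPS ((hheval j).mul hpcont) :
              Integrable (fun x => h j (x j) * p x) P))]
  have hlamA : ∀ i, lam i = ∑ j, a j := by
    intro i
    have hae : (fun t => h i t * r i t + J i t) =ᵐ[μ i] (fun t => lam i * r i t) :=
      (hmemμ i).mono fun t ht => hEq i t ht
    have hint1 : Integrable (fun t => h i t * r i t) (μ i) :=
      integrable_of_continuousOn_conull (hXcpt i) (hμcon i) ((hh i).mul (hrcont i))
    have hint2 : Integrable (J i) (μ i) :=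
      integrable_of_continuousOn_conull (hXcpt i) (hμcon i) (hJcont i)
    have hI := MeasureTheory.integral_congr_ae hae
    rw [MeasureTheory.integral_add hint1 hint2, MeasureTheory.integral_const_mul,
      hFUB1 i, hFUB2 i, hFUB3 i, mul_one] at hI
    rw [← hI, ← Finset.add_sum_erase Finset.univ a (Finset.mem_univ i)]
  have hA0 : (∑ j, a j) = 0 := by
    have hs : (0:ℝ) = (N:ℝ) * ∑ j, a j := by
      rw [← hlam, Finset.sum_congr rfl fun i _ => hlamA i]
      simp [Finset.sum_const, Finset.card_univ, nsmul_eq_mul]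
    have hN0 : (N:ℝ) ≠ 0 := Nat.cast_ne_zero.mpr (by omega)
    rcases mul_eq_zero.mp hs.symm with h' | h'
    · exact absurd h' hN0
    · exact h'
  have hlam0 : ∀ i, lam i = 0 := fun i => by rw [hlamA i, hA0]
  -- Step 2: ∫ G² p = 0
  set G : (Fin N → EuclideanSpace ℝ (Fin d)) → ℝ := fun x => ∑ j, h j (x j) with hGdef
  have hGcont : ContinuousOn G S := continuousOn_finset_sum _ fun j _ => hheval j
  have hG2pint : Integrable (fun x => G x ^ 2 * p x) P :=
    integrable_of_continuousOn_conull hScpt hPS ((hGcont.pow 2).mul hpcont)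
  have hFUB4 : ∀ i : Fin N, ∫ t, h i t ^ 2 * r i t ∂(μ i) = ∫ x, h i (x i) ^ 2 * p x ∂P := by
    intro i
    have hfint : Integrable (fun x => h i (x i) ^ 2 * p x) P :=
      integrable_of_continuousOn_conull hScpt hPS (((hheval i).pow 2).mul hpcont)
    calc ∫ t, h i t ^ 2 * r i t ∂(μ i)
        = ∫ t, (∫ y, h i (Function.update y i t i) ^ 2 * p (Function.update y i t) ∂P) ∂(μ i) := by
          refine MeasureTheory.integral_congr_ae (Filter.Eventually.of_forall fun t => ?_)
          simp only [Function.update_self]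
          exact (MeasureTheory.integral_const_mul _ _).symm
      _ = ∫ x, h i (x i) ^ 2 * p x ∂P := integral_update_eq μ i hfint
  have hFUB5 : ∀ i : Fin N, ∫ t, h i t * J i t ∂(μ i)
      = ∫ x, h i (x i) * H i x * p x ∂P := by
    intro i
    have hfint : Integrable (fun x => h i (x i) * H i x * p x) P :=
      integrable_of_continuousOn_conull hScpt hPS (((hheval i).mul (hHcont i)).mul hpcont)
    calc ∫ t, h i t * J i t ∂(μ i)
        = ∫ t, (∫ y, h i (Function.update y i t i) * H i (Function.update y i t)
            * p (Function.update y i t) ∂P) ∂(μ i) := by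
          refine MeasureTheory.integral_congr_ae (Filter.Eventually.of_forall fun t => ?_)
          have hy : ∀ y, h i (Function.update y i t i) * H i (Function.update y i t)
              * p (Function.update y i t) = h i t * (H i y * p (Function.update y i t)) :=
            fun y => by rw [Function.update_self, hHupd i t y, mul_assoc]
          show h i t * J i t = ∫ y, h i (Function.update y i t i) * H i (Function.update y i t)
            * p (Function.update y i t) ∂P
          rw [MeasureTheory.integral_congr_ae (Filter.Eventually.of_forall hy),
            MeasureTheory.integral_const_mul]
      _ = ∫ x, h i (x i) * H i x * p x ∂P := integral_update_eq μ i hfint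
  have heqi2 : ∀ i : Fin N,
      (∫ x, h i (x i) ^ 2 * p x ∂P) + ∫ x, h i (x i) * H i x * p x ∂P = 0 := by
    intro i
    have hae : (fun t => h i t ^ 2 * r i t + h i t * J i t) =ᵐ[μ i] (fun _ => (0:ℝ)) := by
      refine (hmemμ i).mono fun t ht => ?_
      have e := hEq i t ht
      rw [hlam0 i, zero_mul] at e
      calc h i t ^ 2 * r i t + h i t * J i t = h i t * (h i t * r i t + J i t) := by ring
        _ = 0 := by rw [e, mul_zero]
    have hint1 : Integrable (fun t => h i t ^ 2 * r i t) (μ i) :=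
      integrable_of_continuousOn_conull (hXcpt i) (hμcon i) (((hh i).pow 2).mul (hrcont i))
    have hint2 : Integrable (fun t => h i t * J i t) (μ i) :=
      integrable_of_continuousOn_conull (hXcpt i) (hμcon i) ((hh i).mul (hJcont i))
    have hI := MeasureTheory.integral_congr_ae hae
    rw [MeasureTheory.integral_add hint1 hint2, integral_const, smul_zero] at hI
    rw [← hFUB4 i, ← hFUB5 i]
    exact hI
  have hsum0 : ∫ x, G x ^ 2 * p x ∂P = 0 := by
    have hpt : ∀ x, G x ^ 2 * p x
        = ∑ i, (h i (x i) ^ 2 * p x + h i (x i) * H i x * p x) := by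
      intro x
      have hiG : ∀ i : Fin N, h i (x i) ^ 2 * p x + h i (x i) * H i x * p x
          = h i (x i) * (G x * p x) := by
        intro i
        have hsplit : h i (x i) + H i x = G x :=
          Finset.add_sum_erase Finset.univ (fun j => h j (x j)) (Finset.mem_univ i)
        calc h i (x i) ^ 2 * p x + h i (x i) * H i x * p x
            = h i (x i) * (h i (x i) + H i x) * p x := by ring
          _ = h i (x i) * (G x * p x) := by rw [hsplit, mul_assoc]
      rw [Finset.sum_congr rfl fun i _ => hiG i, ← Finset.sum_mul]
      show G x ^ 2 * p x = G x * (G x * p x)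
      ring
    have hintsum : ∀ i ∈ Finset.univ, Integrable
        (fun x => h i (x i) ^ 2 * p x + h i (x i) * H i x * p x) P := fun i _ =>
      (integrable_of_continuousOn_conull hScpt hPS (((hheval i).pow 2).mul hpcont)).add
        (integrable_of_continuousOn_conull hScpt hPS (((hheval i).mul (hHcont i)).mul hpcont))
    rw [MeasureTheory.integral_congr_ae (Filter.Eventually.of_forall hpt),
      MeasureTheory.integral_finset_sum _ hintsum]
    refine Finset.sum_eq_zero fun i _ => ?_
    have hint1 : Integrable (fun x => h i (x i) ^ 2 * p x) P :=
      integrable_of_continuousOn_conull hScpt hPS (((hheval i).pow 2).mul hpcont)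
    have hint2 : Integrable (fun x => h i (x i) * H i x * p x) P :=
      integrable_of_continuousOn_conull hScpt hPS (((hheval i).mul (hHcont i)).mul hpcont)
    rw [MeasureTheory.integral_add hint1 hint2]
    exact heqi2 i
  have hGae : ∀ᵐ x ∂P, G x = 0 := by
    have h0 := (MeasureTheory.integral_eq_zero_iff_of_nonneg
      (fun x => mul_nonneg (sq_nonneg _) (hppos x).le) hG2pint).mp hsum0
    refine h0.mono fun x hx => ?_
    have hx' : G x ^ 2 * p x = 0 := hx
    rcases mul_eq_zero.mp hx' with h' | h'
    · exact (pow_eq_zero_iff two_ne_zero).mp h'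
    · exact absurd h' (hppos x).ne'
  -- Step 3: each h i is a.e. constant
  set κ : Fin N → ℝ := fun i => -∫ y, H i y ∂P with hκdef
  have haeconst : ∀ i : Fin N, ∀ᵐ t ∂(μ i), h i t = κ i := by
    intro i
    refine (ae_update_of_ae μ i hGae).mono fun t ht => ?_
    have hsplit : ∀ y : Fin N → EuclideanSpace ℝ (Fin d),
        G (Function.update y i t) = h i t + H i y := by
      intro y
      show (∑ j, h j (Function.update y i t j)) = _
      rw [← Finset.add_sum_erase Finset.univ (fun j => h j (Function.update y i t j))
        (Finset.mem_univ i), Function.update_self]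
      congr 1
      exact Finset.sum_congr rfl fun j hj => by
        rw [Function.update_of_ne (Finset.ne_of_mem_erase hj)]
    have h0 : (fun y => h i t + H i y) =ᵐ[P] (fun _ => (0:ℝ)) :=
      ht.mono fun y hy => by
        show h i t + H i y = 0
        rw [← hsplit y]; exact hy
    have hI := MeasureTheory.integral_congr_ae h0
    rw [MeasureTheory.integral_add (integrable_const _) (hHint i), integral_const,
      integral_const, smul_zero, smul_eq_mul, probReal_univ, one_mul] at hI
    have : h i t = -∫ y, H i y ∂P := by linarith
    exact this
  have hcoord : ∀ j : Fin N,
      (fun y : Fin N → EuclideanSpace ℝ (Fin d) => h j (y j)) =ᵐ[P] (fun _ => κ j) := by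
    intro j
    exact (Measure.tendsto_eval_ae_ae (μ := μ) (i := j)).eventually (haeconst j)
  have hκalt : ∀ i : Fin N, -κ i = ∑ j ∈ Finset.univ.erase i, κ j := by
    intro i
    rw [hκdef]
    simp only [neg_neg]
    have h1 : (∫ y, H i y ∂P) = ∑ j ∈ Finset.univ.erase i, ∫ y, h j (y j) ∂P := by
      refine Eq.trans ?_ (MeasureTheory.integral_finset_sum _ (fun j _ =>
        integrable_of_continuousOn_conull hScpt hPS (hheval j)))
      rfl
    rw [h1]
    refine Finset.sum_congr rfl fun j hj => ?_
    rw [MeasureTheory.integral_congr_ae (hcoord j), integral_const, smul_eq_mul,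
      probReal_univ, one_mul]
  have hκsum : (∑ i, κ i) = 0 := by
    have i0 : Fin N := ⟨0, by omega⟩
    rw [← Finset.add_sum_erase Finset.univ κ (Finset.mem_univ i0), ← hκalt i0]
    ring
  -- Step 4: h i equals κ i everywhere on X i
  have hHae2 : ∀ i : Fin N, (H i) =ᵐ[P] (fun _ => -κ i) := by
    intro i
    have hall : ∀ᵐ y ∂P, ∀ j ∈ Finset.univ.erase i, h j (y j) = κ j :=
      (Filter.eventually_all_finset (Finset.univ.erase i)).mpr fun j _ => hcoord j
    refine hall.mono fun y hy => ?_
    show (∑ j ∈ Finset.univ.erase i, h j (y j)) = -κ i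
    rw [Finset.sum_congr rfl hy, ← hκalt i]
  have hfinal : ∀ i : Fin N, ∀ xi ∈ X i, h i xi = κ i := by
    intro i xi hxi
    have e := hEq i xi hxi
    rw [hlam0 i, zero_mul] at e
    have hJval : J i xi = -κ i * r i xi := by
      have hcg : (fun y => H i y * p (Function.update y i xi)) =ᵐ[P]
          (fun y => -κ i * p (Function.update y i xi)) :=
        (hHae2 i).mono fun y hy => by
          show H i y * p (Function.update y i xi) = -κ i * p (Function.update y i xi)
          rw [hy]
      show (∫ y, H i y * p (Function.update y i xi) ∂P) = -κ i * r i xi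
      rw [MeasureTheory.integral_congr_ae hcg, MeasureTheory.integral_const_mul]
    rw [hJval] at e
    have hzero : (h i xi - κ i) * r i xi = 0 := by linear_combination e
    rcases mul_eq_zero.mp hzero with h' | h'
    · linarith [sub_eq_zero.mp h']
    · exact absurd h' (hrpos i xi hxi).ne'
  exact ⟨hlam0, κ, hκsum, hfinal⟩

end
end

section
/- Let μ_i be Borel probability measures on X_i and μ = μ_1 ⊗ ⋯ ⊗ μ_N, and let h_i ∈ L²(μ_i) for i = 1,…,N. Define the quotient norm ‖h‖²_{L̃²} := inf{ Σ_{i=1}^N ∫_{X_i} (h_i(x_i) − κ_i)² dμ_i(x_i) : κ ∈ ℝ^N, Σ_{i=1}^N κ_i = 0 }. Then ‖h‖²_{L̃²} ≤ ∫_X (Σ_{i=1}^N h_i(x_i))² dμ(x) ≤ N ‖h‖²_{L̃²}. -/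
open MeasureTheory Set

noncomputable section

lemma pi_prod_integral {ι : Type*} [Fintype ι] {α : Type*} [MeasurableSpace α]
    (μ : ι → Measure α) (hσ : ∀ i, SigmaFinite (μ i))
    (f : ι → α → ℝ) (hf : ∀ i, Integrable (f i) (μ i)) :
    Integrable (fun x : ι → α => ∏ i, f i (x i)) (Measure.pi μ) ∧
      ∫ x : ι → α, ∏ i, f i (x i) ∂(Measure.pi μ) = ∏ i, ∫ x, f i x ∂(μ i) :=
  ⟨by haveI := hσ; exact Integrable.fintype_prod_dep (E := fun _ => α) (μ := μ) hf,
   by haveI := hσ; exact integral_fintype_prod_eq_prod (E := fun _ => α) (μ := μ) f⟩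

/-- Comparison between the quotient `L²` norm of a family `(h_1,…,h_N)`
and the `L²(μ)` norm of `x ↦ Σ_i h_i(x_i)`:
`‖h‖²_{L̃²} ≤ ∫ (Σ_i h_i(x_i))² dμ ≤ N ‖h‖²_{L̃²}`. -/
theorem quotient_L2_norm_comparison
    (N d : ℕ) (hN : 2 ≤ N) (hd : 1 ≤ d)
    (X : Fin N → Set (EuclideanSpace ℝ (Fin d)))
    (hXne : ∀ i, (X i).Nonempty) (hXcpt : ∀ i, IsCompact (X i)) (hXcvx : ∀ i, Convex ℝ (X i))
    (μ : Fin N → Measure (EuclideanSpace ℝ (Fin d)))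
    (hμp : ∀ i, IsProbabilityMeasure (μ i)) (hμs : ∀ i, μ i (X i) = 1)
    (h : Fin N → EuclideanSpace ℝ (Fin d) → ℝ)
    (hmeas : ∀ i, Measurable (h i))
    (hL2 : ∀ i, ∫⁻ x, ENNReal.ofReal ((h i x) ^ 2) ∂(μ i) < ⊤) :
    sInf {r : ℝ | ∃ κ : Fin N → ℝ, (∑ i, κ i) = 0 ∧
        r = ∑ i, ∫ x, (h i x - κ i) ^ 2 ∂(μ i)} ≤
      ∫ x, (∑ i, h i (x i)) ^ 2 ∂(Measure.pi μ) ∧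
    ∫ x, (∑ i, h i (x i)) ^ 2 ∂(Measure.pi μ) ≤
      N * sInf {r : ℝ | ∃ κ : Fin N → ℝ, (∑ i, κ i) = 0 ∧
        r = ∑ i, ∫ x, (h i x - κ i) ^ 2 ∂(μ i)} := by
  have hsig : ∀ i, SigmaFinite (μ i) := fun i => by
    haveI := hμp i; infer_instance
  have hN0 : (N : ℝ) ≠ 0 := Nat.cast_ne_zero.mpr (by omega)
  have hNpos : (0 : ℝ) < N := by positivity
  have hN1 : (1 : ℝ) ≤ N := by exact_mod_cast Nat.one_le_of_lt hN
  -- square integrability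
  have hInt2 : ∀ i, Integrable (fun x => h i x ^ 2) (μ i) := by
    intro i
    refine ⟨((hmeas i).pow_const 2).aestronglyMeasurable, ?_⟩
    rw [hasFiniteIntegral_iff_ofReal (Filter.Eventually.of_forall fun x => sq_nonneg _)]
    exact hL2 i
  have hInt : ∀ i, Integrable (h i) (μ i) := by
    intro i
    haveI := hμp i
    refine Integrable.mono' ((hInt2 i).add (integrable_const 1))
      (hmeas i).aestronglyMeasurable ?_
    filter_upwards with x
    simp only [Pi.add_apply, Real.norm_eq_abs]
    nlinarith [sq_nonneg (|h i x| - 1), abs_nonneg (h i x), sq_abs (h i x)]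
  set m : Fin N → ℝ := fun i => ∫ x, h i x ∂(μ i) with hm
  set A : Fin N → ℝ := fun i => ∫ x, h i x ^ 2 ∂(μ i) with hA
  -- expansion of the shifted square integrals
  have hexp : ∀ i (κ : ℝ), ∫ x, (h i x - κ) ^ 2 ∂(μ i) = A i - 2 * κ * m i + κ ^ 2 := by
    intro i κ
    haveI := hμp i
    have heq : (fun x => (h i x - κ) ^ 2)
        = fun x => (h i x ^ 2 - 2 * κ * h i x) + κ ^ 2 := by
      funext x; ring
    have h1 : Integrable (fun x => h i x ^ 2 - 2 * κ * h i x) (μ i) :=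
      (hInt2 i).sub ((hInt i).const_mul _)
    have h2 : Integrable (fun x => 2 * κ * h i x) (μ i) := (hInt i).const_mul _
    rw [heq, integral_add h1 (integrable_const _), integral_sub (hInt2 i) h2,
      integral_const_mul, integral_const]
    simp only [probReal_univ, ENNReal.toReal_one, smul_eq_mul, one_mul, hm, hA]
  have hVnn : ∀ i, 0 ≤ A i - m i ^ 2 := by
    intro i
    have h0 : 0 ≤ ∫ x, (h i x - m i) ^ 2 ∂(μ i) :=
      integral_nonneg fun x => sq_nonneg _
    rw [hexp i (m i)] at h0
    nlinarith
  -- product integrals over the product measure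
  have hprod : ∀ i j : Fin N,
      Integrable (fun x : Fin N → EuclideanSpace ℝ (Fin d) => h i (x i) * h j (x j))
        (Measure.pi μ) ∧
      ∫ x, h i (x i) * h j (x j) ∂(Measure.pi μ)
        = (if i = j then A i else m i * m j) := by
    intro i j
    set f : Fin N → EuclideanSpace ℝ (Fin d) → ℝ :=
      fun k x => (if k = i then h i x else 1) * (if k = j then h j x else 1) with hf
    have hfi : ∀ k, Integrable (f k) (μ k) := by
      intro k
      haveI := hμp k
      by_cases hki : k = i <;> by_cases hkj : k = j
      · have hij : i = j := hki.symm.trans hkj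
        have hfk : f k = fun x => h i x * h i x := by
          funext x; simp [hf, hki, hkj, ← hij]
        rw [hfk, hki]
        simpa [pow_two] using hInt2 i
      · have hij : ¬ i = j := fun e => hkj (hki.trans e)
        have hfk : f k = h i := by funext x; simp [hf, hki, hkj, hij]
        rw [hfk, hki]; exact hInt i
      · have hij : ¬ j = i := fun e => hki (hkj.trans e)
        have hfk : f k = h j := by funext x; simp [hf, hki, hkj, hij]
        rw [hfk, hkj]; exact hInt j
      · have hfk : f k = fun _ => (1 : ℝ) := by funext x; simp [hf, hki, hkj]
        rw [hfk]; exact integrable_const 1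
    have hfeq : (fun x : Fin N → EuclideanSpace ℝ (Fin d) => h i (x i) * h j (x j))
        = fun x => ∏ k, f k (x k) := by
      funext x
      simp only [hf]
      rw [Finset.prod_mul_distrib]
      simp
    obtain ⟨hI, hE⟩ := pi_prod_integral μ hsig f hfi
    rw [hfeq]
    refine ⟨hI, ?_⟩
    rw [hE]
    have hval : ∀ k, ∫ x, f k x ∂(μ k)
        = (if k = i then (if k = j then A i else m i) else if k = j then m j else 1) := by
      intro k
      haveI := hμp k
      by_cases hki : k = i <;> by_cases hkj : k = j
      · have hij : i = j := hki.symm.trans hkj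
        have hfk : f k = fun x => h i x * h i x := by
          funext x; simp [hf, hki, hkj, ← hij]
        rw [hfk, hki, if_pos rfl, if_pos hij]
        simp only [hA, pow_two]
      · have hij : ¬ i = j := fun e => hkj (hki.trans e)
        have hfk : f k = h i := by funext x; simp [hf, hki, hkj, hij]
        rw [hfk, hki, if_pos rfl, if_neg hij, hm]
      · have hij : ¬ i = j := fun e => hki (hkj.trans e.symm)
        have hji : ¬ j = i := fun e => hij e.symm
        have hfk : f k = h j := by funext x; simp [hf, hki, hkj, hji]
        rw [hfk, hkj, if_neg hji, if_pos rfl, hm]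
      · have hfk : f k = fun _ => (1 : ℝ) := by funext x; simp [hf, hki, hkj]
        rw [hfk, if_neg hki, if_neg hkj]
        simp [measure_univ]
    rw [Finset.prod_congr rfl fun k _ => hval k]
    by_cases hij : i = j
    · subst hij
      have hcoll : ∀ k : Fin N,
          (if k = i then (if k = i then A i else m i) else if k = i then m i else 1)
            = (if k = i then A i else 1) := by
        intro k; by_cases hki : k = i <;> simp [hki]
      rw [Finset.prod_congr rfl fun k _ => hcoll k]
      simp
    · have hsplit : ∀ k : Fin N,
          (if k = i then (if k = j then A i else m i) else if k = j then m j else 1)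
            = (if k = i then m i else 1) * (if k = j then m j else 1) := by
        intro k
        have hji : ¬ j = i := fun e => hij e.symm
        by_cases hki : k = i <;> by_cases hkj : k = j
        · exact absurd (hki.symm.trans hkj) hij
        · simp [hki, hkj, hij, hji]
        · simp [hki, hkj, hij, hji]
        · simp [hki, hkj, hij, hji]
      rw [Finset.prod_congr rfl fun k _ => hsplit k, Finset.prod_mul_distrib]
      simp [hij]
  -- the value of the L²(μ) norm of the sum
  have hIeq : ∫ x, (∑ i, h i (x i)) ^ 2 ∂(Measure.pi μ)
      = (∑ i, m i) ^ 2 + ∑ i, (A i - m i ^ 2) := by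
    have hsq : (fun x : Fin N → EuclideanSpace ℝ (Fin d) => (∑ i, h i (x i)) ^ 2)
        = fun x => ∑ i, ∑ j, h i (x i) * h j (x j) := by
      funext x
      rw [sq, Finset.sum_mul_sum]
    rw [hsq, integral_finset_sum _ fun i _ =>
      integrable_finset_sum _ fun j _ => (hprod i j).1]
    have hinner : ∀ i : Fin N,
        ∫ x, ∑ j, h i (x i) * h j (x j) ∂(Measure.pi μ)
          = ∑ j, (if i = j then A i else m i * m j) := by
      intro i
      rw [integral_finset_sum _ fun j _ => (hprod i j).1]
      exact Finset.sum_congr rfl fun j _ => (hprod i j).2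
    rw [Finset.sum_congr rfl fun i _ => hinner i]
    rw [sq, Finset.sum_mul_sum, ← Finset.sum_add_distrib]
    refine Finset.sum_congr rfl fun i _ => ?_
    have hterm : ∀ j : Fin N, (if i = j then A i else m i * m j)
        = m i * m j + (if j = i then A i - m i ^ 2 else 0) := by
      intro j
      by_cases hij : i = j
      · subst hij; simp; ring
      · have hji : ¬ j = i := fun e => hij e.symm
        simp [hij, hji]
    rw [Finset.sum_congr rfl fun j _ => hterm j, Finset.sum_add_distrib,
      Finset.sum_ite_eq' Finset.univ i (fun _ => A i - m i ^ 2),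
      if_pos (Finset.mem_univ i)]
  set Mv : ℝ := ∑ i, m i with hMv
  set V : ℝ := ∑ i, (A i - m i ^ 2) with hV
  have hV0 : 0 ≤ V := Finset.sum_nonneg fun i _ => hVnn i
  set S : Set ℝ := {r : ℝ | ∃ κ : Fin N → ℝ, (∑ i, κ i) = 0 ∧
      r = ∑ i, ∫ x, (h i x - κ i) ^ 2 ∂(μ i)} with hS
  have hSne : S.Nonempty := ⟨_, fun _ => 0, by simp, rfl⟩
  have hSbdd : BddBelow S := by
    refine ⟨0, ?_⟩
    rintro r ⟨κ, -, rfl⟩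
    exact Finset.sum_nonneg fun i _ => integral_nonneg fun x => sq_nonneg _
  -- the near-optimal κ
  have hκsum : ∑ i, (m i - Mv / N) = 0 := by
    rw [Finset.sum_sub_distrib, Finset.sum_const, Finset.card_univ, Fintype.card_fin,
      nsmul_eq_mul, ← hMv]
    field_simp
    ring
  have hval0 : ∑ i, ∫ x, (h i x - (m i - Mv / N)) ^ 2 ∂(μ i) = V + Mv ^ 2 / N := by
    rw [Finset.sum_congr rfl fun i _ => hexp i _]
    have hterm : ∀ i : Fin N, A i - 2 * (m i - Mv / N) * m i + (m i - Mv / N) ^ 2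
        = (A i - m i ^ 2) + (Mv / N) ^ 2 := fun i => by ring
    rw [Finset.sum_congr rfl fun i _ => hterm i, Finset.sum_add_distrib, Finset.sum_const,
      Finset.card_univ, Fintype.card_fin, nsmul_eq_mul, ← hV]
    congr 1
    field_simp
  have hmem : (∑ i, ∫ x, (h i x - (m i - Mv / N)) ^ 2 ∂(μ i)) ∈ S :=
    ⟨fun i => m i - Mv / N, hκsum, rfl⟩
  -- lower bound for every element of S
  have hlow : ∀ r ∈ S, (Mv ^ 2 + V) / N ≤ r := by
    rintro r ⟨κ, hκ0, rfl⟩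
    rw [Finset.sum_congr rfl fun i _ => hexp i (κ i)]
    have hterm : ∀ i : Fin N, A i - 2 * κ i * m i + κ i ^ 2
        = (A i - m i ^ 2) + (m i - κ i) ^ 2 := fun i => by ring
    rw [Finset.sum_congr rfl fun i _ => hterm i, Finset.sum_add_distrib, ← hV]
    have hcs : (∑ i, (m i - κ i)) ^ 2 ≤ (N : ℝ) * ∑ i, (m i - κ i) ^ 2 := by
      have := sq_sum_le_card_mul_sum_sq (s := Finset.univ)
        (f := fun i : Fin N => m i - κ i)
      simpa using this
    have hsum : ∑ i, (m i - κ i) = Mv := by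
      rw [Finset.sum_sub_distrib, hκ0, sub_zero, ← hMv]
    rw [hsum] at hcs
    rw [div_le_iff₀ hNpos]
    nlinarith [hcs, hV0, hN1, Finset.sum_nonneg fun (i : Fin N) (_ : i ∈ Finset.univ)
      => sq_nonneg (m i - κ i)]
  constructor
  · calc sInf S ≤ ∑ i, ∫ x, (h i x - (m i - Mv / N)) ^ 2 ∂(μ i) := csInf_le hSbdd hmem
      _ = V + Mv ^ 2 / N := hval0
      _ ≤ Mv ^ 2 + V := by
          have := div_le_self (sq_nonneg Mv) hN1
          linarith
      _ = ∫ x, (∑ i, h i (x i)) ^ 2 ∂(Measure.pi μ) := by rw [hIeq]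
  · have hInf : (Mv ^ 2 + V) / N ≤ sInf S := le_csInf hSne hlow
    have := (div_le_iff₀ hNpos).mp hInf
    rw [hIeq]
    nlinarith [this]
end
end

section
/- Let c be of class C¹ on X, let each φ_j : X_j → ℝ be of class C¹, let γ_i and cost(γ) be as in the context, and set γ_{-i} := ⊗_{j≠i} γ_j. For i ∈ {1,…,N}, t ∈ [0,1] and x_i ∈ X_i define, with the convention y_i := x_i, G_i(φ,t)(x_i) := φ_i(x_i) + log ∫_{X_{-i}×X_{-i}} exp( Σ_{j≠i} φ_j((1−t)x_j + t y_j) − c((1−t)x + t y) ) dγ_{-i}(x_{-i},y_{-i}). Then for every i and every x_i ∈ X_i the map t ↦ G_i(φ,t)(x_i) is differentiable on [0,1], and there exists C > 0, depending only on N, ‖c‖_{C¹(X)} and Σ_{j=1}^N ‖φ_j‖_{C¹(X_j)}, such that |d/dt G_i(φ,t)(x_i)| ≤ C √(cost(γ)) for every t ∈ [0,1], every i and every x_i ∈ X_i. -/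
open MeasureTheory Set

noncomputable section

/-- `f` is of class `C^k` on `K`: it is the restriction to `K` of a `C^k` function. -/
def IsCkOn {F : Type*} [NormedAddCommGroup F] [NormedSpace ℝ F]
    (k : ℕ) (K : Set F) (f : F → ℝ) : Prop :=
  ∃ g : F → ℝ, ContDiff ℝ k g ∧ Set.EqOn f g K

/-- The `C^k` norm of `f` on `K`: the infimum over all `C^k` extensions `g` of `f`
of the maximum over `0 ≤ j ≤ k` of the sup-norm of the `j`-th derivative of `g`. -/
noncomputable def CkNormOn {F : Type*} [NormedAddCommGroup F] [NormedSpace ℝ F]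
    (k : ℕ) (K : Set F) (f : F → ℝ) : ℝ :=
  sInf {r : ℝ | 0 ≤ r ∧ ∃ g : F → ℝ, ContDiff ℝ k g ∧ Set.EqOn f g K ∧
    ∀ j ≤ k, ∀ x, ‖iteratedFDeriv ℝ j g x‖ ≤ r}

/-- The `L²` transport cost of a family of plans: `Σ_i ∫ ‖y_i − x_i‖² dγ_i`. -/
noncomputable def transportCost {N : ℕ} {F : Type*} [NormedAddCommGroup F] [MeasurableSpace F]
    (γ : Fin N → MeasureTheory.Measure (F × F)) : ℝ :=
  ∑ i, ∫ p, ‖p.2 - p.1‖ ^ 2 ∂(γ i)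

/-- The interpolation at time `t` of a transport plan: the pushforward of `γ`
under `(x, y) ↦ (1 − t) x + t y`. -/
noncomputable def interp {F : Type*} [NormedAddCommGroup F] [Module ℝ F] [MeasurableSpace F]
    (t : ℝ) (γ : MeasureTheory.Measure (F × F)) : MeasureTheory.Measure F :=
  γ.map (fun p => (1 - t) • p.1 + t • p.2)

/-- The map `G_i(φ,t)(x_i) = φ_i(x_i) + log ∫ exp(Σ_{j≠i} φ_j((1−t)x_j + t y_j)
− c((1−t)x + t y)) dγ_{-i}`, with the convention `y_i := x_i` (so that the `i`-th
coordinate of the argument of `c` is the fixed point `x_i`). Since the integrand does not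
depend on the `i`-th pair, integrating over the full product plan `Measure.pi γ` agrees
with integrating over `γ_{-i} = ⊗_{j≠i} γ_j`. -/
noncomputable def schrodingerG {N d : ℕ}
    (c : (Fin N → EuclideanSpace ℝ (Fin d)) → ℝ)
    (γ : Fin N → Measure (EuclideanSpace ℝ (Fin d) × EuclideanSpace ℝ (Fin d)))
    (φ : Fin N → EuclideanSpace ℝ (Fin d) → ℝ)
    (i : Fin N) (t : ℝ) (xi : EuclideanSpace ℝ (Fin d)) : ℝ :=
  φ i xi + Real.log (∫ z,
    Real.exp ((∑ j ∈ Finset.univ.erase i, φ j ((1 - t) • (z j).1 + t • (z j).2)) -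
      c (Function.update (fun j => (1 - t) • (z j).1 + t • (z j).2) i xi))
    ∂(Measure.pi γ))

lemma ckSet_nonempty {F : Type*} [NormedAddCommGroup F] [NormedSpace ℝ F]
    [FiniteDimensional ℝ F] {K : Set F} (hK : IsCompact K) {f : F → ℝ}
    (hf : ContDiff ℝ 1 f) :
    {r : ℝ | 0 ≤ r ∧ ∃ g : F → ℝ, ContDiff ℝ (1:ℕ) g ∧ Set.EqOn f g K ∧
      ∀ j ≤ (1:ℕ), ∀ x, ‖iteratedFDeriv ℝ j g x‖ ≤ r}.Nonempty := by
  obtain ⟨R, hR⟩ := hK.isBounded.subset_closedBall 0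
  have hRR : K ⊆ Metric.closedBall 0 (max R 1) :=
    hR.trans (Metric.closedBall_subset_closedBall (le_max_left _ _))
  set ρ : ContDiffBump (0 : F) :=
    { rIn := max R 1
      rOut := max R 1 + 1
      rIn_pos := lt_of_lt_of_le one_pos (le_max_right _ _)
      rIn_lt_rOut := lt_add_one _ }
  set g : F → ℝ := fun x => ρ x * f x with hg
  have hgc : ContDiff ℝ 1 g := (ρ.contDiff (n := 1)).mul hf
  have hsupp : HasCompactSupport g := ρ.hasCompactSupport.mul_right
  have heq : Set.EqOn f g K := by
    intro x hx
    simp [hg, ρ.one_of_mem_closedBall (hRR hx)]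
  have hb : ∀ j ≤ 1, ∃ C, ∀ x, ‖iteratedFDeriv ℝ j g x‖ ≤ C := by
    intro j hj
    exact ((hgc.continuous_iteratedFDeriv (by exact_mod_cast hj)).bounded_above_of_compact_support
      (hsupp.iteratedFDeriv j))
  obtain ⟨C0, hC0⟩ := hb 0 (by norm_num)
  obtain ⟨C1, hC1⟩ := hb 1 le_rfl
  refine ⟨max (max C0 C1) 0, le_max_right _ _, g, hgc, heq, ?_⟩
  intro j hj x
  interval_cases j
  · exact (hC0 x).trans ((le_max_left _ _).trans (le_max_left _ _))
  · exact (hC1 x).trans ((le_max_right _ _).trans (le_max_left _ _))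

lemma exists_extension_bound {F : Type*} [NormedAddCommGroup F] [NormedSpace ℝ F]
    [FiniteDimensional ℝ F] {K : Set F} (hK : IsCompact K) {f : F → ℝ}
    (hf : ContDiff ℝ 1 f) {M : ℝ} (hM : CkNormOn 1 K f ≤ M) :
    ∃ g : F → ℝ, ContDiff ℝ 1 g ∧ Set.EqOn f g K ∧
      (∀ x, |g x| ≤ M + 1) ∧ (∀ x v, |fderiv ℝ g x v| ≤ (M + 1) * ‖v‖) := by
  have hne := ckSet_nonempty hK hf
  have hbdd : BddBelow {r : ℝ | 0 ≤ r ∧ ∃ g : F → ℝ, ContDiff ℝ (1:ℕ) g ∧ Set.EqOn f g K ∧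
      ∀ j ≤ (1:ℕ), ∀ x, ‖iteratedFDeriv ℝ j g x‖ ≤ r} := ⟨0, fun r hr => hr.1⟩
  have hlt : CkNormOn 1 K f < M + 1 := lt_of_le_of_lt hM (lt_add_one M)
  rw [CkNormOn, csInf_lt_iff hbdd hne] at hlt
  obtain ⟨r, ⟨hr0, g, hgc, heq, hgb⟩, hrM⟩ := hlt
  refine ⟨g, hgc, heq, ?_, ?_⟩
  · intro x
    have h0 := hgb 0 (by norm_num) x
    rw [norm_iteratedFDeriv_zero, Real.norm_eq_abs] at h0
    exact h0.trans hrM.le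
  · intro x v
    have h1 := hgb 1 le_rfl x
    have h2 : fderiv ℝ g x v = iteratedFDeriv ℝ 1 g x (fun _ => v) := by
      rw [iteratedFDeriv_one_apply]
    rw [h2]
    calc |iteratedFDeriv ℝ 1 g x (fun _ => v)| = ‖iteratedFDeriv ℝ 1 g x (fun _ => v)‖ := rfl
      _ ≤ ‖iteratedFDeriv ℝ 1 g x‖ * ∏ _i : Fin 1, ‖v‖ :=
        (iteratedFDeriv ℝ 1 g x).le_opNorm _
      _ = ‖iteratedFDeriv ℝ 1 g x‖ * ‖v‖ := by simp
      _ ≤ (M + 1) * ‖v‖ := by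
        apply mul_le_mul_of_nonneg_right (h1.trans hrM.le) (norm_nonneg v)



lemma ae_pi_mem {N : ℕ} {α : Type*} [MeasurableSpace α] (T : Fin N → Set α)
    (hT : ∀ j, MeasurableSet (T j)) (γ : Fin N → Measure α)
    [∀ j, IsProbabilityMeasure (γ j)] (hγT : ∀ j, γ j (T j) = 1) :
    ∀ᵐ z ∂Measure.pi γ, ∀ j, z j ∈ T j := by
  have hA : MeasurableSet (univ.pi T) := MeasurableSet.univ_pi hT
  have h1 : Measure.pi γ (univ.pi T) = 1 := by rw [Measure.pi_pi]; simp [hγT]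
  haveI : IsProbabilityMeasure (Measure.pi γ) := by infer_instance
  have h2 : Measure.pi γ (univ.pi T)ᶜ = 0 := (prob_compl_eq_zero_iff hA).2 h1
  have hset : {z : Fin N → α | ¬ ∀ j, z j ∈ T j} = (univ.pi T)ᶜ := by
    ext z; simp [Set.mem_pi]
  rw [ae_iff, hset]; exact h2

lemma pi_map_eval {ι : Type*} [Fintype ι] {α : ι → Type*} [∀ i, MeasurableSpace (α i)]
    (μ : ∀ i, Measure (α i)) [∀ i, IsProbabilityMeasure (μ i)] (j : ι) :
    (Measure.pi μ).map (Function.eval j) = μ j := by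
  classical
  ext s hs
  rw [Measure.map_apply (measurable_pi_apply j) hs, Set.eval_preimage, Measure.pi_pi]
  rw [Finset.prod_eq_single j]
  · simp
  · intro k _ hk
    simp [Function.update_of_ne hk]
  · simp

lemma integral_le_sqrt_integral_sq {α : Type*} [MeasurableSpace α] {μ : Measure α}
    [IsProbabilityMeasure μ] {f : α → ℝ} (hpos : ∀ a, 0 ≤ f a)
    (hf : Integrable f μ) (hf2 : Integrable (fun a => f a ^ 2) μ) :
    ∫ a, f a ∂μ ≤ Real.sqrt (∫ a, f a ^ 2 ∂μ) := by
  set m := ∫ a, f a ∂μ with hm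
  have hm0 : 0 ≤ m := integral_nonneg hpos
  have key : m ^ 2 ≤ ∫ a, f a ^ 2 ∂μ := by
    have h0 : 0 ≤ ∫ a, (f a - m) ^ 2 ∂μ := integral_nonneg fun a => sq_nonneg _
    have he : ∀ a, (f a - m) ^ 2 = f a ^ 2 - (2 * m) * f a + m ^ 2 := fun a => by ring
    rw [show (fun a => (f a - m) ^ 2) = fun a => f a ^ 2 - (2 * m) * f a + m ^ 2 from
      funext he] at h0
    have hsub : Integrable (fun a => f a ^ 2 - 2 * m * f a) μ := hf2.sub (hf.const_mul (2 * m))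
    rw [show (fun a => f a ^ 2 - 2 * m * f a + m ^ 2) =
        (fun a => (f a ^ 2 - 2 * m * f a) + m ^ 2) from rfl,
      integral_add hsub (integrable_const _),
      integral_sub hf2 (hf.const_mul (2 * m)), MeasureTheory.integral_const_mul, integral_const,
      probReal_univ] at h0
    simp only [ENNReal.toReal_one, one_smul, ← hm] at h0
    nlinarith
  exact (Real.le_sqrt hm0 ((sq_nonneg m).trans key)).2 key

section Core

variable {N d : ℕ}

local notation "E" => EuclideanSpace ℝ (Fin d)

lemma core (X : Fin N → Set E) (hXcpt : ∀ j, IsCompact (X j))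
    (g : (Fin N → E) → ℝ) (ψ : Fin N → E → ℝ) (K1 : ℝ) (hK1 : 1 ≤ K1)
    (hgc : ContDiff ℝ 1 g) (hgb : ∀ x, |g x| ≤ K1)
    (hgd : ∀ x v, |fderiv ℝ g x v| ≤ K1 * ‖v‖)
    (hψc : ∀ j, ContDiff ℝ 1 (ψ j)) (hψb : ∀ j x, |ψ j x| ≤ K1)
    (hψd : ∀ j x v, |fderiv ℝ (ψ j) x v| ≤ K1 * ‖v‖)
    (γ : Fin N → Measure (E × E)) (hγ : ∀ j, IsProbabilityMeasure (γ j))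
    (hγX : ∀ j, γ j (X j ×ˢ X j) = 1) (i : Fin N) (xi : E) :
    ∀ t : ℝ, ∃ D : ℝ, HasDerivAt (fun s => schrodingerG g γ ψ i s xi) D t ∧
      |D| ≤ 2 * K1 * N * Real.exp (2 * (((N : ℝ) + 1) * K1)) * Real.sqrt (transportCost γ) := by
  haveI : ∀ j, IsProbabilityMeasure (γ j) := hγ
  set B : ℝ := ((N : ℝ) + 1) * K1 with hB
  have hK0 : (0 : ℝ) < K1 := lt_of_lt_of_le one_pos hK1
  set π : Measure (Fin N → E × E) := Measure.pi γ with hπ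
  haveI : IsProbabilityMeasure π := by rw [hπ]; infer_instance
  haveI : OpensMeasurableSpace (Fin N → E × E) := Pi.opensMeasurableSpace
  haveI : BorelSpace (Fin N → E × E) := Pi.borelSpace
  -- the interpolation point and updated point
  set p : ℝ → E × E → E := fun t q => (1 - t) • q.1 + t • q.2 with hp
  set u : ℝ → (Fin N → E × E) → (Fin N → E) :=
    fun t z => Function.update (fun j => p t (z j)) i xi with hu
  set S : ℝ → (Fin N → E × E) → ℝ :=
    fun t z => (∑ j ∈ Finset.univ.erase i, ψ j (p t (z j))) - g (u t z) with hS
  set v : (Fin N → E × E) → (Fin N → E) :=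
    fun z => Function.update (fun j => (z j).2 - (z j).1) i 0 with hv
  set dS : ℝ → (Fin N → E × E) → ℝ := fun t z =>
    (∑ j ∈ Finset.univ.erase i, fderiv ℝ (ψ j) (p t (z j)) ((z j).2 - (z j).1)) -
      fderiv ℝ g (u t z) (v z) with hdS
  set Dj : Fin N → (Fin N → E × E) → ℝ := fun j z => ‖(z j).2 - (z j).1‖ with hDj
  -- bound on |S|
  have hSb : ∀ t z, |S t z| ≤ B := by
    intro t z
    have h1 : |∑ j ∈ Finset.univ.erase i, ψ j (p t (z j))| ≤ (N : ℝ) * K1 := by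
      refine (Finset.abs_sum_le_sum_abs _ _).trans ?_
      have : ∀ j ∈ Finset.univ.erase i, |ψ j (p t (z j))| ≤ K1 := fun j _ => hψb j _
      refine (Finset.sum_le_sum this).trans ?_
      rw [Finset.sum_const, nsmul_eq_mul]
      have : ((Finset.univ.erase i).card : ℝ) ≤ (N : ℝ) := by
        have := Finset.card_erase_le (s := (Finset.univ : Finset (Fin N))) (a := i)
        have h2 : (Finset.univ : Finset (Fin N)).card = N := Finset.card_univ.trans (Fintype.card_fin N)
        exact_mod_cast this.trans h2.le
      exact mul_le_mul_of_nonneg_right this hK0.le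
    have h2 := hgb (u t z)
    calc |S t z| ≤ |∑ j ∈ Finset.univ.erase i, ψ j (p t (z j))| + |g (u t z)| := abs_sub _ _
      _ ≤ (N : ℝ) * K1 + K1 := add_le_add h1 h2
      _ = B := by rw [hB]; ring
  -- derivative of S in t
  have hline : ∀ (a b : E) (t : ℝ), HasDerivAt (fun s : ℝ => (1 - s) • a + s • b) (b - a) t := by
    intro a b t
    have h1 : HasDerivAt (fun s : ℝ => s • b) b t := by
      simpa using (hasDerivAt_id t).smul_const b
    have h2 : HasDerivAt (fun s : ℝ => (1 - s) • a) (-a) t := by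
      simpa using ((hasDerivAt_id t).const_sub 1).smul_const a
    rw [sub_eq_neg_add]
    exact h2.add h1
  have hu' : ∀ z (t : ℝ), HasDerivAt (fun s => u s z) (v z) t := by
    intro z t
    rw [hasDerivAt_pi]
    intro k
    by_cases hk : k = i
    · subst hk
      have h1 : (fun s : ℝ => u s z k) = fun _ => xi := by
        funext s; simp [hu, Function.update_self]
      have h2 : v z k = 0 := by simp [hv, Function.update_self]
      rw [h1, h2]; exact hasDerivAt_const _ _
    · have h1 : (fun s : ℝ => u s z k) = fun s => (1 - s) • (z k).1 + s • (z k).2 := by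
        funext s; simp [hu, Function.update_of_ne hk, hp]
      have h2 : v z k = (z k).2 - (z k).1 := by simp [hv, Function.update_of_ne hk]
      rw [h1, h2]; exact hline _ _ _
  have hS' : ∀ z (t : ℝ), HasDerivAt (fun s => S s z) (dS t z) t := by
    intro z t
    refine HasDerivAt.sub ?_ ?_
    · refine HasDerivAt.fun_sum fun j _ => ?_
      exact ((hψc j).differentiable one_ne_zero (p t (z j))).hasFDerivAt.comp_hasDerivAt t
        (hline (z j).1 (z j).2 t)
    · exact ((hgc.differentiable one_ne_zero (u t z)).hasFDerivAt).comp_hasDerivAt t (hu' z t)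
  -- bound on dS
  have hsum_nonneg : ∀ z, (0 : ℝ) ≤ ∑ j, Dj j z := fun z =>
    Finset.sum_nonneg fun j _ => norm_nonneg _
  have hvb : ∀ z, ‖v z‖ ≤ ∑ j, Dj j z := by
    intro z
    rw [pi_norm_le_iff_of_nonneg (hsum_nonneg z)]
    intro k
    by_cases hk : k = i
    · subst hk; simp [hv, Function.update_self, hsum_nonneg z]
    · rw [hv]
      simp only [Function.update_of_ne hk]
      exact Finset.single_le_sum (f := fun j => Dj j z)
        (fun j _ => norm_nonneg _) (Finset.mem_univ k)
  have hdSb : ∀ t z, |dS t z| ≤ 2 * K1 * ∑ j, Dj j z := by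
    intro t z
    have h1 : |∑ j ∈ Finset.univ.erase i, fderiv ℝ (ψ j) (p t (z j)) ((z j).2 - (z j).1)| ≤
        K1 * ∑ j, Dj j z := by
      refine (Finset.abs_sum_le_sum_abs _ _).trans ?_
      calc ∑ j ∈ Finset.univ.erase i, |fderiv ℝ (ψ j) (p t (z j)) ((z j).2 - (z j).1)|
          ≤ ∑ j ∈ Finset.univ.erase i, K1 * Dj j z :=
            Finset.sum_le_sum fun j _ => hψd j _ _
        _ ≤ ∑ j, K1 * Dj j z := Finset.sum_le_sum_of_subset_of_nonneg
            (Finset.erase_subset _ _) fun j _ _ => mul_nonneg hK0.le (norm_nonneg _)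
        _ = K1 * ∑ j, Dj j z := by rw [Finset.mul_sum]
    have h2 : |fderiv ℝ g (u t z) (v z)| ≤ K1 * ∑ j, Dj j z :=
      (hgd _ _).trans (mul_le_mul_of_nonneg_left (hvb z) hK0.le)
    calc |dS t z| ≤ |∑ j ∈ Finset.univ.erase i, fderiv ℝ (ψ j) (p t (z j)) ((z j).2 - (z j).1)| +
          |fderiv ℝ g (u t z) (v z)| := abs_sub _ _
      _ ≤ K1 * ∑ j, Dj j z + K1 * ∑ j, Dj j z := add_le_add h1 h2
      _ = 2 * K1 * ∑ j, Dj j z := by ring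
  -- continuity
  have hzcont : ∀ (j : Fin N) (t : ℝ), Continuous (fun z : (Fin N → E × E) => p t (z j)) := by
    intro j t
    have h := (continuous_apply j : Continuous fun z : Fin N → E × E => z j)
    exact ((continuous_const (y := (1 - t : ℝ))).smul (continuous_fst.comp h)).add
      ((continuous_const (y := t)).smul (continuous_snd.comp h))
  have hucont : ∀ t : ℝ, Continuous (u t) := by
    intro t
    refine continuous_pi fun k => ?_
    by_cases hk : k = i
    · subst hk
      have : (fun z : Fin N → E × E => u t z k) = fun _ => xi := by
        funext z; simp [hu, Function.update_self]
      rw [this]; exact continuous_const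
    · have : (fun z : Fin N → E × E => u t z k) = fun z => p t (z k) := by
        funext z; simp [hu, Function.update_of_ne hk]
      rw [this]; exact hzcont k t
  have hvcont : Continuous v := by
    refine continuous_pi fun k => ?_
    by_cases hk : k = i
    · subst hk
      have : (fun z : Fin N → E × E => v z k) = fun _ => 0 := by
        funext z; simp [hv, Function.update_self]
      rw [this]; exact continuous_const
    · have : (fun z : Fin N → E × E => v z k) = fun z => (z k).2 - (z k).1 := by
        funext z; simp [hv, Function.update_of_ne hk]
      rw [this]
      exact (continuous_snd.comp (continuous_apply k)).sub (continuous_fst.comp (continuous_apply k))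
  have hScont : ∀ t : ℝ, Continuous (fun z => S t z) := by
    intro t
    exact (continuous_finset_sum _ fun j _ => (hψc j).continuous.comp (hzcont j t)).sub
      (hgc.continuous.comp (hucont t))
  have hdScont : ∀ t : ℝ, Continuous (fun z => dS t z) := by
    intro t
    refine Continuous.sub (continuous_finset_sum _ fun j _ => ?_) ?_
    · exact Continuous.clm_apply (((hψc j).continuous_fderiv one_ne_zero).comp (hzcont j t))
        ((continuous_snd.comp (continuous_apply j)).sub (continuous_fst.comp (continuous_apply j)))
    · exact Continuous.clm_apply ((hgc.continuous_fderiv one_ne_zero).comp (hucont t)) hvcont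
  -- integrability of exp (S t ·) and positivity of the integral
  have hSint : ∀ t : ℝ, Integrable (fun z => Real.exp (S t z)) π := by
    intro t
    refine Integrable.mono' (integrable_const (Real.exp B))
      ((Real.continuous_exp.comp (hScont t)).aestronglyMeasurable) ?_
    filter_upwards with z
    rw [Real.norm_eq_abs, abs_of_pos (Real.exp_pos _)]
    exact Real.exp_le_exp.2 ((le_abs_self _).trans (hSb t z))
  have hhpos : ∀ t : ℝ, Real.exp (-B) ≤ ∫ z, Real.exp (S t z) ∂π := by
    intro t
    have h := integral_mono (integrable_const (Real.exp (-B))) (hSint t)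
      (fun z => Real.exp_le_exp.2 ((neg_le_of_abs_le (hSb t z))))
    simpa using h
  -- the sets X j are bounded
  have hRj : ∀ j, ∃ r, X j ⊆ Metric.closedBall 0 r := fun j => (hXcpt j).isBounded.subset_closedBall 0
  choose Rf hRf using hRj
  set R : ℝ := ∑ j, |Rf j| with hR
  have hXR : ∀ j, X j ⊆ Metric.closedBall 0 R := by
    intro j
    refine (hRf j).trans (Metric.closedBall_subset_closedBall ((le_abs_self _).trans ?_))
    exact Finset.single_le_sum (f := fun k => |Rf k|) (fun k _ => abs_nonneg _) (Finset.mem_univ j)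
  have hXm : ∀ j, MeasurableSet (X j ×ˢ X j) := fun j =>
    ((hXcpt j).isClosed.measurableSet).prod ((hXcpt j).isClosed.measurableSet)
  have hDbound : ∀ (j : Fin N) (q : E × E), q ∈ X j ×ˢ X j → ‖q.2 - q.1‖ ≤ 2 * R := by
    intro j q hq
    have h1 : ‖q.1‖ ≤ R := mem_closedBall_zero_iff.1 (hXR j hq.1)
    have h2 : ‖q.2‖ ≤ R := mem_closedBall_zero_iff.1 (hXR j hq.2)
    calc ‖q.2 - q.1‖ ≤ ‖q.2‖ + ‖q.1‖ := norm_sub_le _ _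
      _ ≤ 2 * R := by linarith
  have haeπ : ∀ᵐ z ∂π, ∀ j, z j ∈ X j ×ˢ X j := by
    have hA : MeasurableSet (univ.pi fun j => X j ×ˢ X j) := MeasurableSet.univ_pi fun j => hXm j
    have h1 : π (univ.pi fun j => X j ×ˢ X j) = 1 := by
      rw [hπ, Measure.pi_pi]; simp [hγX]
    have h2 : π (univ.pi fun j => X j ×ˢ X j)ᶜ = 0 := (prob_compl_eq_zero_iff hA).2 h1
    have hset : {z : Fin N → E × E | ¬ ∀ j, z j ∈ X j ×ˢ X j} =
        (univ.pi fun j => X j ×ˢ X j)ᶜ := by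
      ext z; simp [Set.mem_pi]
    rw [ae_iff, hset]; exact h2
  have hDjcont : ∀ j, Continuous (Dj j) :=
    fun j => ((continuous_snd.comp (continuous_apply j)).sub
      (continuous_fst.comp (continuous_apply j))).norm
  have hDjint : ∀ j, Integrable (Dj j) π := by
    intro j
    refine Integrable.mono' (integrable_const (2 * R)) (hDjcont j).aestronglyMeasurable ?_
    filter_upwards [haeπ] with z hz
    rw [Real.norm_eq_abs, abs_of_nonneg (norm_nonneg _)]
    exact hDbound j (z j) (hz j)
  have hsumDint : Integrable (fun z => ∑ j, Dj j z) π :=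
    integrable_finset_sum _ fun j _ => hDjint j
  -- a.e. membership for each γ j and integrability of the distances
  have haeγ : ∀ j, ∀ᵐ q ∂(γ j), q ∈ X j ×ˢ X j := by
    intro j
    have h2 : γ j (X j ×ˢ X j)ᶜ = 0 := (prob_compl_eq_zero_iff (hXm j)).2 (hγX j)
    rw [ae_iff]; exact h2
  have hfcont : Continuous (fun q : E × E => ‖q.2 - q.1‖) := (continuous_snd.sub continuous_fst).norm
  have hfint : ∀ j, Integrable (fun q : E × E => ‖q.2 - q.1‖) (γ j) := by
    intro j
    refine Integrable.mono' (integrable_const (2 * R)) hfcont.aestronglyMeasurable ?_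
    filter_upwards [haeγ j] with q hq
    rw [Real.norm_eq_abs, abs_of_nonneg (norm_nonneg _)]
    exact hDbound j q hq
  have hf2int : ∀ j, Integrable (fun q : E × E => ‖q.2 - q.1‖ ^ 2) (γ j) := by
    intro j
    refine Integrable.mono' (integrable_const ((2 * R) ^ 2)) (hfcont.pow 2).aestronglyMeasurable ?_
    filter_upwards [haeγ j] with q hq
    rw [Real.norm_eq_abs, abs_of_nonneg (sq_nonneg _)]
    exact pow_le_pow_left₀ (norm_nonneg _) (hDbound j q hq) 2
  have hcost0 : ∀ j, 0 ≤ ∫ q, ‖q.2 - q.1‖ ^ 2 ∂(γ j) :=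
    fun j => integral_nonneg fun q => sq_nonneg _
  have hCS : ∀ j, ∫ q, ‖q.2 - q.1‖ ∂(γ j) ≤ Real.sqrt (transportCost γ) := by
    intro j
    refine (integral_le_sqrt_integral_sq (fun q => norm_nonneg _) (hfint j) (hf2int j)).trans ?_
    refine Real.sqrt_le_sqrt ?_
    exact Finset.single_le_sum (f := fun k => ∫ q, ‖q.2 - q.1‖ ^ 2 ∂(γ k))
      (fun k _ => hcost0 k) (Finset.mem_univ j)
  have hsqrt0 : 0 ≤ Real.sqrt (transportCost γ) := Real.sqrt_nonneg _
  -- marginal identity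
  have hmarg : ∀ j, ∫ z, Dj j z ∂π = ∫ q, ‖q.2 - q.1‖ ∂(γ j) := by
    intro j
    rw [hπ, ← pi_map_eval γ j,
      integral_map (measurable_pi_apply j).aemeasurable hfcont.aestronglyMeasurable]
  have hDjI : ∀ j, ∫ z, Dj j z ∂π ≤ Real.sqrt (transportCost γ) := by
    intro j; rw [hmarg j]; exact hCS j
  -- differentiation under the integral sign
  intro t₀
  have key := hasDerivAt_integral_of_dominated_loc_of_deriv_le (μ := π)
    (F := fun t z => Real.exp (S t z)) (F' := fun t z => Real.exp (S t z) * dS t z)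
    (x₀ := t₀) (bound := fun z => 2 * K1 * Real.exp B * ∑ j, Dj j z)
    (Metric.ball_mem_nhds t₀ one_pos)
    (Filter.Eventually.of_forall fun t => (Real.continuous_exp.comp (hScont t)).aestronglyMeasurable)
    (hSint t₀)
    ((Real.continuous_exp.comp (hScont t₀)).mul (hdScont t₀)).aestronglyMeasurable
    (Filter.Eventually.of_forall fun z t _ => by
      rw [Real.norm_eq_abs, abs_mul, abs_of_pos (Real.exp_pos _)]
      calc Real.exp (S t z) * |dS t z| ≤ Real.exp B * (2 * K1 * ∑ j, Dj j z) := by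
            refine mul_le_mul (Real.exp_le_exp.2 ((le_abs_self _).trans (hSb t z)))
              (hdSb t z) (abs_nonneg _) (Real.exp_pos B).le
        _ = 2 * K1 * Real.exp B * ∑ j, Dj j z := by ring)
    (hsumDint.const_mul _)
    (Filter.Eventually.of_forall fun z t _ => (hS' z t).exp)
  obtain ⟨-, hderiv⟩ := key
  set h0 : ℝ := ∫ z, Real.exp (S t₀ z) ∂π with hh0
  have hh0pos : 0 < h0 := lt_of_lt_of_le (Real.exp_pos _) (hhpos t₀)
  have hlog := hderiv.log hh0pos.ne'
  have hfinal := hlog.const_add (ψ i xi)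
  have hGeq : (fun s : ℝ => schrodingerG g γ ψ i s xi) =
      fun s => ψ i xi + Real.log (∫ z, Real.exp (S s z) ∂π) := by
    funext s
    simp only [schrodingerG, hS, hu, hp, hπ]
  refine ⟨(∫ z, Real.exp (S t₀ z) * dS t₀ z ∂π) / h0, by rw [hGeq]; exact hfinal, ?_⟩
  -- bound the derivative
  have hIb : |∫ z, Real.exp (S t₀ z) * dS t₀ z ∂π| ≤
      2 * K1 * Real.exp B * ((N : ℝ) * Real.sqrt (transportCost γ)) := by
    have h1 : ‖∫ z, Real.exp (S t₀ z) * dS t₀ z ∂π‖ ≤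
        ∫ z, 2 * K1 * Real.exp B * ∑ j, Dj j z ∂π := by
      refine norm_integral_le_of_norm_le (hsumDint.const_mul _)
        (Filter.Eventually.of_forall fun z => ?_)
      rw [Real.norm_eq_abs, abs_mul, abs_of_pos (Real.exp_pos _)]
      calc Real.exp (S t₀ z) * |dS t₀ z| ≤ Real.exp B * (2 * K1 * ∑ j, Dj j z) := by
            refine mul_le_mul (Real.exp_le_exp.2 ((le_abs_self _).trans (hSb t₀ z)))
              (hdSb t₀ z) (abs_nonneg _) (Real.exp_pos B).le
        _ = 2 * K1 * Real.exp B * ∑ j, Dj j z := by ring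
    rw [Real.norm_eq_abs] at h1
    refine h1.trans ?_
    rw [MeasureTheory.integral_const_mul, integral_finset_sum _ fun j _ => hDjint j]
    refine mul_le_mul_of_nonneg_left ?_ (by positivity)
    calc (∑ j, ∫ z, Dj j z ∂π) ≤ ∑ _j : Fin N, Real.sqrt (transportCost γ) :=
          Finset.sum_le_sum fun j _ => hDjI j
      _ = (N : ℝ) * Real.sqrt (transportCost γ) := by
          rw [Finset.sum_const, nsmul_eq_mul, Finset.card_univ, Fintype.card_fin]
  rw [abs_div, abs_of_pos hh0pos, div_le_iff₀ hh0pos]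
  have hexp : Real.exp (2 * B) * Real.exp (-B) = Real.exp B := by
    rw [← Real.exp_add]; ring_nf
  calc |∫ z, Real.exp (S t₀ z) * dS t₀ z ∂π|
      ≤ 2 * K1 * Real.exp B * ((N : ℝ) * Real.sqrt (transportCost γ)) := hIb
    _ = (2 * K1 * (N : ℝ) * Real.exp (2 * B) * Real.sqrt (transportCost γ)) * Real.exp (-B) := by
        rw [← hexp]; ring
    _ ≤ (2 * K1 * (N : ℝ) * Real.exp (2 * B) * Real.sqrt (transportCost γ)) * h0 := by
        refine mul_le_mul_of_nonneg_left (hhpos t₀) (by positivity)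

end Core


theorem schrodingerG_time_derivative_bound
    (N d : ℕ) (hN : 2 ≤ N) (hd : 1 ≤ d)
    (X : Fin N → Set (EuclideanSpace ℝ (Fin d)))
    (hXne : ∀ i, (X i).Nonempty) (hXcpt : ∀ i, IsCompact (X i)) (hXcvx : ∀ i, Convex ℝ (X i))
    (M : ℝ) :
    ∃ C > (0 : ℝ), ∀ c : (Fin N → EuclideanSpace ℝ (Fin d)) → ℝ,
      ContDiff ℝ 1 c → CkNormOn 1 (Set.univ.pi X) c ≤ M →
      ∀ φ : Fin N → EuclideanSpace ℝ (Fin d) → ℝ,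
        (∀ j, ContDiff ℝ 1 (φ j)) → (∑ j, CkNormOn 1 (X j) (φ j)) ≤ M →
      ∀ μ0 μ1 : Fin N → Measure (EuclideanSpace ℝ (Fin d)),
        (∀ i, IsProbabilityMeasure (μ0 i)) → (∀ i, μ0 i (X i) = 1) →
        (∀ i, IsProbabilityMeasure (μ1 i)) → (∀ i, μ1 i (X i) = 1) →
      ∀ γ : Fin N → Measure (EuclideanSpace ℝ (Fin d) × EuclideanSpace ℝ (Fin d)),
        (∀ i, IsProbabilityMeasure (γ i)) →
        (∀ i, (γ i).map Prod.fst = μ0 i) → (∀ i, (γ i).map Prod.snd = μ1 i) →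
      ∀ i : Fin N, ∀ xi ∈ X i,
        DifferentiableOn ℝ (fun t => schrodingerG c γ φ i t xi) (Set.Icc (0 : ℝ) 1) ∧
        ∀ t ∈ Set.Icc (0 : ℝ) 1,
          |derivWithin (fun t => schrodingerG c γ φ i t xi) (Set.Icc (0 : ℝ) 1) t| ≤
            C * Real.sqrt (transportCost γ) := by
  set K1 : ℝ := max M 0 + 1 with hK1def
  have hK1 : (1 : ℝ) ≤ K1 := by
    have : (0:ℝ) ≤ max M 0 := le_max_right _ _
    linarith
  set Cst : ℝ := 2 * K1 * N * Real.exp (2 * (((N : ℝ) + 1) * K1)) with hCst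
  have hCst0 : 0 ≤ Cst := by positivity
  refine ⟨Cst + 1, by linarith, ?_⟩
  intro c hc hcM φ hφ hφM μ0 μ1 hμ0p hμ0X hμ1p hμ1X γ hγp hγ0 hγ1 i xi hxi
  haveI : ∀ j, IsProbabilityMeasure (γ j) := hγp
  haveI : ∀ j, IsProbabilityMeasure (μ0 j) := hμ0p
  -- extensions with global bounds
  obtain ⟨g, hgc, hgeq, hgb, hgd⟩ :=
    exists_extension_bound (isCompact_univ_pi fun j => hXcpt j) hc
      (hcM.trans (le_max_left M 0))
  have hφj : ∀ j, CkNormOn 1 (X j) (φ j) ≤ max M 0 := by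
    intro j
    exact (Finset.single_le_sum (f := fun k => CkNormOn 1 (X k) (φ k))
      (fun k _ => Real.sInf_nonneg fun r hr => hr.1) (Finset.mem_univ j)).trans
      (hφM.trans (le_max_left M 0))
  have hext := fun j => exists_extension_bound (hXcpt j) (hφ j) (hφj j)
  choose ψ hψc hψeq hψb hψd using hext
  -- the plans give full mass to X j × X j
  have hXmj : ∀ j, MeasurableSet (X j) := fun j => (hXcpt j).isClosed.measurableSet
  have hγX : ∀ j, γ j (X j ×ˢ X j) = 1 := by
    intro j
    have h1 : γ j (Prod.fst ⁻¹' X j) = 1 := by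
      rw [← Measure.map_apply measurable_fst (hXmj j), hγ0 j]; exact hμ0X j
    have h2 : γ j (Prod.snd ⁻¹' X j) = 1 := by
      rw [← Measure.map_apply measurable_snd (hXmj j), hγ1 j]; exact hμ1X j
    have hc1 : γ j (Prod.fst ⁻¹' X j)ᶜ = 0 :=
      (prob_compl_eq_zero_iff ((hXmj j).preimage measurable_fst)).2 h1
    have hc2 : γ j (Prod.snd ⁻¹' X j)ᶜ = 0 :=
      (prob_compl_eq_zero_iff ((hXmj j).preimage measurable_snd)).2 h2
    have hprod : X j ×ˢ X j = Prod.fst ⁻¹' X j ∩ Prod.snd ⁻¹' X j := Set.prod_eq _ _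
    rw [hprod, ← prob_compl_eq_zero_iff
      (((hXmj j).preimage measurable_fst).inter ((hXmj j).preimage measurable_snd)),
      Set.compl_inter]
    exact measure_union_null hc1 hc2
  -- the two `schrodingerG`s agree on `[0,1]`
  have hae : ∀ᵐ z ∂(Measure.pi γ), ∀ j, z j ∈ X j ×ˢ X j :=
    ae_pi_mem _ (fun j => ((hXmj j).prod (hXmj j))) γ hγX
  have hEq : Set.EqOn (fun t => schrodingerG c γ φ i t xi)
      (fun t => schrodingerG g γ ψ i t xi) (Set.Icc (0:ℝ) 1) := by
    intro t ht
    have hmem : ∀ (j : Fin N) (q : EuclideanSpace ℝ (Fin d) × EuclideanSpace ℝ (Fin d)),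
        q ∈ X j ×ˢ X j → (1 - t) • q.1 + t • q.2 ∈ X j := by
      intro j q hq
      exact hXcvx j hq.1 hq.2 (by linarith [ht.2]) ht.1 (by ring)
    have hint : (∫ z, Real.exp ((∑ j ∈ Finset.univ.erase i,
          φ j ((1 - t) • (z j).1 + t • (z j).2)) -
          c (Function.update (fun j => (1 - t) • (z j).1 + t • (z j).2) i xi)) ∂(Measure.pi γ)) =
        ∫ z, Real.exp ((∑ j ∈ Finset.univ.erase i,
          ψ j ((1 - t) • (z j).1 + t • (z j).2)) -
          g (Function.update (fun j => (1 - t) • (z j).1 + t • (z j).2) i xi)) ∂(Measure.pi γ) := by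
      refine integral_congr_ae ?_
      filter_upwards [hae] with z hz
      have hsum : (∑ j ∈ Finset.univ.erase i, φ j ((1 - t) • (z j).1 + t • (z j).2)) =
          ∑ j ∈ Finset.univ.erase i, ψ j ((1 - t) • (z j).1 + t • (z j).2) :=
        Finset.sum_congr rfl fun j _ => hψeq j (hmem j (z j) (hz j))
      have hcg : c (Function.update (fun j => (1 - t) • (z j).1 + t • (z j).2) i xi) =
          g (Function.update (fun j => (1 - t) • (z j).1 + t • (z j).2) i xi) := by
        refine hgeq ?_
        rw [Set.mem_univ_pi]
        intro k
        by_cases hk : k = i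
        · subst hk; rw [Function.update_self]; exact hxi
        · rw [Function.update_of_ne hk]; exact hmem k (z k) (hz k)
      rw [hsum, hcg]
    simp only [schrodingerG, hψeq i hxi, hint]
  -- conclude from the core lemma
  have hcore := core X hXcpt g ψ K1 hK1 hgc hgb hgd hψc hψb hψd γ hγp hγX i xi
  constructor
  · intro t ht
    obtain ⟨D, hD, -⟩ := hcore t
    exact (hD.differentiableAt.differentiableWithinAt).congr
      (fun s hs => hEq hs) (hEq ht)
  · intro t ht
    obtain ⟨D, hD, hDb⟩ := hcore t
    have h1 : derivWithin (fun t => schrodingerG c γ φ i t xi) (Set.Icc (0:ℝ) 1) t =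
        derivWithin (fun t => schrodingerG g γ ψ i t xi) (Set.Icc (0:ℝ) 1) t :=
      derivWithin_congr (fun s hs => hEq hs) (hEq ht)
    have h2 : derivWithin (fun t => schrodingerG g γ ψ i t xi) (Set.Icc (0:ℝ) 1) t = D :=
      (hD.hasDerivWithinAt).derivWithin ((uniqueDiffOn_Icc one_pos) t ht)
    rw [h1, h2]
    refine hDb.trans ?_
    exact mul_le_mul_of_nonneg_right (by linarith) (Real.sqrt_nonneg _)
end
end

section
/- Let c : X → ℝ be continuous and let φ = (φ_1,…,φ_N) be a solution of the Schrödinger system for (c,(μ_1,…,μ_N)). Then the measure γ on X with density x ↦ exp(Σ_{i=1}^N φ_i(x_i) − c(x)) with respect to μ = μ_1 ⊗ ⋯ ⊗ μ_N is a Borel probability measure, and for every i the pushforward of γ under the projection x ↦ x_i equals μ_i. -/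
open MeasureTheory Set

noncomputable section

/-- If `φ` solves the Schrödinger system, then the measure
`γ = exp(Σ_i φ_i(x_i) − c(x)) · μ` is a probability measure on the product whose `i`-th
marginal is `μ_i` for every `i`. -/
theorem schrodinger_primal_plan_marginals
    (N d : ℕ) (hN : 2 ≤ N) (hd : 1 ≤ d)
    (X : Fin N → Set (EuclideanSpace ℝ (Fin d)))
    (hXne : ∀ i, (X i).Nonempty) (hXcpt : ∀ i, IsCompact (X i)) (hXcvx : ∀ i, Convex ℝ (X i))
    (c : (Fin N → EuclideanSpace ℝ (Fin d)) → ℝ)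
    (hc : ContinuousOn c (Set.univ.pi X))
    (μ : Fin N → Measure (EuclideanSpace ℝ (Fin d)))
    (hμp : ∀ i, IsProbabilityMeasure (μ i)) (hμs : ∀ i, μ i (X i) = 1)
    (φ : Fin N → EuclideanSpace ℝ (Fin d) → ℝ)
    (hφ : IsSchrodingerSolution X c μ φ)
    (γ : Measure (Fin N → EuclideanSpace ℝ (Fin d)))
    (hγ : γ = (Measure.pi μ).withDensity
      (fun x => ENNReal.ofReal (Real.exp ((∑ i, φ i (x i)) - c x)))) :
    IsProbabilityMeasure γ ∧ ∀ i : Fin N, γ.map (fun x => x i) = μ i := by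
  classical
  haveI : ∀ i, IsProbabilityMeasure (μ i) := hμp
  set S : Set (Fin N → EuclideanSpace ℝ (Fin d)) := Set.univ.pi X with hSdef
  have hXmeas : ∀ i, MeasurableSet (X i) := fun i => (hXcpt i).isClosed.measurableSet
  have hSmeas : MeasurableSet S := MeasurableSet.univ_pi hXmeas
  -- measurable modifications of φ and c
  set ψ : Fin N → EuclideanSpace ℝ (Fin d) → ℝ := fun j x => if hx : x ∈ X j then φ j x else 0 with hψdef
  have hψmeas : ∀ j, Measurable (ψ j) := fun j =>
    Measurable.dite ((hφ.1 j).restrict.measurable) measurable_const (hXmeas j)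
  have hψeq : ∀ j, ∀ x ∈ X j, ψ j x = φ j x := fun j x hx => dif_pos hx
  set c' : (Fin N → EuclideanSpace ℝ (Fin d)) → ℝ := fun x => if hx : x ∈ S then c x else 0 with hc'def
  have hc'meas : Measurable c' :=
    Measurable.dite (hc.restrict.measurable) measurable_const hSmeas
  have hc'eq : ∀ x ∈ S, c' x = c x := fun x hx => dif_pos hx
  -- the measurable density
  set F : (Fin N → EuclideanSpace ℝ (Fin d)) → ENNReal :=
    fun x => ENNReal.ofReal (Real.exp ((∑ j, ψ j (x j)) - c' x)) with hFdef
  have hFmeas : Measurable F := by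
    apply Measurable.ennreal_ofReal
    exact (Real.continuous_exp.measurable).comp
      ((Finset.measurable_sum Finset.univ fun j _ =>
        (hψmeas j).comp (measurable_pi_apply j)).sub hc'meas)
  -- almost every point of the product lies in S
  have hSfull : Measure.pi μ S = 1 := by
    rw [hSdef, Measure.pi_pi]
    simp [hμs]
  have hae : ∀ᵐ y ∂(Measure.pi μ), y ∈ S := by
    rw [ae_iff]
    have : {y | ¬ y ∈ S} = Sᶜ := rfl
    rw [this, measure_compl hSmeas (measure_ne_top _ _), hSfull, measure_univ, tsub_self]
  have haei : ∀ i : Fin N, ∀ᵐ t ∂(μ i), t ∈ X i := by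
    intro i
    rw [ae_iff]
    have : {t | ¬ t ∈ X i} = (X i)ᶜ := rfl
    rw [this, measure_compl (hXmeas i) (measure_ne_top _ _), hμs, measure_univ, tsub_self]
  -- γ equals the measurable-density version
  have hγF : γ = (Measure.pi μ).withDensity F := by
    rw [hγ]
    apply withDensity_congr_ae
    filter_upwards [hae] with y hy
    have h1 : (∑ j, φ j (y j)) = ∑ j, ψ j (y j) :=
      Finset.sum_congr rfl fun j _ => (hψeq j (y j) (hy j (mem_univ j))).symm
    simp only [hFdef]
    rw [h1, hc'eq y hy]
  -- bounds
  choose B hB using fun j => (hXcpt j).exists_bound_of_continuousOn (hφ.1 j)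
  obtain ⟨Bc, hBc⟩ := (isCompact_univ_pi hXcpt).exists_bound_of_continuousOn hc
  have hB0 : ∀ j, 0 ≤ B j := fun j =>
    le_trans (norm_nonneg _) (hB j (hXne j).choose (hXne j).choose_spec)
  set M : ℝ := (∑ j, B j) + Bc with hMdef
  -- base point
  set x₀ : Fin N → EuclideanSpace ℝ (Fin d) := fun i => (hXne i).choose with hx₀def
  -- the key fiberwise identity
  have key : ∀ i : Fin N, ∀ t ∈ X i,
      (∫⋯∫⁻_(Finset.univ.erase i), F ∂μ) (Function.update x₀ i t) = 1 := by
    intro i t ht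
    set H : (Fin N → EuclideanSpace ℝ (Fin d)) → ENNReal := fun y => ENNReal.ofReal
      (Real.exp (φ i t + (∑ j ∈ Finset.univ.erase i, ψ j (y j)) - c' (Function.update y i t)))
      with hHdef
    have hHmeas : Measurable H := by
      apply Measurable.ennreal_ofReal
      apply (Real.continuous_exp.measurable).comp
      apply Measurable.sub
      · exact measurable_const.add (Finset.measurable_sum _ fun j _ =>
          (hψmeas j).comp (measurable_pi_apply j))
      · exact hc'meas.comp measurable_update_left
    -- F composed with updating coordinate i equals H
    have hFH : (F ∘ fun y => Function.update y i t) = H := by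
      funext y
      have hsum : (∑ j, ψ j (Function.update y i t j))
          = ψ i t + ∑ j ∈ Finset.univ.erase i, ψ j (y j) := by
        rw [← Finset.add_sum_erase _ _ (Finset.mem_univ i)]
        congr 1
        · rw [Function.update_self]
        · exact Finset.sum_congr rfl fun j hj =>
            by rw [Function.update_of_ne (Finset.ne_of_mem_erase hj)]
      simp only [Function.comp_apply, hFdef, hHdef, hsum, hψeq i t ht]
    -- H does not depend on the i-th coordinate
    have hHind : ∀ s : EuclideanSpace ℝ (Fin d), (H ∘ fun y => Function.update y i s) = H := by
      intro s
      funext y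
      have h1 : (∑ j ∈ Finset.univ.erase i, ψ j (Function.update y i s j))
          = ∑ j ∈ Finset.univ.erase i, ψ j (y j) :=
        Finset.sum_congr rfl fun j hj => by
          rw [Function.update_of_ne (Finset.ne_of_mem_erase hj)]
      simp only [Function.comp_apply, hHdef, h1, Function.update_idem]
    -- the real integrand
    set g : (Fin N → EuclideanSpace ℝ (Fin d)) → ℝ := fun y =>
      Real.exp ((∑ j ∈ Finset.univ.erase i, ψ j (y j)) - c' (Function.update y i t)) with hgdef
    have hgmeas : Measurable g := by
      apply (Real.continuous_exp.measurable).comp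
      exact (Finset.measurable_sum _ fun j _ =>
        (hψmeas j).comp (measurable_pi_apply j)).sub (hc'meas.comp measurable_update_left)
    have hupd_mem : ∀ y ∈ S, Function.update y i t ∈ S := by
      intro y hy j _
      by_cases hj : j = i
      · subst hj; rw [Function.update_self]; exact ht
      · rw [Function.update_of_ne hj]; exact hy j (mem_univ j)
    have hg_ae : g =ᵐ[Measure.pi μ] fun y =>
        Real.exp ((∑ j ∈ Finset.univ.erase i, φ j (y j)) - c (Function.update y i t)) := by
      filter_upwards [hae] with y hy
      have h1 : (∑ j ∈ Finset.univ.erase i, ψ j (y j))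
          = ∑ j ∈ Finset.univ.erase i, φ j (y j) :=
        Finset.sum_congr rfl fun j _ => hψeq j (y j) (hy j (mem_univ j))
      rw [hgdef]
      simp only [h1, hc'eq _ (hupd_mem y hy)]
    have hbound : ∀ᵐ y ∂(Measure.pi μ),
        |(∑ j ∈ Finset.univ.erase i, ψ j (y j)) - c' (Function.update y i t)| ≤ M := by
      filter_upwards [hae] with y hy
      have h1 : |∑ j ∈ Finset.univ.erase i, ψ j (y j)| ≤ ∑ j, B j := by
        refine le_trans (Finset.abs_sum_le_sum_abs _ _) ?_
        refine le_trans (Finset.sum_le_sum fun j hj => ?_)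
          (Finset.sum_le_univ_sum_of_nonneg hB0)
        rw [hψeq j (y j) (hy j (mem_univ j))]
        exact hB j (y j) (hy j (mem_univ j))
      have h2 : |c' (Function.update y i t)| ≤ Bc := by
        rw [hc'eq _ (hupd_mem y hy)]
        exact hBc _ (hupd_mem y hy)
      calc |(∑ j ∈ Finset.univ.erase i, ψ j (y j)) - c' (Function.update y i t)|
          ≤ |∑ j ∈ Finset.univ.erase i, ψ j (y j)| + |c' (Function.update y i t)| :=
            abs_sub _ _
        _ ≤ M := add_le_add h1 h2
    have hg_upper : ∀ᵐ y ∂(Measure.pi μ), ‖g y‖ ≤ Real.exp M := by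
      filter_upwards [hbound] with y hy
      rw [hgdef, Real.norm_eq_abs, abs_of_pos (Real.exp_pos _)]
      exact Real.exp_le_exp.2 (le_trans (le_abs_self _) hy)
    have hg_lower : ∀ᵐ y ∂(Measure.pi μ), Real.exp (-M) ≤ g y := by
      filter_upwards [hbound] with y hy
      exact Real.exp_le_exp.2 (neg_le_of_abs_le hy)
    have hg_int : Integrable g (Measure.pi μ) :=
      Integrable.mono' (integrable_const (Real.exp M))
        hgmeas.aestronglyMeasurable hg_upper
    have hIpos : 0 < ∫ y, g y ∂(Measure.pi μ) := by
      have := integral_mono_ae (integrable_const (Real.exp (-M))) hg_int hg_lower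
      rw [integral_const, Measure.real, measure_univ, ENNReal.toReal_one, one_smul] at this
      exact lt_of_lt_of_le (Real.exp_pos _) this
    have hφt : Real.exp (φ i t) = (∫ y, g y ∂(Measure.pi μ))⁻¹ := by
      have heq := hφ.2 i t ht
      rw [← integral_congr_ae hg_ae] at heq
      rw [heq, Real.exp_neg, Real.exp_log hIpos]
    --∫⁻ H = 1
    have hHint : ∫⁻ y, H y ∂(Measure.pi μ) = 1 := by
      have hHg : H = fun y => ENNReal.ofReal (Real.exp (φ i t) * g y) := by
        funext y
        rw [hHdef, hgdef]
        simp only [add_sub_assoc, Real.exp_add]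
      rw [hHg, ← ofReal_integral_eq_lintegral_ofReal (hg_int.const_mul _)
        (Filter.Eventually.of_forall fun y =>
          mul_nonneg (Real.exp_pos _).le (Real.exp_pos _).le)]
      rw [integral_const_mul, hφt, inv_mul_cancel₀ hIpos.ne', ENNReal.ofReal_one]
    -- lmarginal of H over erase i is constant, equal to the full integral
    have hHmarg : (∫⋯∫⁻_(Finset.univ.erase i), H ∂μ) x₀ = 1 := by
      have h1 : ∫⁻ y, H y ∂(Measure.pi μ)
          = ∫⁻ s, (∫⋯∫⁻_(Finset.univ.erase i), H ∂μ) (Function.update x₀ i s) ∂(μ i) := by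
        rw [lintegral_eq_lmarginal_univ (μ := μ) x₀]
        exact lmarginal_erase H hHmeas (Finset.mem_univ i) x₀
      have h2 : ∀ s : EuclideanSpace ℝ (Fin d), (∫⋯∫⁻_(Finset.univ.erase i), H ∂μ) (Function.update x₀ i s)
          = (∫⋯∫⁻_(Finset.univ.erase i), H ∂μ) x₀ := by
        intro s
        rw [lmarginal_update_of_notMem hHmeas (Finset.notMem_erase i _), hHind s]
      rw [h1] at hHint
      simp_rw [h2] at hHint
      rwa [lintegral_const, measure_univ, mul_one] at hHint
    calc (∫⋯∫⁻_(Finset.univ.erase i), F ∂μ) (Function.update x₀ i t)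
        = (∫⋯∫⁻_(Finset.univ.erase i), F ∘ (Function.update · i t) ∂μ) x₀ :=
          lmarginal_update_of_notMem hFmeas (Finset.notMem_erase i _) x₀ t
      _ = (∫⋯∫⁻_(Finset.univ.erase i), H ∂μ) x₀ := by rw [hFH]
      _ = 1 := hHmarg
  -- total mass of γ is 1
  have hγuniv : γ Set.univ = 1 := by
    rw [hγF, withDensity_apply _ MeasurableSet.univ, Measure.restrict_univ,
      lintegral_eq_lmarginal_univ (μ := μ) x₀]
    set i₀ : Fin N := ⟨0, by omega⟩
    rw [lmarginal_erase F hFmeas (Finset.mem_univ i₀) x₀]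
    have : ∫⁻ t, (∫⋯∫⁻_(Finset.univ.erase i₀), F ∂μ) (Function.update x₀ i₀ t) ∂(μ i₀)
        = ∫⁻ _, 1 ∂(μ i₀) := by
      apply lintegral_congr_ae
      filter_upwards [haei i₀] with t ht
      exact key i₀ t ht
    rw [this, lintegral_one, measure_univ]
  refine ⟨⟨hγuniv⟩, fun i => ?_⟩
  -- marginals
  ext A hA
  rw [Measure.map_apply (measurable_pi_apply i) hA]
  have hpre : MeasurableSet ((fun x : Fin N → EuclideanSpace ℝ (Fin d) => x i) ⁻¹' A) :=
    measurable_pi_apply i hA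
  rw [hγF, withDensity_apply _ hpre, ← lintegral_indicator hpre]
  set G : (Fin N → EuclideanSpace ℝ (Fin d)) → ENNReal :=
    fun y => A.indicator (fun _ => (1 : ENNReal)) (y i) * F y with hGdef
  have hGind : ((fun x : Fin N → EuclideanSpace ℝ (Fin d) => x i) ⁻¹' A).indicator F = G := by
    funext y
    by_cases hy : y i ∈ A
    · rw [Set.indicator_of_mem (by exact hy), hGdef]
      simp [Set.indicator_of_mem hy]
    · rw [Set.indicator_of_notMem (by exact hy), hGdef]
      simp [Set.indicator_of_notMem hy]
  have hGmeas : Measurable G :=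
    ((measurable_const.indicator hA).comp (measurable_pi_apply i)).mul hFmeas
  rw [hGind, lintegral_eq_lmarginal_univ (μ := μ) x₀,
    lmarginal_erase G hGmeas (Finset.mem_univ i) x₀]
  have hGsplit : ∀ z : Fin N → EuclideanSpace ℝ (Fin d), (∫⋯∫⁻_(Finset.univ.erase i), G ∂μ) z
      = A.indicator (fun _ => (1 : ENNReal)) (z i) * (∫⋯∫⁻_(Finset.univ.erase i), F ∂μ) z := by
    intro z
    have hup : ∀ y, Function.updateFinset z (Finset.univ.erase i) y i = z i := by
      intro y
      simp [Function.updateFinset_def, Finset.notMem_erase]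
    unfold MeasureTheory.lmarginal
    simp_rw [hGdef, hup]
    exact lintegral_const_mul _ (hFmeas.comp measurable_updateFinset)
  have hfin : ∫⁻ t, (∫⋯∫⁻_(Finset.univ.erase i), G ∂μ) (Function.update x₀ i t) ∂(μ i)
      = ∫⁻ t, A.indicator (fun _ => (1 : ENNReal)) t ∂(μ i) := by
    apply lintegral_congr_ae
    filter_upwards [haei i] with t ht
    rw [hGsplit, Function.update_self, key i t ht, mul_one]
  rw [hfin, lintegral_indicator hA]
  simp
end
end

section
/- Let c : X → ℝ be continuous, let φ = (φ_1,…,φ_N) be a solution of the Schrödinger system for (c,(μ_1,…,μ_N)), and let γ be the probability measure on X with density x ↦ exp(Σ_{i=1}^N φ_i(x_i) − c(x)) with respect to μ = μ_1 ⊗ ⋯ ⊗ μ_N. Then γ minimizes γ' ↦ ∫_X c dγ' + H(γ'|μ) over all Borel probability measures γ' on X whose i-th marginal is μ_i for every i, and the minimal value satisfies E(μ_1,…,μ_N) = ∫_X c dγ + H(γ|μ) = Σ_{i=1}^N ∫_{X_i} φ_i dμ_i. -/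
open MeasureTheory Set
open scoped ENNReal

noncomputable section

/-- The entropic optimal transport cost: the infimum of `∫ c dγ + H(γ | ⊗_i μ_i)` over all
probability measures `γ` on the product with marginals `μ_i` (plans with infinite relative
entropy, i.e. not absolutely continuous or with non-integrable log-likelihood ratio,
contribute `+∞` and are omitted from the infimum). -/
noncomputable def EOT {N d : ℕ} (c : (Fin N → EuclideanSpace ℝ (Fin d)) → ℝ)
    (μ : Fin N → MeasureTheory.Measure (EuclideanSpace ℝ (Fin d))) : ℝ :=
  sInf {r : ℝ | ∃ γ : MeasureTheory.Measure (Fin N → EuclideanSpace ℝ (Fin d)),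
    MeasureTheory.IsProbabilityMeasure γ ∧ (∀ i, γ.map (fun x => x i) = μ i) ∧
    γ ≪ MeasureTheory.Measure.pi μ ∧
    MeasureTheory.Integrable (MeasureTheory.llr γ (MeasureTheory.Measure.pi μ)) γ ∧
    r = ∫ x, c x ∂γ + ∫ x, MeasureTheory.llr γ (MeasureTheory.Measure.pi μ) x ∂γ}

namespace SchrodAux

variable {ι : Type*} [Fintype ι] [DecidableEq ι] {α : ι → Type*} [∀ i, MeasurableSpace (α i)]
  (μ : ∀ i, Measure (α i)) [∀ i, IsProbabilityMeasure (μ i)]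

theorem measurable_updateT (i : ι) :
    Measurable (fun p : (∀ j, α j) × (∀ j, α j) => Function.update p.2 i (p.1 i)) := by
  refine measurable_pi_lambda _ fun j => ?_
  by_cases h : j = i
  · subst h; simpa [Function.update_self, Function.comp_def] using (measurable_pi_apply j).comp measurable_fst
  · simpa [Function.update_of_ne h, Function.comp_def] using (measurable_pi_apply j).comp measurable_snd

theorem pi_map_eval (i : ι) : (Measure.pi μ).map (fun x => x i) = μ i := by
  ext A hA
  rw [Measure.map_apply (measurable_pi_apply i) hA]
  have : (fun x : ∀ j, α j => x i) ⁻¹' A =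
      Set.pi Set.univ (Function.update (fun _ => Set.univ) i A) := by
    ext x
    simp only [mem_preimage, mem_pi, mem_univ, forall_true_left, Function.update_apply]
    constructor
    · intro hx j
      by_cases hj : j = i
      · subst hj; simpa using hx
      · simp [hj]
    · intro h; simpa using h i
  rw [this, Measure.pi_pi]
  refine Finset.prod_eq_single_of_mem i (Finset.mem_univ i) (fun j _ hj => ?_) |>.trans
    (by simp)
  simp [Function.update_of_ne hj]

theorem measurePreserving_updateT (i : ι) :
    MeasurePreserving (fun p : (∀ j, α j) × (∀ j, α j) => Function.update p.2 i (p.1 i))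
      ((Measure.pi μ).prod (Measure.pi μ)) (Measure.pi μ) := by
  refine ⟨measurable_updateT i, ?_⟩
  refine (Measure.pi_eq (μ := μ) fun s hs => ?_).symm
  rw [Measure.map_apply (measurable_updateT i) (MeasurableSet.univ_pi hs)]
  have hpre : (fun p : (∀ j, α j) × (∀ j, α j) => Function.update p.2 i (p.1 i)) ⁻¹'
      (Set.pi Set.univ s) =
      ((fun x : ∀ j, α j => x i) ⁻¹' (s i)) ×ˢ
        (Set.pi Set.univ (Function.update s i Set.univ)) := by
    ext ⟨x, y⟩
    constructor
    · intro h
      have h' : ∀ j, Function.update y i (x i) j ∈ s j := by simpa [Set.mem_pi] using h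
      refine ⟨by simpa using h' i, ?_⟩
      simp only [Set.mem_pi, mem_univ, forall_true_left]
      intro j
      by_cases hj : j = i
      · subst hj; simp
      · have := h' j
        rwa [Function.update_of_ne hj] at this ⊢
    · rintro ⟨h1, h2⟩
      simp only [Set.mem_preimage, Set.mem_pi, mem_univ, forall_true_left]
      intro j
      by_cases hj : j = i
      · subst hj; simpa using h1
      · simp only [Set.mem_pi, mem_univ, forall_true_left] at h2
        have hj2 := h2 j
        rw [Function.update_of_ne hj] at hj2 ⊢
        exact hj2
  rw [hpre, Measure.prod_prod]
  have h1 : Measure.pi μ ((fun x : ∀ j, α j => x i) ⁻¹' (s i)) = μ i (s i) := by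
    rw [← Measure.map_apply (measurable_pi_apply i) (hs i), pi_map_eval]
  rw [h1, Measure.pi_pi]
  rw [← Finset.mul_prod_erase Finset.univ (fun j => μ j (s j)) (Finset.mem_univ i),
    ← Finset.mul_prod_erase Finset.univ (fun j => μ j (Function.update s i Set.univ j))
      (Finset.mem_univ i)]
  have : ∀ j ∈ Finset.univ.erase i, μ j (Function.update s i Set.univ j) = μ j (s j) := by
    intro j hj
    rw [Function.update_of_ne (Finset.ne_of_mem_erase hj)]
  rw [Finset.prod_congr rfl this]
  simp [mul_comm, mul_left_comm]

end SchrodAux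

/-- Gibbs' inequality: relative entropy between probability measures is nonnegative. -/
theorem gibbs_llr_nonneg {α : Type*} [MeasurableSpace α] {ρ ν : Measure α}
    [IsProbabilityMeasure ρ] [IsProbabilityMeasure ν] (h : ρ ≪ ν)
    (hi : Integrable (llr ρ ν) ρ) : 0 ≤ ∫ x, llr ρ ν x ∂ρ := by
  set g := ρ.rnDeriv ν with hg
  have hmeas : Measurable g := Measure.measurable_rnDeriv ρ ν
  have hpos : ∀ᵐ x ∂ρ, 0 < g x := Measure.rnDeriv_pos h
  have hlt : ∀ᵐ x ∂ρ, g x < ∞ := h.ae_le (Measure.rnDeriv_lt_top ρ ν)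
  set v : α → ℝ := fun x => ((g x).toReal)⁻¹ with hv
  have hvmeas : Measurable v := (hmeas.ennreal_toReal).inv
  have hvnonneg : ∀ x, 0 ≤ v x := fun x => by positivity
  -- lintegral of v wrt ρ is at most 1
  have hρ : ν.withDensity g = ρ := Measure.withDensity_rnDeriv_eq ρ ν h
  have hlint : ∫⁻ x, ENNReal.ofReal (v x) ∂ρ ≤ 1 := by
    rw [← hρ, lintegral_withDensity_eq_lintegral_mul _ hmeas
      (by exact hvmeas.ennreal_ofReal)]
    have hle : ∀ᵐ x ∂ν, (g * fun x => ENNReal.ofReal (v x)) x ≤ 1 := by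
      filter_upwards [Measure.rnDeriv_lt_top ρ ν] with x hx
      simp only [Pi.mul_apply]
      rcases eq_or_ne (g x) 0 with h0 | h0
      · simp [h0]
      · have htR : (g x).toReal ≠ 0 := by
          simp [ENNReal.toReal_eq_zero_iff, h0, (show g x ≠ ∞ from hx.ne)]
        rw [hv]
        rw [ENNReal.ofReal_inv_of_pos (by positivity), ENNReal.ofReal_toReal hx.ne]
        rw [ENNReal.mul_inv_cancel h0 hx.ne]
    calc ∫⁻ x, (g * fun x => ENNReal.ofReal (v x)) x ∂ν ≤ ∫⁻ _, 1 ∂ν := lintegral_mono_ae hle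
      _ = 1 := by simp
  have hvint : Integrable v ρ := by
    refine ⟨hvmeas.aestronglyMeasurable, ?_⟩
    rw [hasFiniteIntegral_iff_norm]
    refine lt_of_le_of_lt ?_ (lt_of_le_of_lt hlint ENNReal.one_lt_top)
    refine lintegral_mono fun x => ?_
    rw [Real.norm_eq_abs, abs_of_nonneg (hvnonneg x)]
  have hvle : ∫ x, v x ∂ρ ≤ 1 := by
    rw [integral_eq_lintegral_of_nonneg_ae (Filter.Eventually.of_forall hvnonneg)
      hvmeas.aestronglyMeasurable]
    calc (∫⁻ x, ENNReal.ofReal (v x) ∂ρ).toReal ≤ (1 : ℝ≥0∞).toReal :=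
      ENNReal.toReal_mono (by simp) hlint
      _ = 1 := by simp
  have hptwise : ∀ᵐ x ∂ρ, 1 - v x ≤ llr ρ ν x := by
    filter_upwards [hpos, hlt] with x h0 h1
    have htpos : 0 < (g x).toReal := ENNReal.toReal_pos h0.ne' h1.ne
    simpa [llr, hv] using Real.one_sub_inv_le_log_of_pos htpos
  have hmono : ∫ x, (1 - v x) ∂ρ ≤ ∫ x, llr ρ ν x ∂ρ :=
    integral_mono_ae ((integrable_const (1:ℝ)).sub hvint) hi hptwise
  have : (1 : ℝ) - ∫ x, v x ∂ρ ≤ ∫ x, llr ρ ν x ∂ρ := by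
    rwa [integral_sub (integrable_const 1) hvint, integral_const, probReal_univ, one_smul] at hmono
  linarith

/-- The plan `γ = exp(Σ_i φ_i(x_i) − c(x)) · μ` built from a solution of
the Schrödinger system is optimal for the entropic optimal transport problem: it has finite
relative entropy with respect to `μ`, its cost-plus-entropy value is minimal among all
admissible plans, and `E(μ_1,…,μ_N) = ∫ c dγ + H(γ|μ) = Σ_i ∫ φ_i dμ_i`. -/
theorem schrodinger_primal_plan_optimality
    (N d : ℕ) (hN : 2 ≤ N) (hd : 1 ≤ d)
    (X : Fin N → Set (EuclideanSpace ℝ (Fin d)))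
    (hXne : ∀ i, (X i).Nonempty) (hXcpt : ∀ i, IsCompact (X i)) (hXcvx : ∀ i, Convex ℝ (X i))
    (c : (Fin N → EuclideanSpace ℝ (Fin d)) → ℝ)
    (hc : ContinuousOn c (Set.univ.pi X))
    (μ : Fin N → Measure (EuclideanSpace ℝ (Fin d)))
    (hμp : ∀ i, IsProbabilityMeasure (μ i)) (hμs : ∀ i, μ i (X i) = 1)
    (φ : Fin N → EuclideanSpace ℝ (Fin d) → ℝ)
    (hφ : IsSchrodingerSolution X c μ φ)
    (γ : Measure (Fin N → EuclideanSpace ℝ (Fin d)))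
    (hγ : γ = (Measure.pi μ).withDensity
      (fun x => ENNReal.ofReal (Real.exp ((∑ i, φ i (x i)) - c x)))) :
    γ ≪ Measure.pi μ ∧
    Integrable (llr γ (Measure.pi μ)) γ ∧
    (∀ γ' : Measure (Fin N → EuclideanSpace ℝ (Fin d)),
      IsProbabilityMeasure γ' → (∀ i, γ'.map (fun x => x i) = μ i) →
      γ' ≪ Measure.pi μ → Integrable (llr γ' (Measure.pi μ)) γ' →
      ∫ x, c x ∂γ + ∫ x, llr γ (Measure.pi μ) x ∂γ ≤
        ∫ x, c x ∂γ' + ∫ x, llr γ' (Measure.pi μ) x ∂γ') ∧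
    EOT c μ = ∫ x, c x ∂γ + ∫ x, llr γ (Measure.pi μ) x ∂γ ∧
    EOT c μ = ∑ i, ∫ xi, φ i xi ∂(μ i) := by
  classical
  haveI : ∀ i, IsProbabilityMeasure (μ i) := hμp
  set m : Measure (Fin N → EuclideanSpace ℝ (Fin d)) := Measure.pi μ with hm
  haveI : IsProbabilityMeasure m := by rw [hm]; infer_instance
  set S : Set (Fin N → EuclideanSpace ℝ (Fin d)) := Set.univ.pi X with hS
  have hXmeas : ∀ i, MeasurableSet (X i) := fun i => (hXcpt i).isClosed.measurableSet
  have hSmeas : MeasurableSet S := MeasurableSet.univ_pi fun i => hXmeas i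
  have hmS : m S = 1 := by rw [hm, hS, Measure.pi_pi]; simp [hμs]
  have hScompl : m Sᶜ = 0 := by
    have h := measure_compl hSmeas (measure_ne_top m S)
    rw [hmS, measure_univ] at h
    simpa using h
  have hSae : ∀ᵐ x ∂m, x ∈ S := mem_ae_iff.mpr (by simpa using hScompl)
  have hXae : ∀ i, ∀ᵐ xi ∂(μ i), xi ∈ X i := by
    intro i
    refine mem_ae_iff.mpr ?_
    have h := measure_compl (hXmeas i) (measure_ne_top (μ i) (X i))
    rw [hμs i, measure_univ] at h
    simpa using h
  have hmemS : ∀ x ∈ S, ∀ i, x i ∈ X i := fun x hx i => hx i (mem_univ i)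
  -- measurable modifications of φ and c
  set ψ : Fin N → EuclideanSpace ℝ (Fin d) → ℝ := fun i => (X i).piecewise (φ i) 0 with hψdef
  have hψmeas : ∀ i, Measurable (ψ i) := fun i =>
    ContinuousOn.measurable_piecewise (hφ.1 i) continuousOn_const (hXmeas i)
  have hψeq : ∀ i, ∀ xi ∈ X i, ψ i xi = φ i xi := fun i xi hxi =>
    Set.piecewise_eq_of_mem _ _ _ hxi
  set c' : (Fin N → EuclideanSpace ℝ (Fin d)) → ℝ := S.piecewise c 0 with hc'def
  have hc'meas : Measurable c' :=
    ContinuousOn.measurable_piecewise hc continuousOn_const hSmeas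
  have hc'eq : ∀ x ∈ S, c' x = c x := fun x hx => Set.piecewise_eq_of_mem _ _ _ hx
  set L : (Fin N → EuclideanSpace ℝ (Fin d)) → ℝ := fun x => (∑ i, ψ i (x i)) - c' x with hLdef
  have hLmeas : Measurable L :=
    (Finset.measurable_sum _ fun i _ => (hψmeas i).comp (measurable_pi_apply i)).sub hc'meas
  set f' : (Fin N → EuclideanSpace ℝ (Fin d)) → ℝ := fun x => Real.exp (L x) with hf'def
  have hf'meas : Measurable f' := Real.measurable_exp.comp hLmeas
  have hf'pos : ∀ x, 0 < f' x := fun x => Real.exp_pos _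
  have hLeq : ∀ x ∈ S, L x = (∑ i, φ i (x i)) - c x := by
    intro x hx
    rw [hLdef]
    simp only
    rw [hc'eq x hx]
    congr 1
    exact Finset.sum_congr rfl fun i _ => hψeq i (x i) (hmemS x hx i)
  have hγ2 : γ = m.withDensity (fun x => ENNReal.ofReal (f' x)) := by
    rw [hγ]
    refine withDensity_congr_ae ?_
    filter_upwards [hSae] with x hx
    rw [hf'def]
    simp only
    rw [hLeq x hx]
  -- bounds
  have hbd : ∀ i, ∃ C, ∀ xi ∈ X i, ‖φ i xi‖ ≤ C := fun i =>
    (hXcpt i).exists_bound_of_continuousOn (hφ.1 i)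
  choose Cφ hCφ using hbd
  have hCφ0 : ∀ i, 0 ≤ Cφ i := fun i => by
    obtain ⟨xi, hxi⟩ := hXne i
    exact le_trans (norm_nonneg _) (hCφ i xi hxi)
  obtain ⟨Cc, hCc⟩ : ∃ C, ∀ x ∈ S, ‖c x‖ ≤ C := by
    rw [hS]
    exact (isCompact_univ_pi hXcpt).exists_bound_of_continuousOn hc
  have hSne : S.Nonempty := by
    refine ⟨fun i => (hXne i).choose, ?_⟩
    rw [hS]
    exact fun i _ => (hXne i).choose_spec
  have hCc0 : 0 ≤ Cc := le_trans (norm_nonneg _) (hCc _ hSne.choose_spec)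
  have hψbd : ∀ i xi, |ψ i xi| ≤ Cφ i := by
    intro i xi
    by_cases hxi : xi ∈ X i
    · rw [hψeq i xi hxi, ← Real.norm_eq_abs]; exact hCφ i xi hxi
    · rw [hψdef]
      simp only [Set.piecewise_eq_of_notMem _ _ _ hxi, Pi.zero_apply, abs_zero]
      exact hCφ0 i
  have hc'bd : ∀ x, |c' x| ≤ Cc := by
    intro x
    by_cases hx : x ∈ S
    · rw [hc'eq x hx, ← Real.norm_eq_abs]; exact hCc x hx
    · rw [hc'def]
      simp only [Set.piecewise_eq_of_notMem _ _ _ hx, Pi.zero_apply, abs_zero]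
      exact hCc0
  set B : ℝ := (∑ i, Cφ i) + Cc with hB
  have hLbd : ∀ x, |L x| ≤ B := by
    intro x
    have h1 : |∑ i, ψ i (x i)| ≤ ∑ i, Cφ i :=
      (Finset.abs_sum_le_sum_abs _ _).trans (Finset.sum_le_sum fun i _ => hψbd i (x i))
    rw [hLdef]
    simp only
    rw [sub_eq_add_neg]
    refine (abs_add_le _ _).trans ?_
    rw [abs_neg, hB]
    exact add_le_add h1 (hc'bd x)
  -- the Schrödinger integrand with measurable modifications
  set G : Fin N → EuclideanSpace ℝ (Fin d) → (Fin N → EuclideanSpace ℝ (Fin d)) → ℝ :=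
    fun i xi y => Real.exp ((∑ j ∈ Finset.univ.erase i, ψ j (y j))
      - c' (Function.update y i xi)) with hGdef
  have hupdmeas : ∀ (i : Fin N) (xi : EuclideanSpace ℝ (Fin d)),
      Measurable (fun y : Fin N → EuclideanSpace ℝ (Fin d) => Function.update y i xi) :=
    fun i xi => measurable_update'.comp (measurable_id.prodMk measurable_const)
  have hGmeas : ∀ i xi, Measurable (G i xi) := fun i xi =>
    Real.measurable_exp.comp
      ((Finset.measurable_sum _ fun j _ => (hψmeas j).comp (measurable_pi_apply j)).sub
        (hc'meas.comp (hupdmeas i xi)))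
  have hGargbd : ∀ (i : Fin N) xi y,
      |(∑ j ∈ Finset.univ.erase i, ψ j (y j)) - c' (Function.update y i xi)| ≤ B := by
    intro i xi y
    have h1 : |∑ j ∈ Finset.univ.erase i, ψ j (y j)| ≤ ∑ i, Cφ i := by
      refine (Finset.abs_sum_le_sum_abs _ _).trans ?_
      refine le_trans (Finset.sum_le_sum fun j _ => hψbd j (y j)) ?_
      exact Finset.sum_le_sum_of_subset_of_nonneg (Finset.erase_subset _ _)
        (fun j _ _ => hCφ0 j)
    rw [sub_eq_add_neg]
    refine (abs_add_le _ _).trans ?_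
    rw [abs_neg, hB]
    exact add_le_add h1 (hc'bd _)
  have hGlb : ∀ (i : Fin N) xi y, Real.exp (-B) ≤ G i xi y := fun i xi y =>
    Real.exp_le_exp.mpr (neg_le_of_abs_le (hGargbd i xi y))
  have hGub : ∀ (i : Fin N) xi y, G i xi y ≤ Real.exp B := fun i xi y =>
    Real.exp_le_exp.mpr (le_of_abs_le (hGargbd i xi y))
  have hGint : ∀ i xi, Integrable (G i xi) m := by
    intro i xi
    refine Integrable.mono' (integrable_const (Real.exp B))
      (hGmeas i xi).aestronglyMeasurable ?_
    refine Filter.Eventually.of_forall fun y => ?_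
    rw [Real.norm_eq_abs, abs_of_pos (Real.exp_pos _)]
    exact hGub i xi y
  have hGval : ∀ i, ∀ xi ∈ X i, ∫ y, G i xi y ∂m = Real.exp (-(φ i xi)) := by
    intro i xi hxi
    have hupdS : ∀ y ∈ S, Function.update y i xi ∈ S := by
      intro y hy
      rw [hS]
      intro j _
      by_cases hj : j = i
      · subst hj; simpa [Function.update_self] using hxi
      · rw [Function.update_of_ne hj]; exact hmemS y hy j
    have hae : (fun y => Real.exp ((∑ j ∈ Finset.univ.erase i, φ j (y j))
        - c (Function.update y i xi))) =ᵐ[m] G i xi := by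
      filter_upwards [hSae] with y hy
      rw [hGdef]
      simp only
      rw [hc'eq _ (hupdS y hy)]
      congr 2
      exact (Finset.sum_congr rfl fun j _ => (hψeq j (y j) (hmemS y hy j))).symm
    have hInt1 : ∫ y, Real.exp ((∑ j ∈ Finset.univ.erase i, φ j (y j))
        - c (Function.update y i xi)) ∂m = ∫ y, G i xi y ∂m := integral_congr_ae hae
    have hpos : 0 < ∫ y, G i xi y ∂m := by
      have h1 : ∫ _, Real.exp (-B) ∂m ≤ ∫ y, G i xi y ∂m :=
        integral_mono (integrable_const _) (hGint i xi) fun y => hGlb i xi y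
      rw [integral_const, probReal_univ, one_smul] at h1
      exact lt_of_lt_of_le (Real.exp_pos _) h1
    have heq := hφ.2 i xi hxi
    rw [← hm, hInt1] at heq
    have hlog : Real.log (∫ y, G i xi y ∂m) = -(φ i xi) := by linarith
    rw [← hlog, Real.exp_log hpos]
  have hGlint : ∀ i, ∀ xi ∈ X i,
      ∫⁻ y, ENNReal.ofReal (G i xi y) ∂m = ENNReal.ofReal (Real.exp (-(φ i xi))) := by
    intro i xi hxi
    rw [← ofReal_integral_eq_lintegral_ofReal (hGint i xi)
      (Filter.Eventually.of_forall fun y => le_of_lt (Real.exp_pos _)), hGval i xi hxi]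
  -- inner normalization
  have hCinner : ∀ i, ∀ xi ∈ X i,
      ∫⁻ y, ENNReal.ofReal (f' (Function.update y i xi)) ∂m = 1 := by
    intro i xi hxi
    have hfu : ∀ y, f' (Function.update y i xi) = Real.exp (ψ i xi) * G i xi y := by
      intro y
      rw [hf'def, hGdef]
      simp only
      rw [← Real.exp_add]
      congr 1
      rw [hLdef]
      simp only
      have hsum : (∑ j, ψ j (Function.update y i xi j))
          = ψ i xi + ∑ j ∈ Finset.univ.erase i, ψ j (y j) := by
        rw [← Finset.add_sum_erase Finset.univ
          (fun j => ψ j (Function.update y i xi j)) (Finset.mem_univ i)]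
        congr 1
        · rw [Function.update_self]
        · exact Finset.sum_congr rfl fun j hj => by
            rw [Function.update_of_ne (Finset.ne_of_mem_erase hj)]
      rw [hsum]; ring
    simp only [hfu]
    have : ∀ y, ENNReal.ofReal (Real.exp (ψ i xi) * G i xi y)
        = ENNReal.ofReal (Real.exp (ψ i xi)) * ENNReal.ofReal (G i xi y) := fun y =>
      ENNReal.ofReal_mul (le_of_lt (Real.exp_pos _))
    simp only [this]
    rw [lintegral_const_mul _ (hGmeas i xi).ennreal_ofReal, hGlint i xi hxi,
      ← ENNReal.ofReal_mul (le_of_lt (Real.exp_pos _)), ← Real.exp_add,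
      hψeq i xi hxi, add_neg_cancel, Real.exp_zero, ENNReal.ofReal_one]
  -- main lintegral computation
  have hD : ∀ (i : Fin N) (A : Set (EuclideanSpace ℝ (Fin d))), MeasurableSet A →
      ∫⁻ x, (A.indicator (fun _ => (1:ℝ≥0∞)) (x i)) * ENNReal.ofReal (f' x) ∂m = μ i A := by
    intro i A hA
    set h : (Fin N → EuclideanSpace ℝ (Fin d)) → ℝ≥0∞ :=
      fun x => (A.indicator (fun _ => (1:ℝ≥0∞)) (x i)) * ENNReal.ofReal (f' x) with hhdef
    have hhmeas : Measurable h :=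
      ((measurable_const.indicator hA).comp (measurable_pi_apply i)).mul
        hf'meas.ennreal_ofReal
    have hmp := SchrodAux.measurePreserving_updateT μ i
    have h1 : ∫⁻ x, h x ∂m = ∫⁻ p : (Fin N → EuclideanSpace ℝ (Fin d)) ×
        (Fin N → EuclideanSpace ℝ (Fin d)), h (Function.update p.2 i (p.1 i))
        ∂(m.prod m) := by
      rw [hm]
      exact (hmp.lintegral_comp hhmeas).symm
    rw [h1, lintegral_prod (fun p : (Fin N → EuclideanSpace ℝ (Fin d)) × (Fin N → EuclideanSpace ℝ (Fin d)) => h (Function.update p.2 i (p.1 i)))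
      ((hhmeas.comp (SchrodAux.measurable_updateT i)).aemeasurable)]
    have h3 : ∀ᵐ x ∂m, (∫⁻ y, h (Function.update y i (x i)) ∂m)
        = A.indicator (fun _ => (1:ℝ≥0∞)) (x i) := by
      filter_upwards [hSae] with x hx
      have h2 : ∀ y, h (Function.update y i (x i)) =
          (A.indicator (fun _ => (1:ℝ≥0∞)) (x i))
            * ENNReal.ofReal (f' (Function.update y i (x i))) := by
        intro y
        rw [hhdef]
        simp only [Function.update_self]
      calc (∫⁻ y, h (Function.update y i (x i)) ∂m)
          = ∫⁻ y, (A.indicator (fun _ => (1:ℝ≥0∞)) (x i))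
              * ENNReal.ofReal (f' (Function.update y i (x i))) ∂m :=
            lintegral_congr fun y => h2 y
        _ = (A.indicator (fun _ => (1:ℝ≥0∞)) (x i))
              * ∫⁻ y, ENNReal.ofReal (f' (Function.update y i (x i))) ∂m :=
            lintegral_const_mul _ ((hf'meas.comp (hupdmeas i (x i))).ennreal_ofReal)
        _ = A.indicator (fun _ => (1:ℝ≥0∞)) (x i) := by
            rw [hCinner i (x i) (hmemS x hx i), mul_one]
    rw [lintegral_congr_ae h3]
    have h5 : ∀ x : Fin N → EuclideanSpace ℝ (Fin d),
        A.indicator (fun _ => (1:ℝ≥0∞)) (x i)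
          = ((fun x : Fin N → EuclideanSpace ℝ (Fin d) => x i) ⁻¹' A).indicator
            (fun _ => (1:ℝ≥0∞)) x := by
      intro x
      by_cases hxA : x i ∈ A <;> simp [Set.indicator_apply, hxA]
    simp only [h5]
    rw [lintegral_indicator_const ((measurable_pi_apply i) hA) 1, one_mul,
      ← Measure.map_apply (measurable_pi_apply i) hA, hm, SchrodAux.pi_map_eval]
  -- γ is a probability measure with marginals μ
  have hγA : ∀ (i : Fin N) (A : Set (EuclideanSpace ℝ (Fin d))), MeasurableSet A →
      γ ((fun x => x i) ⁻¹' A) = μ i A := by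
    intro i A hA
    rw [hγ2, withDensity_apply _ ((measurable_pi_apply i) hA),
      ← lintegral_indicator ((measurable_pi_apply i) hA), ← hD i A hA]
    refine lintegral_congr fun x => ?_
    by_cases hxA : x i ∈ A <;> simp [Set.indicator_apply, hxA]
  have hi0 : (0 : ℕ) < N := lt_of_lt_of_le two_pos hN
  haveI hγprob : IsProbabilityMeasure γ := by
    constructor
    have h := hγA ⟨0, hi0⟩ Set.univ MeasurableSet.univ
    simpa using h
  have hγmap : ∀ i, γ.map (fun x => x i) = μ i := fun i => by
    ext A hA
    rw [Measure.map_apply (measurable_pi_apply i) hA, hγA i A hA]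
  have hAC : γ ≪ m := by
    rw [hγ2]; exact withDensity_absolutelyContinuous m _
  -- generic integrability facts
  have hIntL : ∀ (ρ : Measure (Fin N → EuclideanSpace ℝ (Fin d))),
      IsProbabilityMeasure ρ → Integrable L ρ := by
    intro ρ hρ
    haveI := hρ
    refine Integrable.mono' (integrable_const B) hLmeas.aestronglyMeasurable ?_
    exact Filter.Eventually.of_forall fun x => by rw [Real.norm_eq_abs]; exact hLbd x
  have hIntc : ∀ (ρ : Measure (Fin N → EuclideanSpace ℝ (Fin d))),
      IsProbabilityMeasure ρ → ρ ≪ m → Integrable c ρ := by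
    intro ρ hρ hρm
    haveI := hρ
    have hc'int : Integrable c' ρ :=
      Integrable.mono' (integrable_const Cc) hc'meas.aestronglyMeasurable
        (Filter.Eventually.of_forall fun x => by rw [Real.norm_eq_abs]; exact hc'bd x)
    refine hc'int.congr ?_
    filter_upwards [hρm.ae_le hSae] with x hx
    exact hc'eq x hx
  -- value identity
  have hF : ∀ (ρ : Measure (Fin N → EuclideanSpace ℝ (Fin d))),
      IsProbabilityMeasure ρ → ρ ≪ m → (∀ i, ρ.map (fun x => x i) = μ i) →
      ∫ x, c x ∂ρ + ∫ x, L x ∂ρ = ∑ i, ∫ xi, φ i xi ∂(μ i) := by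
    intro ρ hρ hρm hρmap
    haveI := hρ
    have h1 : ∫ x, c x ∂ρ + ∫ x, L x ∂ρ = ∫ x, (c x + L x) ∂ρ :=
      (integral_add (hIntc ρ hρ hρm) (hIntL ρ hρ)).symm
    have h2 : (fun x => c x + L x) =ᵐ[ρ] (fun x => ∑ i, ψ i (x i)) := by
      filter_upwards [hρm.ae_le hSae] with x hx
      rw [hLdef]
      simp only
      rw [hc'eq x hx]
      ring
    have h4 : ∫ x, (∑ i, ψ i (x i)) ∂ρ = ∑ i, ∫ x, ψ i (x i) ∂ρ := by
      refine integral_finset_sum _ fun i _ => ?_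
      refine Integrable.mono' (integrable_const (Cφ i))
        ((hψmeas i).comp (measurable_pi_apply i)).aestronglyMeasurable ?_
      exact Filter.Eventually.of_forall fun x => by
        rw [Real.norm_eq_abs]; exact hψbd i (x i)
    have h5 : ∀ i, ∫ x, ψ i (x i) ∂ρ = ∫ xi, φ i xi ∂(μ i) := by
      intro i
      have hmap' : ∫ x, ψ i (x i) ∂ρ = ∫ xi, ψ i xi ∂(ρ.map (fun x => x i)) :=
        (integral_map (measurable_pi_apply i).aemeasurable
          (by rw [hρmap i]; exact (hψmeas i).aestronglyMeasurable)).symm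
      rw [hmap', hρmap i]
      refine integral_congr_ae ?_
      filter_upwards [hXae i] with xi hxi
      exact hψeq i xi hxi
    rw [h1, integral_congr_ae h2, h4]
    exact Finset.sum_congr rfl fun i _ => h5 i
  -- llr of γ
  have hrn : γ.rnDeriv m =ᵐ[m] fun x => ENNReal.ofReal (f' x) := by
    rw [hγ2]
    exact Measure.rnDeriv_withDensity m hf'meas.ennreal_ofReal
  have hllrγ : llr γ m =ᵐ[m] L := by
    filter_upwards [hrn] with x hx
    simp only [llr]
    rw [hx, ENNReal.toReal_ofReal (le_of_lt (hf'pos x)), hf'def]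
    exact Real.log_exp _
  have hllrγγ : llr γ m =ᵐ[γ] L := hAC.ae_le hllrγ
  have hIntllr : Integrable (llr γ m) γ := (hIntL γ hγprob).congr hllrγγ.symm
  have hVW : ∫ x, c x ∂γ + ∫ x, llr γ m x ∂γ = ∑ i, ∫ xi, φ i xi ∂(μ i) := by
    rw [integral_congr_ae hllrγγ]
    exact hF γ hγprob hAC hγmap
  -- optimality
  have hopt : ∀ γ' : Measure (Fin N → EuclideanSpace ℝ (Fin d)),
      IsProbabilityMeasure γ' → (∀ i, γ'.map (fun x => x i) = μ i) →
      γ' ≪ m → Integrable (llr γ' m) γ' →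
      ∑ i, ∫ xi, φ i xi ∂(μ i) ≤ ∫ x, c x ∂γ' + ∫ x, llr γ' m x ∂γ' := by
    intro γ' hp' hmap' hac' hint'
    haveI := hp'
    have hmγ : m ≪ γ := by
      rw [hγ2]
      refine withDensity_absolutelyContinuous' hf'meas.ennreal_ofReal.aemeasurable ?_
      exact Filter.Eventually.of_forall fun x => by
        simp [ENNReal.ofReal_eq_zero, not_le, hf'pos x]
    have hγ'γ : γ' ≪ γ := hac'.trans hmγ
    haveI : SigmaFinite γ := inferInstance
    haveI : SigmaFinite γ' := inferInstance
    haveI : Measure.HaveLebesgueDecomposition γ' γ := inferInstance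
    have hchain : llr γ' m =ᵐ[γ'] fun x => llr γ' γ x + L x := by
      have hmul := Measure.rnDeriv_mul_rnDeriv (κ := m) hγ'γ
      filter_upwards [hac'.ae_le hmul, hac'.ae_le hrn, Measure.rnDeriv_pos hγ'γ,
        hγ'γ.ae_le (Measure.rnDeriv_lt_top γ' γ)] with x h1 h2 h3 h4
      simp only [llr]
      rw [← h1, Pi.mul_apply, h2, ENNReal.toReal_mul,
        ENNReal.toReal_ofReal (le_of_lt (hf'pos x)),
        Real.log_mul (ENNReal.toReal_ne_zero.mpr ⟨h3.ne', h4.ne⟩) (ne_of_gt (hf'pos x))]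
      simp only [hf'def, Real.log_exp]
    have hIntL' : Integrable L γ' := hIntL γ' hp'
    have hintllr2 : Integrable (llr γ' γ) γ' := by
      refine (hint'.sub hIntL').congr ?_
      filter_upwards [hchain] with x hx
      rw [Pi.sub_apply, hx]
      ring
    have hgibbs := gibbs_llr_nonneg hγ'γ hintllr2
    have h6 : ∫ x, llr γ' m x ∂γ' = ∫ x, llr γ' γ x ∂γ' + ∫ x, L x ∂γ' := by
      rw [integral_congr_ae hchain, integral_add hintllr2 hIntL']
    have h7 := hF γ' hp' hac' hmap'
    linarith
  -- EOT value
  have hEOTdef : EOT c μ = sInf {r : ℝ |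
      ∃ γ'' : Measure (Fin N → EuclideanSpace ℝ (Fin d)),
      IsProbabilityMeasure γ'' ∧ (∀ i, γ''.map (fun x => x i) = μ i) ∧ γ'' ≪ m ∧
      Integrable (llr γ'' m) γ'' ∧
      r = ∫ x, c x ∂γ'' + ∫ x, llr γ'' m x ∂γ''} := by rw [hm]; rfl
  have hmemT : (∑ i, ∫ xi, φ i xi ∂(μ i)) ∈ {r : ℝ |
      ∃ γ'' : Measure (Fin N → EuclideanSpace ℝ (Fin d)),
      IsProbabilityMeasure γ'' ∧ (∀ i, γ''.map (fun x => x i) = μ i) ∧ γ'' ≪ m ∧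
      Integrable (llr γ'' m) γ'' ∧
      r = ∫ x, c x ∂γ'' + ∫ x, llr γ'' m x ∂γ''} :=
    ⟨γ, hγprob, hγmap, hAC, hIntllr, hVW.symm⟩
  have hlb : ∀ r ∈ {r : ℝ |
      ∃ γ'' : Measure (Fin N → EuclideanSpace ℝ (Fin d)),
      IsProbabilityMeasure γ'' ∧ (∀ i, γ''.map (fun x => x i) = μ i) ∧ γ'' ≪ m ∧
      Integrable (llr γ'' m) γ'' ∧
      r = ∫ x, c x ∂γ'' + ∫ x, llr γ'' m x ∂γ''},
      (∑ i, ∫ xi, φ i xi ∂(μ i)) ≤ r := by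
    rintro r ⟨γ'', h1, h2, h3, h4, rfl⟩
    exact hopt γ'' h1 h2 h3 h4
  have hEOT : EOT c μ = ∑ i, ∫ xi, φ i xi ∂(μ i) := by
    rw [hEOTdef]
    exact le_antisymm (csInf_le ⟨_, hlb⟩ hmemT) (le_csInf ⟨_, hmemT⟩ hlb)
  refine ⟨hAC, hIntllr, ?_, ?_, hEOT⟩
  · intro γ' h1 h2 h3 h4
    rw [hVW]
    exact hopt γ' h1 h2 h3 h4
  · rw [hEOT, hVW]
end
end
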